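/- arXiv:0804.2596 — 7 statements merged into one kernel-verified Lean document; each statement's English description precedes it below -/
import Mathlib

section
/- Let q ≥ 1 and let w₁,…,w_q be non-negative integers with Σ_{i=1}^q w_i ≥ 1. For every C^∞ function f : ℝ^q → ℝ there exists a C^∞ function g : ℝ^q → ℝ such that Σ_{i=1}^q w_i·x_i·(∂g/∂x_i)(x) + (Σ_{i=1}^q w_i)·g(x) = f(x) for all x ∈ ℝ^q. Equivalently, f = div(g·E_w), where E_w(x) = (w₁x₁,…,w_qx_q) is the generalized Euler vector field and div Y = Σ_{i=1}^q ∂Y_i/∂x_i; i.e. every q-form f·dx₁∧…∧dx_q equals d(g·E_w ⌟ dx₁∧…∧dx_q). -/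
open intervalIntegral MeasureTheory Metric Set

theorem contDiff_parametric_integral (n : ℕ)
    {X : Type} [NormedAddCommGroup X] [NormedSpace ℝ X] [ProperSpace X]
    {E : Type} [NormedAddCommGroup E] [NormedSpace ℝ E] [CompleteSpace E]
    (F : ℝ × X → E) (hF : ContDiff ℝ (⊤ : ℕ∞) F) :
    ContDiff ℝ (n : ℕ∞) (fun x => ∫ t in (0:ℝ)..1, F (t, x)) := by
  induction n generalizing E with
  | zero =>
    refine (contDiff_zero (𝕜 := ℝ)).mpr ?_
    exact continuous_parametric_intervalIntegral_of_continuous'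
      (by exact hF.continuous.comp (continuous_swap)) 0 1
  | succ n ih =>
    set F' : ℝ × X → (X →L[ℝ] E) :=
      fun p => (fderiv ℝ F p).comp (ContinuousLinearMap.inr ℝ ℝ X) with hF'def
    have hF' : ContDiff ℝ (⊤ : ℕ∞) F' :=
      (hF.fderiv_right (by simp)).clm_comp contDiff_const
    have key : ∀ x₀ : X, HasFDerivAt (fun x => ∫ t in (0:ℝ)..1, F (t, x))
        (∫ t in (0:ℝ)..1, F' (t, x₀)) x₀ := by
      intro x₀
      obtain ⟨C, hC⟩ := (isCompact_Icc.prod (isCompact_closedBall x₀ 1)).exists_bound_of_continuousOn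
        hF'.continuous.continuousOn
      haveI : SecondCountableTopologyEither ℝ (X →L[ℝ] E) :=
        secondCountableTopologyEither_of_left ℝ _
      apply intervalIntegral.hasFDerivAt_integral_of_dominated_of_fderiv_le
        (F := fun x t => F (t, x)) (F' := fun x t => F' (t, x)) (bound := fun _ => C)
        (ball_mem_nhds x₀ one_pos)
      · filter_upwards with x
        exact (hF.continuous.comp (Continuous.prodMk_left x)).aestronglyMeasurable
      · exact (hF.continuous.comp (Continuous.prodMk_left x₀)).intervalIntegrable 0 1
      · exact (hF'.continuous.comp (Continuous.prodMk_left x₀)).aestronglyMeasurable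
      · filter_upwards with t ht x hx
        exact hC (t, x) ⟨Set.mem_Icc.2 ⟨le_of_lt (Set.mem_Ioc.1 (by simpa using ht)).1,
          (Set.mem_Ioc.1 (by simpa using ht)).2⟩, ball_subset_closedBall hx⟩
      · exact intervalIntegrable_const
      · filter_upwards with t ht x hx
        have h1 : HasFDerivAt (fun y : X => (t, y)) (ContinuousLinearMap.inr ℝ ℝ X) x :=
          (hasFDerivAt_prodMk_right t x)
        exact ((hF.differentiable (by simp) (t, x)).hasFDerivAt).comp x h1
    have hdiff : Differentiable ℝ (fun x => ∫ t in (0:ℝ)..1, F (t, x)) :=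
      fun x => (key x).differentiableAt
    have hfd : (fderiv ℝ (fun x => ∫ t in (0:ℝ)..1, F (t, x)))
        = fun x₀ => ∫ t in (0:ℝ)..1, F' (t, x₀) := funext fun x₀ => (key x₀).fderiv
    have hcast : (((n+1:ℕ):ℕ∞) : WithTop ℕ∞) = (((n:ℕ∞)) : WithTop ℕ∞) + 1 := by
      push_cast; rfl
    rw [hcast, contDiff_succ_iff_fderiv]
    refine ⟨hdiff, by simp, ?_⟩
    rw [hfd]
    exact ih F' hF'



open Finset in
/-- Analytic core of Proposition 2.10 (prEuler): for non-negative integer weights `w` with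
positive total weight, the equation `div (g • E_w) = f`, i.e.
`∑ i, wᵢ xᵢ ∂g/∂xᵢ + (∑ i, wᵢ) g = f`, has a smooth solution `g` for every smooth `f`. -/
theorem euler_divergence_solvable
    (q : ℕ) (hq : 1 ≤ q) (w : Fin q → ℕ) (hw : 1 ≤ ∑ i, w i)
    (f : (Fin q → ℝ) → ℝ) (hf : ContDiff ℝ (⊤ : ℕ∞) f) :
    ∃ g : (Fin q → ℝ) → ℝ, ContDiff ℝ (⊤ : ℕ∞) g ∧
      ∀ x : Fin q → ℝ,
        (∑ i, (w i : ℝ) * x i * fderiv ℝ g x (Pi.single i 1)) +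
          (∑ i, (w i : ℝ)) * g x = f x := by
  set W : ℕ := ∑ i, w i with hW
  set F : ℝ × (Fin q → ℝ) → ℝ := fun p => p.1 ^ (W - 1) * f (fun i => p.1 ^ (w i) * p.2 i)
    with hFdef
  have hδ : ContDiff ℝ (⊤ : ℕ∞) (fun p : ℝ × (Fin q → ℝ) => fun i => p.1 ^ (w i) * p.2 i) :=
    contDiff_pi.2 fun i => (contDiff_fst.pow _).mul (contDiff_pi.1 contDiff_snd i)
  have hFsm : ContDiff ℝ (⊤ : ℕ∞) F := (contDiff_fst.pow _).mul (hf.comp hδ)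
  set g : (Fin q → ℝ) → ℝ := fun x => ∫ t in (0:ℝ)..1, F (t, x) with hgdef
  have hgsm : ContDiff ℝ (⊤ : ℕ∞) g := by
    rw [contDiff_infty]
    exact fun n => contDiff_parametric_integral n F hFsm
  refine ⟨g, hgsm, fun x => ?_⟩
  -- setup
  set ψ : ℝ → ℝ := fun u => u ^ (W - 1) * f (fun i => u ^ (w i) * x i) with hψdef
  have hψc : Continuous ψ :=
    (continuous_id.pow _).mul (hf.continuous.comp (by fun_prop))
  set Φ : ℝ → ℝ := fun s => ∫ u in (0:ℝ)..s, ψ u with hΦdef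
  -- Claim A : for s > 0, s^W * g (δ s x) = Φ s
  have claimA : ∀ s : ℝ, s ≠ 0 → s ^ W * g (fun i => s ^ (w i) * x i) = Φ s := by
    intro s hs
    have h1 : ∀ t : ℝ, ψ (s * t) = s ^ (W - 1) * F (t, fun i => s ^ (w i) * x i) := by
      intro t
      show (s*t) ^ (W-1) * f (fun i => (s*t) ^ (w i) * x i)
          = s ^ (W-1) * ((t:ℝ) ^ (W-1) * f (fun i => t ^ (w i) * (s ^ (w i) * x i)))
      rw [show (fun i => (s*t) ^ (w i) * x i) = (fun i => t ^ (w i) * (s ^ (w i) * x i))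
        from funext fun i => by rw [mul_pow]; ring]
      rw [mul_pow]; ring
    have h2 : ∫ t in (0:ℝ)..1, ψ (s * t) = s⁻¹ • Φ s := by
      rw [intervalIntegral.integral_comp_mul_left ψ hs]
      simp [hΦdef]
    have h3 : ∫ t in (0:ℝ)..1, ψ (s * t)
        = s ^ (W - 1) * g (fun i => s ^ (w i) * x i) := by
      simp only [h1]
      rw [intervalIntegral.integral_const_mul]
    have : s⁻¹ • Φ s = s ^ (W - 1) * g (fun i => s ^ (w i) * x i) := by rw [← h2, h3]
    have hWpow : s * s ^ (W - 1) = s ^ W := by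
      conv_rhs => rw [show W = (W - 1) + 1 from (Nat.succ_pred_eq_of_pos hw).symm]
      rw [pow_succ]; ring
    field_simp at this
    rw [← hWpow, mul_assoc, ← this, smul_eq_mul]; field_simp
  -- Claim B : HasDerivAt Φ (ψ 1) 1
  have claimB : HasDerivAt Φ (ψ 1) 1 := (hψc.integral_hasStrictDerivAt 0 1).hasDerivAt
  -- Claim C : chain rule for h s = s ^ W * g (δ s x)
  have hδ1 : (fun i => (1:ℝ) ^ (w i) * x i) = x := by funext i; simp
  have hgd : HasFDerivAt g (fderiv ℝ g x) x :=
    (hgsm.differentiable (by simp) x).hasFDerivAt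
  have hcomp : HasDerivAt (fun s : ℝ => g (fun i => s ^ (w i) * x i))
      (fderiv ℝ g x (fun i => (w i : ℝ) * x i)) 1 := by
    have hin : HasDerivAt (fun s : ℝ => (fun i => s ^ (w i) * x i))
        (fun i => (w i : ℝ) * x i) 1 := by
      rw [hasDerivAt_pi]
      intro i
      have := (hasDerivAt_pow (w i) (1:ℝ)).mul_const (x i)
      simpa using this
    have hgd1 : HasFDerivAt g (fderiv ℝ g x) (fun i => (1:ℝ) ^ (w i) * x i) := by rw [hδ1]; exact hgd
    have := hgd1.comp_hasDerivAt 1 hin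
    exact this
  have claimC : HasDerivAt (fun s : ℝ => s ^ W * g (fun i => s ^ (w i) * x i))
      ((W : ℝ) * g x + fderiv ℝ g x (fun i => (w i : ℝ) * x i)) 1 := by
    have := (hasDerivAt_pow W (1:ℝ)).mul hcomp
    simp only [one_pow, one_mul, mul_one] at this
    exact this
  -- transfer derivative
  have heq : (fun s : ℝ => s ^ W * g (fun i => s ^ (w i) * x i)) =ᶠ[nhds 1] Φ := by
    filter_upwards [Ioi_mem_nhds (by norm_num : (0:ℝ) < 1)] with s hs
    exact claimA s (ne_of_gt hs)
  have claimB' : HasDerivAt (fun s : ℝ => s ^ W * g (fun i => s ^ (w i) * x i)) (ψ 1) 1 :=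
    claimB.congr_of_eventuallyEq heq
  have hkey : (W : ℝ) * g x + fderiv ℝ g x (fun i => (w i : ℝ) * x i) = ψ 1 :=
    claimC.unique claimB'
  have hψ1 : ψ 1 = f x := by simp only [hψdef, one_pow, hδ1, one_mul]
  -- expand the directional derivative
  have hvec : (fun i => (w i : ℝ) * x i) = ∑ i, ((w i : ℝ) * x i) • (Pi.single i (1:ℝ) : Fin q → ℝ) := by
    funext j
    simp [Finset.sum_apply, Pi.single_apply, mul_comm]
  have hlin : fderiv ℝ g x (fun i => (w i : ℝ) * x i)
      = ∑ i, (w i : ℝ) * x i * fderiv ℝ g x (Pi.single i 1) := by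
    rw [hvec, map_sum]
    congr 1; funext i
    rw [ContinuousLinearMap.map_smul]
    simp [smul_eq_mul, mul_assoc]
  have hWsum : (∑ i, (w i : ℝ)) = (W : ℝ) := by rw [hW]; push_cast; ring
  rw [hWsum, ← hlin]
  rw [← hψ1, ← hkey]
  ring
end

section
/- Let q ≥ 1 and let w₁,…,w_q be non-negative integers with Σ_{i=1}^q w_i ≥ 1. Set α := (Σ_{i=1}^q w_i) − 1 ∈ ℕ and, for s ∈ [0,1], F_s(x) := (s^{w₁}x₁,…,s^{w_q}x_q). Then for every C^∞ function f : ℝ^q → ℝ the function g(x) := ∫₀¹ s^α · f(F_s(x)) ds is C^∞ on ℝ^q and satisfies Σ_{i=1}^q w_i·x_i·(∂g/∂x_i)(x) + (Σ_{i=1}^q w_i)·g(x) = f(x) for all x ∈ ℝ^q. -/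
set_option synthInstance.maxHeartbeats 1000000
set_option maxHeartbeats 1000000

open MeasureTheory intervalIntegral Metric

section aux
variable {H : Type} [NormedAddCommGroup H] [NormedSpace ℝ H] [ProperSpace H]
  {F : Type} [NormedAddCommGroup F] [NormedSpace ℝ F] [CompleteSpace F]

set_option linter.unusedSectionVars false in
lemma key_hasFDerivAt (Φ : H × ℝ → F) (hΦ : ContDiff ℝ (⊤ : ℕ∞) Φ) (x₀ : H) :
    HasFDerivAt (fun x => ∫ s in (0:ℝ)..1, Φ (x, s))
      (∫ s in (0:ℝ)..1, (fderiv ℝ Φ (x₀, s)).comp (ContinuousLinearMap.inl ℝ H ℝ)) x₀ := by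
  set F' : H → ℝ → (H →L[ℝ] F) := fun x t => (fderiv ℝ Φ (x, t)).comp (ContinuousLinearMap.inl ℝ H ℝ) with hF'
  have hc : Continuous fun p : H × ℝ => F' p.1 p.2 := by
    have h1 : Continuous (fderiv ℝ Φ) := hΦ.continuous_fderiv (by simp)
    exact (((ContinuousLinearMap.compL ℝ H (H × ℝ) F).flip
      (ContinuousLinearMap.inl ℝ H ℝ)).continuous.comp h1)
  obtain ⟨C, hC⟩ : ∃ C, ∀ p ∈ (closedBall x₀ 1) ×ˢ (Set.uIcc (0:ℝ) 1), ‖F' p.1 p.2‖ ≤ C :=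
    ((isCompact_closedBall x₀ 1).prod isCompact_uIcc).exists_bound_of_continuousOn
      hc.continuousOn
  exact intervalIntegral.hasFDerivAt_integral_of_dominated_of_fderiv_le (F := fun x t => Φ (x, t))
    (bound := fun _ => C) (ball_mem_nhds x₀ one_pos)
    (Filter.Eventually.of_forall fun x =>
      (hΦ.continuous.comp (Continuous.prodMk_right x)).aestronglyMeasurable)
    ((hΦ.continuous.comp (Continuous.prodMk_right x₀)).intervalIntegrable 0 1)
    ((hc.comp (Continuous.prodMk_right x₀)).aestronglyMeasurable)
    (Filter.Eventually.of_forall fun t ht x hx =>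
      hC (x, t) ⟨ball_subset_closedBall hx, Set.uIoc_subset_uIcc ht⟩)
    intervalIntegrable_const
    (Filter.Eventually.of_forall fun t _ x _ =>
      ((hΦ.differentiable (by simp) (x, t)).hasFDerivAt.comp x
        (hasFDerivAt_prodMk_left x t)))

end aux

lemma key_contDiff (q : ℕ) (n : ℕ) :
    ∀ {F : Type} [NormedAddCommGroup F] [NormedSpace ℝ F] [CompleteSpace F]
      (Φ : (Fin q → ℝ) × ℝ → F), ContDiff ℝ (⊤ : ℕ∞) Φ →
      ContDiff ℝ n (fun x => ∫ s in (0:ℝ)..1, Φ (x, s)) := by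
  induction n with
  | zero =>
    intro F _ _ _ Φ hΦ
    exact contDiff_zero.2 <| by
      exact continuous_parametric_intervalIntegral_of_continuous'
        (f := fun x s => Φ (x, s)) (μ := volume) hΦ.continuous 0 1
  | succ n ih =>
    intro F _ _ _ Φ hΦ
    have hdiff : ∀ x : Fin q → ℝ, HasFDerivAt (fun x => ∫ s in (0:ℝ)..1, Φ (x, s))
        (∫ s in (0:ℝ)..1, (fderiv ℝ Φ (x, s)).comp
          (ContinuousLinearMap.inl ℝ (Fin q → ℝ) ℝ)) x :=
      fun x => key_hasFDerivAt Φ hΦ x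
    have hcast : ((n + 1 : ℕ) : WithTop ℕ∞) = (n : WithTop ℕ∞) + 1 := by norm_cast
    rw [hcast, contDiff_succ_iff_fderiv]
    refine ⟨fun x => (hdiff x).differentiableAt, by simp, ?_⟩
    have heq : (fderiv ℝ (fun x => ∫ s in (0:ℝ)..1, Φ (x, s))) = fun x =>
        ∫ s in (0:ℝ)..1, ((ContinuousLinearMap.compL ℝ (Fin q → ℝ) ((Fin q → ℝ) × ℝ) F).flip
          (ContinuousLinearMap.inl ℝ (Fin q → ℝ) ℝ)) (fderiv ℝ Φ (x, s)) := by
      funext x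
      exact (hdiff x).fderiv
    rw [heq]
    exact ih _ ((((ContinuousLinearMap.compL ℝ (Fin q → ℝ) ((Fin q → ℝ) × ℝ) F).flip
      (ContinuousLinearMap.inl ℝ (Fin q → ℝ) ℝ)).contDiff).comp
      (hΦ.fderiv_right (mod_cast le_top)))

open Finset intervalIntegral in
/-- The explicit integral solution from the proof of Proposition 2.10 (prEuler):
`g x = ∫₀¹ s^α f(F_s x) ds`, with `α = (∑ wᵢ) - 1` and `F_s` the weighted scaling,
is smooth and solves `∑ i, wᵢ xᵢ ∂g/∂xᵢ + (∑ i, wᵢ) g = f`. -/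
theorem euler_divergence_integral_solution
    (q : ℕ) (hq : 1 ≤ q) (w : Fin q → ℕ) (hw : 1 ≤ ∑ i, w i)
    (f : (Fin q → ℝ) → ℝ) (hf : ContDiff ℝ (⊤ : ℕ∞) f)
    (g : (Fin q → ℝ) → ℝ)
    (hg : g = fun x : Fin q → ℝ =>
      ∫ s in (0:ℝ)..1, s ^ ((∑ i, w i) - 1) * f (fun i => s ^ (w i) * x i)) :
    ContDiff ℝ (⊤ : ℕ∞) g ∧
      ∀ x : Fin q → ℝ,
        (∑ i, (w i : ℝ) * x i * fderiv ℝ g x (Pi.single i 1)) +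
          (∑ i, (w i : ℝ)) * g x = f x := by
  classical
  set W : ℕ := ∑ i, w i with hW
  set α : ℕ := W - 1 with hα
  set Φ : ((Fin q → ℝ) × ℝ) → ℝ := fun p => p.2 ^ α * f (fun i => p.2 ^ w i * p.1 i) with hΦdef
  have hfd : Differentiable ℝ f := hf.differentiable (by simp)
  have hfc : Continuous (fderiv ℝ f) := hf.continuous_fderiv (by simp)
  have hΦ : ContDiff ℝ (⊤ : ℕ∞) Φ := by
    apply ContDiff.mul (contDiff_snd.pow α)
    exact hf.comp (contDiff_pi.2 fun i =>
      (contDiff_snd.pow (w i)).mul ((contDiff_apply ℝ ℝ i).comp contDiff_fst))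
  have hgeq : g = fun x => ∫ s in (0:ℝ)..1, Φ (x, s) := hg
  have hsmooth : ContDiff ℝ (⊤ : ℕ∞) g := by
    rw [hgeq]
    exact contDiff_infty.2 fun n => key_contDiff q n Φ hΦ
  refine ⟨hsmooth, fun x => ?_⟩
  set c : ℝ → (Fin q → ℝ) := fun s i => s ^ w i * x i with hcdef
  set d : Fin q → ℝ → ℝ := fun i s => fderiv ℝ f (c s) (Pi.single i 1) with hddef
  have hcc : Continuous c := continuous_pi fun i => (continuous_pow (w i)).mul continuous_const
  have hdc : ∀ i, Continuous (d i) := fun i => (hfc.comp hcc).clm_apply continuous_const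
  -- the partial derivative of Φ in x
  set L : ℝ → (Fin q → ℝ) →L[ℝ] (Fin q → ℝ) := fun s =>
    ContinuousLinearMap.pi fun j => (s ^ w j) • ContinuousLinearMap.proj j with hLdef
  have hpart : ∀ s : ℝ, HasFDerivAt (fun y => Φ (y, s))
      ((s ^ α) • ((fderiv ℝ f (c s)).comp (L s))) x := by
    intro s
    have h1 : HasFDerivAt (fun y : Fin q → ℝ => (fun j => s ^ w j * y j)) (L s) x :=
      (L s).hasFDerivAt
    have h2 : HasFDerivAt (fun y : Fin q → ℝ => f (fun j => s ^ w j * y j))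
        ((fderiv ℝ f (c s)).comp (L s)) x := (hfd (c s)).hasFDerivAt.comp x h1
    exact h2.const_mul (s ^ α)
  have hfull : ∀ s : ℝ, HasFDerivAt (fun y => Φ (y, s))
      ((fderiv ℝ Φ (x, s)).comp (ContinuousLinearMap.inl ℝ (Fin q → ℝ) ℝ)) x :=
    fun s => by
      exact ((hΦ.differentiable (by simp)) (x, s)).hasFDerivAt.comp x
        (hasFDerivAt_prodMk_left (𝕜 := ℝ) x s)
  have huniq : ∀ s : ℝ, (fderiv ℝ Φ (x, s)).comp (ContinuousLinearMap.inl ℝ (Fin q → ℝ) ℝ)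
      = (s ^ α) • ((fderiv ℝ f (c s)).comp (L s)) :=
    fun s => (hfull s).unique (hpart s)
  have hgderiv : fderiv ℝ g x = ∫ s in (0:ℝ)..1,
      (fderiv ℝ Φ (x, s)).comp (ContinuousLinearMap.inl ℝ (Fin q → ℝ) ℝ) := by
    rw [hgeq]; exact (key_hasFDerivAt Φ hΦ x).fderiv
  have hClmCont : Continuous fun s : ℝ =>
      (fderiv ℝ Φ (x, s)).comp (ContinuousLinearMap.inl ℝ (Fin q → ℝ) ℝ) :=
    (((ContinuousLinearMap.compL ℝ (Fin q → ℝ) ((Fin q → ℝ) × ℝ) ℝ).flip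
      (ContinuousLinearMap.inl ℝ (Fin q → ℝ) ℝ)).continuous.comp
      ((hΦ.continuous_fderiv (by simp)).comp (Continuous.prodMk_right x)))
  have happly : ∀ i, fderiv ℝ g x (Pi.single i 1)
      = ∫ s in (0:ℝ)..1, s ^ α * (s ^ w i * d i s) := by
    intro i
    rw [hgderiv, ContinuousLinearMap.intervalIntegral_apply (hClmCont.intervalIntegrable 0 1)]
    refine intervalIntegral.integral_congr fun s _ => ?_
    rw [huniq s]
    have hsingle : L s (Pi.single i 1) = (s ^ w i) • (Pi.single i 1 : Fin q → ℝ) := by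
      funext j
      by_cases h : j = i
      · subst h
        simp [hLdef, Pi.single_apply]
      · simp [hLdef, Pi.single_apply, h]
    simp only [ContinuousLinearMap.smul_apply, ContinuousLinearMap.coe_comp',
      Function.comp_apply, hsingle, _root_.map_smul, smul_eq_mul, hddef]
  -- FTC
  set c' : ℝ → (Fin q → ℝ) := fun s j => ((w j : ℝ) * s ^ (w j - 1)) * x j with hc'def
  have hc'c : Continuous c' := continuous_pi fun j =>
    ((continuous_const.mul (continuous_pow _)).mul continuous_const)
  have hcd : ∀ s : ℝ, HasDerivAt c (c' s) s := by
    intro s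
    rw [hasDerivAt_pi]
    intro j
    exact (hasDerivAt_pow (w j) s).mul_const (x j)
  have hφd : ∀ s : ℝ, HasDerivAt (fun s => s ^ W * f (c s))
      ((W : ℝ) * s ^ (W - 1) * f (c s) + s ^ W * (fderiv ℝ f (c s)) (c' s)) s := by
    intro s
    exact (hasDerivAt_pow W s).mul ((hfd (c s)).hasFDerivAt.comp_hasDerivAt s (hcd s))
  have hEcont : Continuous fun s : ℝ =>
      (W : ℝ) * s ^ (W - 1) * f (c s) + s ^ W * (fderiv ℝ f (c s)) (c' s) :=
    ((continuous_const.mul (continuous_pow _)).mul (hf.continuous.comp hcc)).add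
      ((continuous_pow _).mul ((hfc.comp hcc).clm_apply hc'c))
  have hWpos : 0 < W := hw
  have hFTC : (∫ s in (0:ℝ)..1,
      ((W : ℝ) * s ^ (W - 1) * f (c s) + s ^ W * (fderiv ℝ f (c s)) (c' s))) = f x := by
    rw [intervalIntegral.integral_eq_sub_of_hasDerivAt (fun s _ => hφd s)
      (hEcont.intervalIntegrable 0 1)]
    have h1 : c 1 = x := by funext j; simp [hcdef]
    have h0 : (0:ℝ) ^ W = 0 := zero_pow hWpos.ne'
    simp [h1, h0]
  -- assemble
  have hgx : g x = ∫ s in (0:ℝ)..1, s ^ α * f (c s) := by rw [hgeq]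
  have hsumW : (∑ i, (w i : ℝ)) = (W : ℝ) := by rw [hW, Nat.cast_sum]
  rw [hgx, hsumW]
  simp only [happly]
  have e1 : ∀ i, (w i : ℝ) * x i * ∫ s in (0:ℝ)..1, s ^ α * (s ^ w i * d i s)
      = ∫ s in (0:ℝ)..1, (w i : ℝ) * x i * (s ^ α * (s ^ w i * d i s)) :=
    fun i => (intervalIntegral.integral_const_mul _ _).symm
  have e2 : (W : ℝ) * ∫ s in (0:ℝ)..1, s ^ α * f (c s)
      = ∫ s in (0:ℝ)..1, (W : ℝ) * (s ^ α * f (c s)) :=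
    (intervalIntegral.integral_const_mul _ _).symm
  have hint1 : ∀ i ∈ Finset.univ (α := Fin q), IntervalIntegrable
      (fun s => (w i : ℝ) * x i * (s ^ α * (s ^ w i * d i s))) volume 0 1 :=
    fun i _ => ((continuous_const.mul ((continuous_pow α).mul
      ((continuous_pow (w i)).mul (hdc i))))).intervalIntegrable 0 1
  have hIntSum : IntervalIntegrable
      (fun s : ℝ => ∑ i, (w i : ℝ) * x i * (s ^ α * (s ^ w i * d i s))) volume 0 1 :=
    (continuous_finset_sum _ fun i _ => (continuous_const.mul ((continuous_pow α).mul
      ((continuous_pow (w i)).mul (hdc i))))).intervalIntegrable 0 1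
  have hInt2 : IntervalIntegrable (fun s : ℝ => (W : ℝ) * (s ^ α * f (c s))) volume 0 1 :=
    (continuous_const.mul ((continuous_pow α).mul (hf.continuous.comp hcc))).intervalIntegrable 0 1
  simp only [e1]
  rw [e2, ← intervalIntegral.integral_finset_sum hint1,
    ← intervalIntegral.integral_add hIntSum hInt2, ← hFTC]
  refine intervalIntegral.integral_congr fun s _ => ?_
  have hvec : (fderiv ℝ f (c s)) (c' s) = ∑ i, (c' s i) * d i s := by
    have hv : c' s = ∑ i, (c' s i) • (Pi.single i 1 : Fin q → ℝ) := by
      funext j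
      simp [Finset.sum_apply, Pi.single_apply, smul_eq_mul, mul_ite]
    conv_lhs => rw [hv]
    rw [map_sum]
    simp only [_root_.map_smul, smul_eq_mul, hddef]
  rw [hvec, Finset.mul_sum]
  have hterm : ∀ i, (w i : ℝ) * x i * (s ^ α * (s ^ w i * d i s))
      = s ^ W * ((c' s i) * d i s) := by
    intro i
    rcases Nat.eq_zero_or_pos (w i) with h | h
    · simp [hc'def, h]
    · have hp : s ^ α * s ^ w i = s ^ W * s ^ (w i - 1) := by
        rw [← pow_add, ← pow_add]
        congr 1
        omega
      simp only [hc'def]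
      linear_combination ((w i : ℝ) * x i * d i s) * hp
  rw [Finset.sum_congr rfl fun i _ => hterm i]
  have : (W : ℝ) * (s ^ α * f (c s)) = (W : ℝ) * s ^ (W - 1) * f (c s) := by
    rw [hα]; ring
  rw [this]
  ring
end

section
/- Let q ≥ 1, let w₁,…,w_q be non-negative integers, and let c be a real number with c > 0. For every C^∞ function f : ℝ^q → ℝ there exists a C^∞ function g : ℝ^q → ℝ such that Σ_{i=1}^q w_i·x_i·(∂g/∂x_i)(x) + c·g(x) = f(x) for all x ∈ ℝ^q. -/
open MeasureTheory Set Metric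

namespace WEulerAux

variable {q : ℕ} (w : Fin q → ℕ)

/-- weighted scaling map -/
def sc (s : ℝ) (x : Fin q → ℝ) : Fin q → ℝ := fun i => s ^ w i * x i

/-- the CLM sending `x` to `Pi.single i (x i)` -/
noncomputable def eL (i : Fin q) : (Fin q → ℝ) →L[ℝ] (Fin q → ℝ) :=
  ContinuousLinearMap.pi (fun j => if j = i then ContinuousLinearMap.proj i else 0)

noncomputable def scL (s : ℝ) : (Fin q → ℝ) →L[ℝ] (Fin q → ℝ) :=
  ∑ i, s ^ w i • eL i

lemma scL_apply (s : ℝ) (x : Fin q → ℝ) : scL w s x = sc w s x := by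
  ext j
  simp only [scL, sc, eL, ContinuousLinearMap.coe_sum', Finset.sum_apply,
    ContinuousLinearMap.coe_smul', Pi.smul_apply, ContinuousLinearMap.pi_apply, smul_eq_mul]
  have : ∀ i : Fin q, s ^ w i * (if j = i then (ContinuousLinearMap.proj i : (Fin q → ℝ) →L[ℝ] ℝ) else 0) x
      = if j = i then s ^ w i * x i else 0 := by
    intro i; split <;> simp_all
  rw [Finset.sum_congr rfl (fun i _ => this i), Finset.sum_ite_eq]
  simp

lemma continuous_scL : Continuous fun s : ℝ => scL w s :=
  continuous_finset_sum _ fun i _ => (continuous_pow _).smul continuous_const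

lemma continuous_sc (x : Fin q → ℝ) : Continuous fun s : ℝ => sc w s x :=
  continuous_pi fun i => (continuous_pow _).mul continuous_const

lemma norm_sc_le {s : ℝ} (hs0 : 0 ≤ s) (hs1 : s ≤ 1) (x : Fin q → ℝ) :
    ‖sc w s x‖ ≤ ‖x‖ := by
  refine (pi_norm_le_iff_of_nonneg (norm_nonneg x)).2 fun i => ?_
  have h1 : |s ^ w i| ≤ 1 := by
    rw [abs_of_nonneg (pow_nonneg hs0 _)]
    exact pow_le_one₀ hs0 hs1
  calc ‖s ^ w i * x i‖ = |s ^ w i| * ‖x i‖ := by simp [Real.norm_eq_abs, abs_mul]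
    _ ≤ 1 * ‖x‖ := mul_le_mul h1 (norm_le_pi_norm x i) (norm_nonneg _) zero_le_one
    _ = ‖x‖ := one_mul _

lemma norm_scL_le {s : ℝ} (hs0 : 0 ≤ s) (hs1 : s ≤ 1) : ‖scL (q := q) w s‖ ≤ 1 :=
  ContinuousLinearMap.opNorm_le_bound _ zero_le_one fun x => by
    rw [scL_apply, one_mul]; exact norm_sc_le w hs0 hs1 x

/-- the averaged function -/
noncomputable def gI (c : ℝ) (F : (Fin q → ℝ) → ℝ) (x : Fin q → ℝ) : ℝ :=
  ∫ s in Ioc (0:ℝ) 1, s ^ (c - 1) * F (sc w s x)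

lemma intervalIntegrable_aux (c : ℝ) (hc : 0 < c) {F : (Fin q → ℝ) → ℝ}
    (hF : Continuous F) (x : Fin q → ℝ) :
    IntervalIntegrable (fun s => s ^ (c - 1) * F (sc w s x)) volume 0 1 :=
  (intervalIntegral.intervalIntegrable_rpow' (by linarith)).mul_continuousOn
    (Continuous.continuousOn (hF.comp (continuous_sc w x)))

lemma integrableOn_aux (c : ℝ) (hc : 0 < c) {F : (Fin q → ℝ) → ℝ}
    (hF : Continuous F) (x : Fin q → ℝ) :
    IntegrableOn (fun s => s ^ (c - 1) * F (sc w s x)) (Ioc (0:ℝ) 1) := by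
  rw [← intervalIntegrable_iff_integrableOn_Ioc_of_le zero_le_one]
  exact intervalIntegrable_aux w c hc hF x

lemma contDiff_Fi {F : (Fin q → ℝ) → ℝ} (hF : ContDiff ℝ (⊤ : ℕ∞) F) (i : Fin q) :
    ContDiff ℝ (⊤ : ℕ∞) (fun y => fderiv ℝ F y (Pi.single i 1)) :=
  (hF.fderiv_right (m := (⊤ : ℕ∞)) (by simp)).clm_apply contDiff_const

lemma hasFDerivAt_gI (c : ℝ) (hc : 0 < c) {F : (Fin q → ℝ) → ℝ}
    (hF : ContDiff ℝ (⊤ : ℕ∞) F) (x₀ : Fin q → ℝ) :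
    HasFDerivAt (gI w c F)
      (∑ i, gI w (c + w i) (fun y => fderiv ℝ F y (Pi.single i 1)) x₀ •
        (ContinuousLinearMap.proj i : (Fin q → ℝ) →L[ℝ] ℝ)) x₀ := by
  have hFc : Continuous F := hF.continuous
  set μ := volume.restrict (Ioc (0:ℝ) 1) with hμ
  set Φ : (Fin q → ℝ) → ℝ → ((Fin q → ℝ) →L[ℝ] ℝ) :=
    fun x s => s ^ (c-1) • ((fderiv ℝ F (sc w s x)).comp (scL w s)) with hΦ
  obtain ⟨C, hC⟩ : ∃ C, ∀ y ∈ closedBall (0 : Fin q → ℝ) (‖x₀‖ + 1), ‖fderiv ℝ F y‖ ≤ C :=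
    (isCompact_closedBall 0 _).exists_bound_of_continuousOn
      ((hF.continuous_fderiv (by simp)).continuousOn)
  have hC0 : 0 ≤ C := le_trans (norm_nonneg _) (hC 0 (by simp; positivity))
  have hrpowCO : ContinuousOn (fun s : ℝ => s ^ (c-1)) (Ioc (0:ℝ) 1) :=
    continuousOn_id.rpow_const fun s hs => Or.inl hs.1.ne'
  have hmem : ∀ s ∈ Ioc (0:ℝ) 1, ∀ x ∈ ball x₀ 1,
      sc w s x ∈ closedBall (0 : Fin q → ℝ) (‖x₀‖ + 1) := by
    intro s hs x hx
    rw [mem_closedBall_zero_iff]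
    refine (norm_sc_le w hs.1.le hs.2 x).trans ?_
    have : ‖x - x₀‖ < 1 := mem_ball_iff_norm.1 hx
    calc ‖x‖ = ‖x₀ + (x - x₀)‖ := by ring_nf
      _ ≤ ‖x₀‖ + ‖x - x₀‖ := norm_add_le _ _
      _ ≤ ‖x₀‖ + 1 := by linarith
  have hdiff : ∀ s ∈ Ioc (0:ℝ) 1, ∀ x : Fin q → ℝ,
      HasFDerivAt (fun y => s ^ (c-1) * F (sc w s y)) (Φ x s) x := by
    intro s _ x
    have h2 : HasFDerivAt (fun y : Fin q → ℝ => F (sc w s y))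
        ((fderiv ℝ F (sc w s x)).comp (scL w s)) x := by
      have h3 := ((hF.differentiable (by simp)) (sc w s x)).hasFDerivAt
      rw [← scL_apply w s x] at h3
      have h4 := h3.comp x (scL w s).hasFDerivAt
      simpa only [Function.comp_def, scL_apply] using h4
    exact h2.const_mul _
  have key : HasFDerivAt (fun x => ∫ s, s ^ (c-1) * F (sc w s x) ∂μ)
      (∫ s, Φ x₀ s ∂μ) x₀ := by
    apply hasFDerivAt_integral_of_dominated_of_fderiv_le
      (s := ball x₀ 1) (bound := fun s => s ^ (c-1) * C) (ball_mem_nhds x₀ one_pos)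
    · exact Filter.Eventually.of_forall fun x =>
        (hrpowCO.mul ((hFc.comp (continuous_sc w x)).continuousOn)).aestronglyMeasurable
          measurableSet_Ioc
    · exact integrableOn_aux w c hc hFc x₀
    · exact (hrpowCO.smul
        ((((hF.continuous_fderiv (by simp)).comp (continuous_sc w x₀)).clm_comp
          (continuous_scL w)).continuousOn)).aestronglyMeasurable measurableSet_Ioc
    · rw [hμ, ae_restrict_iff' measurableSet_Ioc]
      refine Filter.Eventually.of_forall fun s hs x hx => ?_
      have hn : ‖Φ x s‖ ≤ |s ^ (c-1)| * (‖fderiv ℝ F (sc w s x)‖ * ‖scL (q := q) w s‖) := by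
        have hrfl : Φ x s = s ^ (c-1) • ((fderiv ℝ F (sc w s x)).comp (scL w s)) := rfl
        rw [hrfl]
        refine (norm_smul_le (s ^ (c-1)) ((fderiv ℝ F (sc w s x)).comp (scL w s))).trans ?_
        rw [Real.norm_eq_abs]
        exact mul_le_mul_of_nonneg_left (ContinuousLinearMap.opNorm_comp_le _ _) (abs_nonneg _)
      refine hn.trans ?_
      rw [abs_of_nonneg (Real.rpow_nonneg hs.1.le _)]
      have h5 : ‖fderiv ℝ F (sc w s x)‖ * ‖scL (q := q) w s‖ ≤ C * 1 :=
        mul_le_mul (hC _ (hmem s hs x hx)) (norm_scL_le w hs.1.le hs.2) (norm_nonneg _) hC0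
      rw [mul_one] at h5
      exact mul_le_mul_of_nonneg_left h5 (Real.rpow_nonneg hs.1.le _)
    · have hb : IntervalIntegrable (fun s : ℝ => s ^ (c-1) * C) volume 0 1 :=
        (intervalIntegral.intervalIntegrable_rpow' (by linarith)).mul_const C
      rw [intervalIntegrable_iff_integrableOn_Ioc_of_le zero_le_one] at hb
      exact hb
    · rw [hμ, ae_restrict_iff' measurableSet_Ioc]
      exact Filter.Eventually.of_forall fun s hs x _ => hdiff s hs x
  have hΦint : Integrable (Φ x₀) μ := by
    refine Integrable.mono' (g := fun s => s ^ (c-1) * C) ?_ ?_ ?_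
    · have hb : IntervalIntegrable (fun s : ℝ => s ^ (c-1) * C) volume 0 1 :=
        (intervalIntegral.intervalIntegrable_rpow' (by linarith)).mul_const C
      rw [intervalIntegrable_iff_integrableOn_Ioc_of_le zero_le_one] at hb
      exact hb
    · exact (hrpowCO.smul
        ((((hF.continuous_fderiv (by simp)).comp (continuous_sc w x₀)).clm_comp
          (continuous_scL w)).continuousOn)).aestronglyMeasurable measurableSet_Ioc
    · rw [hμ, ae_restrict_iff' measurableSet_Ioc]
      refine Filter.Eventually.of_forall fun s hs => ?_
      have hn : ‖Φ x₀ s‖ ≤ |s ^ (c-1)| * (‖fderiv ℝ F (sc w s x₀)‖ * ‖scL (q := q) w s‖) := by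
        have hrfl : Φ x₀ s = s ^ (c-1) • ((fderiv ℝ F (sc w s x₀)).comp (scL w s)) := rfl
        rw [hrfl]
        refine (norm_smul_le (s ^ (c-1)) ((fderiv ℝ F (sc w s x₀)).comp (scL w s))).trans ?_
        rw [Real.norm_eq_abs]
        exact mul_le_mul_of_nonneg_left (ContinuousLinearMap.opNorm_comp_le _ _) (abs_nonneg _)
      refine hn.trans ?_
      rw [abs_of_nonneg (Real.rpow_nonneg hs.1.le _)]
      have hx₀b : x₀ ∈ ball x₀ 1 := mem_ball_self one_pos
      have h5 : ‖fderiv ℝ F (sc w s x₀)‖ * ‖scL (q := q) w s‖ ≤ C * 1 :=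
        mul_le_mul (hC _ (hmem s hs x₀ hx₀b)) (norm_scL_le w hs.1.le hs.2) (norm_nonneg _) hC0
      rw [mul_one] at h5
      exact mul_le_mul_of_nonneg_left h5 (Real.rpow_nonneg hs.1.le _)
  have hsum : (∫ s, Φ x₀ s ∂μ)
      = ∑ i, gI w (c + w i) (fun y => fderiv ℝ F y (Pi.single i 1)) x₀ •
        (ContinuousLinearMap.proj i : (Fin q → ℝ) →L[ℝ] ℝ) := by
    refine ContinuousLinearMap.ext fun v => ?_
    have hΦv : ∀ s ∈ Ioc (0:ℝ) 1, Φ x₀ s v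
        = ∑ i, v i * (s ^ ((c + w i) - 1) * fderiv ℝ F (sc w s x₀) (Pi.single i 1)) := by
      intro s hs
      have hv : scL w s v = ∑ i, (s ^ w i * v i) • (Pi.single i (1:ℝ) : Fin q → ℝ) := by
        rw [scL_apply]
        ext j
        simp [sc, Finset.sum_apply, Pi.single_apply, mul_ite, Finset.sum_ite_eq]
      rw [hΦ]
      simp only [ContinuousLinearMap.smul_apply, ContinuousLinearMap.comp_apply, hv, map_sum,
        _root_.map_smul, smul_eq_mul]
      rw [Finset.mul_sum]
      refine Finset.sum_congr rfl fun i _ => ?_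
      have hpow : s ^ (c-1) * s ^ w i = s ^ ((c + w i) - 1) := by
        rw [← Real.rpow_natCast s (w i), ← Real.rpow_add hs.1]
        congr 1
        ring
      rw [← hpow]
      ring
    calc (∫ s, Φ x₀ s ∂μ) v = ∫ s, Φ x₀ s v ∂μ := ContinuousLinearMap.integral_apply hΦint v
      _ = ∫ s in Ioc (0:ℝ) 1, ∑ i, v i * (s ^ ((c + w i) - 1) *
            fderiv ℝ F (sc w s x₀) (Pi.single i 1)) :=
        setIntegral_congr_fun measurableSet_Ioc hΦv
      _ = ∑ i, ∫ s in Ioc (0:ℝ) 1, v i * (s ^ ((c + w i) - 1) *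
            fderiv ℝ F (sc w s x₀) (Pi.single i 1)) := by
        refine integral_finset_sum _ fun i _ => ?_
        exact (integrableOn_aux w (c + w i) (by positivity)
          ((contDiff_Fi hF i).continuous) x₀).const_mul (v i)
      _ = ∑ i, v i * gI w (c + w i) (fun y => fderiv ℝ F y (Pi.single i 1)) x₀ := by
        refine Finset.sum_congr rfl fun i _ => ?_
        rw [MeasureTheory.integral_const_mul]
        rfl
      _ = _ := by
        simp only [ContinuousLinearMap.sum_apply, ContinuousLinearMap.smul_apply,
          ContinuousLinearMap.proj_apply, smul_eq_mul]
        exact Finset.sum_congr rfl fun i _ => mul_comm _ _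
  rw [← hsum]
  exact key

lemma contDiff_gI_nat (n : ℕ) : ∀ c : ℝ, 0 < c → ∀ F : (Fin q → ℝ) → ℝ,
    ContDiff ℝ (⊤ : ℕ∞) F → ContDiff ℝ (n : ℕ∞) (gI w c F) := by
  induction n with
  | zero =>
    intro c hc F hF
    refine contDiff_zero.2 (continuous_iff_continuousAt.2 fun x => ?_)
    exact (hasFDerivAt_gI w c hc hF x).differentiableAt.continuousAt
  | succ n ih =>
    intro c hc F hF
    have hcast : (((n + 1 : ℕ) : ℕ∞) : WithTop ℕ∞) = ((n : ℕ∞) : WithTop ℕ∞) + 1 := by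
      push_cast; rfl
    rw [hcast, contDiff_succ_iff_fderiv]
    refine ⟨fun x => (hasFDerivAt_gI w c hc hF x).differentiableAt, by simp, ?_⟩
    have heq : fderiv ℝ (gI w c F) = fun x => ∑ i,
        gI w (c + w i) (fun y => fderiv ℝ F y (Pi.single i 1)) x •
          (ContinuousLinearMap.proj i : (Fin q → ℝ) →L[ℝ] ℝ) :=
      funext fun x => (hasFDerivAt_gI w c hc hF x).fderiv
    rw [heq]
    exact ContDiff.sum fun i _ =>
      (ih (c + w i) (by positivity) _ (contDiff_Fi hF i)).smul contDiff_const

lemma contDiff_gI (c : ℝ) (hc : 0 < c) {F : (Fin q → ℝ) → ℝ}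
    (hF : ContDiff ℝ (⊤ : ℕ∞) F) : ContDiff ℝ (⊤ : ℕ∞) (gI w c F) :=
  contDiff_infty.2 fun n => contDiff_gI_nat w n c hc F hF

lemma gI_eq (c : ℝ) (hc : 0 < c) {F : (Fin q → ℝ) → ℝ}
    (hF : ContDiff ℝ (⊤ : ℕ∞) F) (x : Fin q → ℝ) :
    (∑ i, (w i : ℝ) * x i * gI w (c + w i) (fun y => fderiv ℝ F y (Pi.single i 1)) x)
      + c * gI w c F x = F x := by
  have hFc : Continuous F := hF.continuous
  set scd : ℝ → (Fin q → ℝ) := fun s i => ((w i : ℝ) * s ^ (w i - 1)) * x i with hscd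
  set D : ℝ → ℝ := fun s => fderiv ℝ F (sc w s x) (scd s) with hD
  have hDcont : Continuous D := by
    refine Continuous.clm_apply ((hF.continuous_fderiv (by simp)).comp (continuous_sc w x)) ?_
    exact continuous_pi fun i => ((continuous_const.mul (continuous_pow _)).mul continuous_const)
  have hφcont : ContinuousOn (fun s : ℝ => s ^ c * F (sc w s x)) (Icc 0 1) :=
    (continuousOn_id.rpow_const fun t _ => Or.inr hc.le).mul
      (hFc.comp (continuous_sc w x)).continuousOn
  have hderiv : ∀ s ∈ Ioo (0:ℝ) 1,
      HasDerivAt (fun t : ℝ => t ^ c * F (sc w t x))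
        (c * s ^ (c-1) * F (sc w s x) + s ^ c * D s) s := by
    intro s hs
    have h1 : HasDerivAt (fun t : ℝ => t ^ c) (c * s ^ (c-1)) s :=
      Real.hasDerivAt_rpow_const (Or.inl hs.1.ne')
    have hinner : HasDerivAt (fun t => sc w t x) (scd s) s := by
      refine hasDerivAt_pi.2 fun i => ?_
      simpa [sc, hscd] using (hasDerivAt_pow (w i) s).mul_const (x i)
    have h2 : HasDerivAt (fun t => F (sc w t x)) (D s) s :=
      (((hF.differentiable (by simp)) (sc w s x)).hasFDerivAt).comp_hasDerivAt s hinner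
    exact h1.mul h2
  have hint1 : IntervalIntegrable (fun s : ℝ => c * s ^ (c-1) * F (sc w s x)) volume 0 1 := by
    have := (intervalIntegrable_aux w c hc hFc x).const_mul c
    simpa [mul_assoc] using this
  have hint2 : IntervalIntegrable (fun s : ℝ => s ^ c * D s) volume 0 1 :=
    (intervalIntegral.intervalIntegrable_rpow' (by linarith)).mul_continuousOn
      hDcont.continuousOn
  have hFTC : ∫ s in (0:ℝ)..1, (c * s ^ (c-1) * F (sc w s x) + s ^ c * D s) = F x := by
    rw [intervalIntegral.integral_eq_sub_of_hasDeriv_right_of_le zero_le_one hφcont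
      (fun s hs => (hderiv s hs).hasDerivWithinAt) (hint1.add hint2)]
    have h1 : sc w 1 x = x := by ext i; simp [sc]
    rw [Real.one_rpow, Real.zero_rpow hc.ne', h1]
    ring
  have hsplit : (∫ s in (0:ℝ)..1, (c * s ^ (c-1) * F (sc w s x) + s ^ c * D s))
      = c * gI w c F x
        + ∑ i, (w i : ℝ) * x i * gI w (c + w i) (fun y => fderiv ℝ F y (Pi.single i 1)) x := by
    rw [intervalIntegral.integral_add hint1 hint2]
    congr 1
    · rw [intervalIntegral.integral_of_le zero_le_one]
      have : (fun s : ℝ => c * s ^ (c-1) * F (sc w s x))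
          = fun s : ℝ => c * (s ^ (c-1) * F (sc w s x)) := funext fun s => mul_assoc _ _ _
      rw [this, MeasureTheory.integral_const_mul]
      rfl
    · rw [intervalIntegral.integral_of_le zero_le_one]
      have hcongr : ∀ s ∈ Ioc (0:ℝ) 1, s ^ c * D s
          = ∑ i, (w i : ℝ) * x i *
              (s ^ ((c + w i) - 1) * fderiv ℝ F (sc w s x) (Pi.single i 1)) := by
        intro s hs
        have hv : scd s = ∑ i, (((w i : ℝ) * s ^ (w i - 1)) * x i) •
            (Pi.single i (1:ℝ) : Fin q → ℝ) := by
          ext j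
          simp [hscd, Finset.sum_apply, Pi.single_apply, mul_ite, Finset.sum_ite_eq]
        rw [hD]
        simp only [hv, map_sum, _root_.map_smul, smul_eq_mul]
        rw [Finset.mul_sum]
        refine Finset.sum_congr rfl fun i _ => ?_
        rcases Nat.eq_zero_or_pos (w i) with h0 | h1
        · simp [h0]
        · have hpow : s ^ c * s ^ (w i - 1) = s ^ ((c + w i) - 1) := by
            rw [← Real.rpow_natCast s (w i - 1), ← Real.rpow_add hs.1]
            congr 1
            have : ((w i - 1 : ℕ) : ℝ) = (w i : ℝ) - 1 := by
              push_cast [Nat.cast_sub h1]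
              ring
            rw [this]; ring
          rw [← hpow]
          ring
      rw [setIntegral_congr_fun measurableSet_Ioc hcongr]
      rw [integral_finset_sum _ fun i _ => ?_]
      · refine Finset.sum_congr rfl fun i _ => ?_
        rw [MeasureTheory.integral_const_mul]
        rfl
      · exact (integrableOn_aux w (c + w i) (by positivity)
          ((contDiff_Fi hF i).continuous) x).const_mul _
  rw [← hFTC, hsplit]
  ring

end WEulerAux

open Finset in
/-- Common analytic core of Proposition 2.10 (prEuler) and Lemma 4.5 (rP): for non-negative
integer weights `w` and a real constant `c > 0`, the equation
`∑ i, wᵢ xᵢ ∂g/∂xᵢ + c·g = f` has a smooth solution `g` for every smooth `f`. -/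
theorem weighted_euler_equation_solvable
    (q : ℕ) (hq : 1 ≤ q) (w : Fin q → ℕ) (c : ℝ) (hc : 0 < c)
    (f : (Fin q → ℝ) → ℝ) (hf : ContDiff ℝ (⊤ : ℕ∞) f) :
    ∃ g : (Fin q → ℝ) → ℝ, ContDiff ℝ (⊤ : ℕ∞) g ∧
      ∀ x : Fin q → ℝ,
        (∑ i, (w i : ℝ) * x i * fderiv ℝ g x (Pi.single i 1)) + c * g x = f x := by
  refine ⟨WEulerAux.gI w c f, WEulerAux.contDiff_gI w c hc hf, fun x => ?_⟩
  have hd := WEulerAux.hasFDerivAt_gI w c hc hf x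
  have happ : ∀ i, fderiv ℝ (WEulerAux.gI w c f) x (Pi.single i 1)
      = WEulerAux.gI w (c + w i) (fun y => fderiv ℝ f y (Pi.single i 1)) x := by
    intro i
    rw [hd.fderiv]
    simp only [ContinuousLinearMap.sum_apply, ContinuousLinearMap.smul_apply,
      ContinuousLinearMap.proj_apply, smul_eq_mul]
    have : ∀ j : Fin q, WEulerAux.gI w (c + w j) (fun y => fderiv ℝ f y (Pi.single j 1)) x *
        (Pi.single i (1:ℝ) : Fin q → ℝ) j
        = if i = j then WEulerAux.gI w (c + w j) (fun y => fderiv ℝ f y (Pi.single j 1)) x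
          else 0 := by
      intro j
      rcases eq_or_ne i j with h | h <;> simp [Pi.single_apply, h]
    rw [Finset.sum_congr rfl fun j _ => this j, Finset.sum_ite_eq]
    simp
  simp_rw [happ]
  exact WEulerAux.gI_eq w c hc hf x
end

section
/- Let q ≥ 1. For i = 1,…,s let g_i : ℝ^q → ℝ be a C^∞ function of the form g_i = k_i·(h_i ∘ Φ_i), where k_i : ℝ^q → ℝ is C^∞ and nowhere vanishing, Φ_i : ℝ^q → ℝ^q is a C^∞ diffeomorphism (a bijection with C^∞ inverse), and h_i : ℝ^q → ℝ is a C^∞ function which is quasihomogeneous of some degree δ_i ∈ ℕ for some non-negative integer weights w^{(i)} = (w^{(i)}_1,…,w^{(i)}_q) with Σ_j w^{(i)}_j ≥ 1 (i.e. h_i(s^{w^{(i)}_1}x₁,…,s^{w^{(i)}_q}x_q) = s^{δ_i}·h_i(x) for all s ∈ (0,1], x ∈ ℝ^q). Then for all C^∞ functions f₁,…,f_s : ℝ^q → ℝ there exist C^∞ vector fields Y^{(1)},…,Y^{(s)} : ℝ^q → ℝ^q such that Σ_{i=1}^s g_i·f_i = Σ_{i=1}^s div(g_i·Y^{(i)})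 on ℝ^q, where div Z = Σ_{j=1}^q ∂Z_j/∂x_j. -/
open MeasureTheory Metric intervalIntegral

noncomputable section

set_option maxHeartbeats 1000000
set_option synthInstance.maxHeartbeats 400000

/-- Expand a continuous linear functional on a pi type over its basis. -/
theorem clm_pi_apply {q : ℕ} (L : (Fin q → ℝ) →L[ℝ] ℝ) (u : Fin q → ℝ) :
    L u = ∑ j, u j * L (Pi.single j 1) := by
  have hu : u = ∑ j, u j • (Pi.single j 1 : Fin q → ℝ) := by
    ext l
    simp [Pi.single_apply, Finset.sum_apply]
  calc L u = L (∑ j, u j • (Pi.single j 1 : Fin q → ℝ)) := by rw [← hu]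
  _ = ∑ j, u j * L (Pi.single j 1) := by
      rw [map_sum]
      simp [smul_eq_mul]

theorem det_bound {q : ℕ} (m : Fin q → (Fin q → ℝ)) :
    ‖(Matrix.of m).det‖ ≤ (Nat.factorial q) * ∏ i, ‖m i‖ := by
  rw [Matrix.det_apply']
  calc ‖∑ σ : Equiv.Perm (Fin q), ((Equiv.Perm.sign σ : ℤ) : ℝ) * ∏ i, Matrix.of m (σ i) i‖
      ≤ ∑ σ : Equiv.Perm (Fin q), ‖((Equiv.Perm.sign σ : ℤ) : ℝ) * ∏ i, Matrix.of m (σ i) i‖ :=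
        norm_sum_le _ _
    _ ≤ ∑ _σ : Equiv.Perm (Fin q), ∏ i, ‖m i‖ := by
        apply Finset.sum_le_sum
        intro σ _
        rw [norm_mul]
        have h1 : ‖((Equiv.Perm.sign σ : ℤ) : ℝ)‖ = 1 := by
          rcases Int.units_eq_one_or (Equiv.Perm.sign σ) with h | h <;> simp [h]
        rw [h1, one_mul]
        calc ‖∏ i, Matrix.of m (σ i) i‖ = ∏ i, ‖Matrix.of m (σ i) i‖ := by
              rw [Real.norm_eq_abs, Finset.abs_prod]
              rfl
          _ ≤ ∏ i, ‖m (σ i)‖ := by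
              apply Finset.prod_le_prod (fun _ _ => norm_nonneg _)
              intro i _
              exact norm_le_pi_norm (m (σ i)) i
          _ = ∏ i, ‖m i‖ := Equiv.prod_comp σ (fun i => ‖m i‖)
    _ = (Nat.factorial q) * ∏ i, ‖m i‖ := by
        rw [Finset.sum_const, Finset.card_univ, Fintype.card_perm, nsmul_eq_mul]
        simp

/-- The determinant, as a continuous multilinear map in the rows. -/
def detCMM (q : ℕ) : ContinuousMultilinearMap ℝ (fun _ : Fin q => (Fin q → ℝ)) ℝ :=
  MultilinearMap.mkContinuous
    (Matrix.detRowAlternating : (Fin q → ℝ) [⋀^Fin q]→ₗ[ℝ] ℝ).toMultilinearMap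
    (Nat.factorial q) (fun m => det_bound m)

theorem detCMM_apply {q : ℕ} (m : Fin q → (Fin q → ℝ)) : detCMM q m = (Matrix.of m).det := rfl

theorem detCMM_contDiff {q : ℕ} {n : WithTop ℕ∞} : ContDiff ℝ n (detCMM q) :=
  (detCMM q).contDiff

theorem infty_add_one_le : ((⊤ : ℕ∞) : WithTop ℕ∞) + 1 ≤ ((⊤ : ℕ∞) : WithTop ℕ∞) := by
  exact_mod_cast le_top

theorem one_le_infty : ((⊤ : ℕ∞) : WithTop ℕ∞) ≠ 0 := by
  simp

theorem intervalIntegral_clm_apply {H : Type*} [NormedAddCommGroup H] [NormedSpace ℝ H]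
    {F : Type*} [NormedAddCommGroup F] [NormedSpace ℝ F] [CompleteSpace F]
    {φ : ℝ → H →L[ℝ] F} (hφ : Continuous φ) (a b : ℝ) (v : H) :
    (∫ t in a..b, φ t) v = ∫ t in a..b, φ t v := by
  rw [intervalIntegral, intervalIntegral, ContinuousLinearMap.sub_apply,
    ContinuousLinearMap.integral_apply hφ.integrableOn_Ioc v,
    ContinuousLinearMap.integral_apply hφ.integrableOn_Ioc v]

section Parametric

variable {H : Type} [NormedAddCommGroup H] [NormedSpace ℝ H] [FiniteDimensional ℝ H]

/-- Differentiation under the interval integral, for an everywhere-smooth integrand. -/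
theorem hasFDerivAt_parametric {F : Type*} [NormedAddCommGroup F] [NormedSpace ℝ F]
    [CompleteSpace F] (G : H → ℝ → F) (hG : ContDiff ℝ ((⊤ : ℕ∞) : WithTop ℕ∞) ↿G)
    (a b : ℝ) (x₀ : H) :
    HasFDerivAt (fun x => ∫ t in a..b, G x t)
      (∫ t in a..b, (fderiv ℝ ↿G (x₀, t)).comp (ContinuousLinearMap.inl ℝ H ℝ)) x₀ := by
  have hGc : Continuous ↿G := hG.continuous
  have hD : Continuous (fun p : H × ℝ => fderiv ℝ ↿G p) := (hG.fderiv_right infty_add_one_le).continuous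
  set F' : H → ℝ → H →L[ℝ] F :=
    fun x t => (fderiv ℝ ↿G (x, t)).comp (ContinuousLinearMap.inl ℝ H ℝ) with hF'
  have hF'c : Continuous fun p : H × ℝ => F' p.1 p.2 :=
    (hD.clm_comp continuous_const)
  have hdiff : ∀ (t : ℝ) (x : H), HasFDerivAt (fun x => G x t) (F' x t) x := by
    intro t x
    have h1 : HasFDerivAt ↿G (fderiv ℝ ↿G (x, t)) (x, t) :=
      (hG.differentiable one_le_infty (x, t)).hasFDerivAt
    have h2 : HasFDerivAt (fun y : H => (y, t)) (ContinuousLinearMap.inl ℝ H ℝ) x :=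
      (hasFDerivAt_id x).prodMk (hasFDerivAt_const t x)
    exact h1.comp x h2
  -- bound on the closed ball of radius 1
  obtain ⟨C, hC⟩ : ∃ C, ∀ p ∈ (closedBall x₀ 1 ×ˢ Set.uIcc a b),
      ‖(fun p : H × ℝ => F' p.1 p.2) p‖ ≤ C := by
    apply ((isCompact_closedBall x₀ 1).prod isCompact_uIcc).exists_bound_of_continuousOn
    exact hF'c.continuousOn
  refine intervalIntegral.hasFDerivAt_integral_of_dominated_of_fderiv_le
    (F' := F') (bound := fun _ => C) (s := ball x₀ 1) (ball_mem_nhds x₀ one_pos) ?_ ?_ ?_ ?_ ?_ ?_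
  · filter_upwards with x
    exact (hGc.comp (Continuous.prodMk_right x)).aestronglyMeasurable
  · exact (hGc.comp (Continuous.prodMk_right x₀)).intervalIntegrable a b
  · exact (hF'c.comp (Continuous.prodMk_right x₀)).aestronglyMeasurable
  · filter_upwards with t ht x hx
    exact hC (x, t) ⟨ball_subset_closedBall hx, Set.Ioc_subset_Icc_self ht⟩
  · exact intervalIntegrable_const
  · filter_upwards with t ht x _
    exact hdiff t x

/-- Smoothness of a parametric interval integral with smooth integrand. -/
theorem contDiff_parametric_aux (n : ℕ) :
    ∀ {F : Type} [NormedAddCommGroup F] [NormedSpace ℝ F] [CompleteSpace F]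
      (G : H → ℝ → F), ContDiff ℝ ((⊤ : ℕ∞) : WithTop ℕ∞) ↿G → ∀ (a b : ℝ),
      ContDiff ℝ (n : WithTop ℕ∞) (fun x => ∫ t in a..b, G x t) := by
  induction n with
  | zero =>
      intro F _ _ _ G hG a b
      rw [show ((0 : ℕ) : WithTop ℕ∞) = 0 from rfl, contDiff_zero]
      exact intervalIntegral.continuous_parametric_intervalIntegral_of_continuous' hG.continuous a b
  | succ n ih =>
      intro F _ _ _ G hG a b
      have key : ∀ x₀, HasFDerivAt (fun x => ∫ t in a..b, G x t)
          (∫ t in a..b, (fderiv ℝ ↿G (x₀, t)).comp (ContinuousLinearMap.inl ℝ H ℝ)) x₀ :=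
        hasFDerivAt_parametric G hG a b
      have hcast : ((n + 1 : ℕ) : WithTop ℕ∞) = (n : WithTop ℕ∞) + 1 := by
        push_cast; rfl
      rw [hcast, contDiff_succ_iff_fderiv]
      refine ⟨fun x => (key x).differentiableAt, ?_, ?_⟩
      · intro hn; exact absurd hn (by exact_mod_cast (by simp))
      · have heq : fderiv ℝ (fun x => ∫ t in a..b, G x t)
            = fun x₀ => ∫ t in a..b, (fderiv ℝ ↿G (x₀, t)).comp (ContinuousLinearMap.inl ℝ H ℝ) :=
          funext fun x₀ => (key x₀).fderiv
        rw [heq]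
        apply ih (fun x t => (fderiv ℝ ↿G (x, t)).comp (ContinuousLinearMap.inl ℝ H ℝ))
        exact (hG.fderiv_right infty_add_one_le).clm_comp contDiff_const

theorem contDiff_parametric {F : Type} [NormedAddCommGroup F] [NormedSpace ℝ F]
    [CompleteSpace F] (G : H → ℝ → F) (hG : ContDiff ℝ ((⊤ : ℕ∞) : WithTop ℕ∞) ↿G) (a b : ℝ) :
    ContDiff ℝ ((⊤ : ℕ∞) : WithTop ℕ∞) (fun x => ∫ t in a..b, G x t) := by
  rw [contDiff_infty]
  exact fun n => contDiff_parametric_aux n G hG a b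

end Parametric

section QH

open intervalIntegral

variable {q : ℕ}

theorem coeff_half (n : ℕ) : (n : ℝ) * (1/2 : ℝ) ^ (n - 1) * (2:ℝ) ^ n = 2 * n := by
  cases n with
  | zero => simp
  | succ m =>
      have h1 : (1/2:ℝ)^m * 2^m = 1 := by rw [← mul_pow]; norm_num
      have h2 : (2:ℝ)^(m+1) = 2^m * 2 := by ring
      simp only [Nat.add_sub_cancel, h2]
      calc ((m+1 : ℕ) : ℝ) * (1/2:ℝ)^m * (2^m * 2) = ((m+1 : ℕ) : ℝ) * ((1/2:ℝ)^m * 2^m) * 2 := by ring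
        _ = 2 * ((m+1 : ℕ) : ℝ) := by rw [h1]; ring

theorem two_pow_half (n : ℕ) : (2:ℝ) ^ n * (1/2 : ℝ) ^ n = 1 := by
  rw [← mul_pow]; norm_num

/-- Euler's identity for weakly quasihomogeneous functions. -/
theorem euler_identity (h : (Fin q → ℝ) → ℝ) (hh : ContDiff ℝ ((⊤:ℕ∞) : WithTop ℕ∞) h)
    (w : Fin q → ℕ) (δ : ℕ)
    (hqh : ∀ t ∈ Set.Ioc (0:ℝ) 1, ∀ x : Fin q → ℝ, h (fun j => t ^ w j * x j) = t ^ δ * h x)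
    (y : Fin q → ℝ) :
    ∑ j, (w j : ℝ) * y j * fderiv ℝ h y (Pi.single j 1) = (δ : ℝ) * h y := by
  classical
  set z : Fin q → ℝ := fun j => (2:ℝ) ^ w j * y j with hz
  set τ : ℝ → (Fin q → ℝ) := fun t j => t ^ w j * z j with hτ
  have hτy : τ (1/2) = y := by
    funext j
    simp only [hτ, hz]
    rw [← mul_assoc, mul_comm ((1/2:ℝ) ^ w j), two_pow_half]
    ring
  have hhz : h z = 2 ^ δ * h y := by
    have := hqh (1/2) ⟨by norm_num, by norm_num⟩ z
    rw [show (fun j => (1/2:ℝ) ^ w j * z j) = τ (1/2) from rfl, hτy] at this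
    rw [this, ← mul_assoc, two_pow_half, one_mul]
  -- derivative of τ
  set τ' : Fin q → ℝ := fun j => (w j : ℝ) * (1/2:ℝ) ^ (w j - 1) * z j with hτ'
  have hτd : HasDerivAt τ τ' (1/2) := by
    rw [hasDerivAt_pi]
    intro j
    exact (hasDerivAt_pow (w j) (1/2)).mul_const (z j)
  have hcomp : HasDerivAt (fun t => h (τ t)) (fderiv ℝ h (τ (1/2)) τ') (1/2) := by
    exact ((hh.differentiable one_le_infty (τ (1/2))).hasFDerivAt).comp_hasDerivAt _ hτd
  have hρ : HasDerivAt (fun t : ℝ => t ^ δ * h z) ((δ : ℝ) * (1/2:ℝ) ^ (δ - 1) * h z) (1/2) :=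
    (hasDerivAt_pow δ (1/2)).mul_const (h z)
  have heq : (fun t => h (τ t)) =ᶠ[nhds (1/2:ℝ)] (fun t : ℝ => t ^ δ * h z) := by
    filter_upwards [Ioo_mem_nhds (show (0:ℝ) < 1/2 by norm_num) (show (1/2:ℝ) < 1 by norm_num)]
      with t ht
    exact hqh t ⟨ht.1, le_of_lt ht.2⟩ z
  have hcomp' : HasDerivAt (fun t => h (τ t)) ((δ : ℝ) * (1/2:ℝ) ^ (δ - 1) * h z) (1/2) :=
    hρ.congr_of_eventuallyEq heq
  have hkey : fderiv ℝ h (τ (1/2)) τ' = (δ : ℝ) * (1/2:ℝ) ^ (δ - 1) * h z :=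
    hcomp.unique hcomp'
  rw [hτy] at hkey
  rw [clm_pi_apply] at hkey
  -- simplify both sides
  have hL : ∑ j, τ' j * fderiv ℝ h y (Pi.single j 1)
      = 2 * ∑ j, (w j : ℝ) * y j * fderiv ℝ h y (Pi.single j 1) := by
    rw [Finset.mul_sum]
    apply Finset.sum_congr rfl
    intro j _
    have : τ' j = 2 * ((w j : ℝ) * y j) := by
      simp only [hτ', hz]
      calc (w j : ℝ) * (1/2:ℝ) ^ (w j - 1) * ((2:ℝ) ^ w j * y j)
          = ((w j : ℝ) * (1/2:ℝ) ^ (w j - 1) * (2:ℝ) ^ w j) * y j := by ring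
        _ = (2 * (w j : ℝ)) * y j := by rw [coeff_half]
        _ = 2 * ((w j : ℝ) * y j) := by ring
    rw [this]; ring
  have hR : (δ : ℝ) * (1/2:ℝ) ^ (δ - 1) * h z = 2 * ((δ : ℝ) * h y) := by
    rw [hhz]
    calc (δ : ℝ) * (1/2:ℝ) ^ (δ - 1) * ((2:ℝ) ^ δ * h y)
        = ((δ : ℝ) * (1/2:ℝ) ^ (δ - 1) * (2:ℝ) ^ δ) * h y := by ring
      _ = (2 * (δ : ℝ)) * h y := by rw [coeff_half]
      _ = 2 * ((δ : ℝ) * h y) := by ring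
  rw [hL, hR] at hkey
  linarith

end QH

section QHDiv

open intervalIntegral

variable {q : ℕ}

/-- Solution of the divergence equation for a weakly quasihomogeneous function. -/
theorem qh_divergence (h : (Fin q → ℝ) → ℝ) (hh : ContDiff ℝ ((⊤:ℕ∞) : WithTop ℕ∞) h)
    (w : Fin q → ℕ) (δ : ℕ) (hw : 1 ≤ δ + ∑ j, w j)
    (hqh : ∀ t ∈ Set.Ioc (0:ℝ) 1, ∀ x : Fin q → ℝ, h (fun j => t ^ w j * x j) = t ^ δ * h x)
    (v : (Fin q → ℝ) → ℝ) (hv : ContDiff ℝ ((⊤:ℕ∞) : WithTop ℕ∞) v) :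
    ∃ V : (Fin q → ℝ) → (Fin q → ℝ), ContDiff ℝ ((⊤:ℕ∞) : WithTop ℕ∞) V ∧
      ∀ x, ∑ m, fderiv ℝ (fun y => h y * V y m) x (Pi.single m 1) = h x * v x := by
  classical
  set c : ℕ := δ + ∑ j, w j with hc
  set e : ℕ := c - 1 with he
  have hce : e + 1 = c := Nat.succ_pred_eq_of_pos hw
  set G : (Fin q → ℝ) → ℝ → ℝ := fun x t => t ^ e * v (fun j => t ^ w j * x j) with hG
  have hGs : ContDiff ℝ ((⊤:ℕ∞) : WithTop ℕ∞) ↿G := by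
    show ContDiff ℝ ((⊤:ℕ∞) : WithTop ℕ∞)
      fun p : (Fin q → ℝ) × ℝ => p.2 ^ e * v (fun j => p.2 ^ w j * p.1 j)
    apply ContDiff.mul (contDiff_snd.pow e)
    apply hv.comp
    apply contDiff_pi.2
    intro j
    exact (contDiff_snd.pow (w j)).mul
      ((ContinuousLinearMap.proj j : (Fin q → ℝ) →L[ℝ] ℝ).contDiff.comp contDiff_fst)
  set F : (Fin q → ℝ) → ℝ := fun x => ∫ t in (0:ℝ)..1, G x t with hFdef
  have hF : ContDiff ℝ ((⊤:ℕ∞) : WithTop ℕ∞) F := contDiff_parametric G hGs 0 1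
  -- derivative of F under the integral sign
  have hdF : ∀ (x : Fin q → ℝ) (j : Fin q), fderiv ℝ F x (Pi.single j 1)
      = ∫ t in (0:ℝ)..1, t ^ (e + w j)
          * fderiv ℝ v (fun l => t ^ w l * x l) (Pi.single j 1) := by
    intro x j
    have hkey := hasFDerivAt_parametric G hGs 0 1 x
    rw [hkey.fderiv]
    have hcont : Continuous fun t : ℝ =>
        (fderiv ℝ ↿G (x, t)).comp (ContinuousLinearMap.inl ℝ (Fin q → ℝ) ℝ) :=
      ((hGs.fderiv_right infty_add_one_le).continuous.comp (Continuous.prodMk_right x)).clm_comp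
        continuous_const
    rw [intervalIntegral_clm_apply hcont]
    apply intervalIntegral.integral_congr
    intro t _
    -- pointwise identification of the derivative
    set σA : (Fin q → ℝ) →L[ℝ] (Fin q → ℝ) :=
      ContinuousLinearMap.pi (fun l => (t ^ w l) • ContinuousLinearMap.proj l) with hσA
    have hσfun : (fun y : Fin q → ℝ => (fun l => t ^ w l * y l)) = fun y => σA y := by
      funext y l
      simp [hσA, smul_eq_mul]
    have hσd : HasFDerivAt (fun y : Fin q → ℝ => (fun l => t ^ w l * y l)) σA x := by
      rw [hσfun]; exact σA.hasFDerivAt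
    have hcomp : HasFDerivAt (fun x' : Fin q → ℝ => v (fun l => t ^ w l * x' l))
        ((fderiv ℝ v (fun l => t ^ w l * x l)).comp σA) x :=
      ((hv.differentiable one_le_infty _).hasFDerivAt).comp x hσd
    have hGt : HasFDerivAt (fun x' => G x' t)
        (t ^ e • ((fderiv ℝ v (fun l => t ^ w l * x l)).comp σA)) x := hcomp.const_mul (t ^ e)
    have hGt' : HasFDerivAt (fun x' => G x' t)
        ((fderiv ℝ ↿G (x, t)).comp (ContinuousLinearMap.inl ℝ (Fin q → ℝ) ℝ)) x := by
      have h1 : HasFDerivAt ↿G (fderiv ℝ ↿G (x, t)) (x, t) :=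
        (hGs.differentiable one_le_infty (x, t)).hasFDerivAt
      have h2 : HasFDerivAt (fun y : Fin q → ℝ => (y, t))
          (ContinuousLinearMap.inl ℝ (Fin q → ℝ) ℝ) x :=
        (hasFDerivAt_id x).prodMk (hasFDerivAt_const t x)
      exact h1.comp x h2
    beta_reduce
    rw [hGt'.unique hGt]
    have hσe : σA (Pi.single j 1) = (t ^ w j) • (Pi.single j 1 : Fin q → ℝ) := by
      funext l
      by_cases hl : l = j
      · subst hl; simp [hσA, smul_eq_mul]
      · simp [hσA, smul_eq_mul, Pi.single_apply, hl]
    rw [ContinuousLinearMap.smul_apply, ContinuousLinearMap.comp_apply, hσe, ContinuousLinearMap.map_smul]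
    rw [pow_add]
    simp [smul_eq_mul]
    ring
  -- Euler-type identity for F via the fundamental theorem of calculus
  have hFTC : ∀ x : Fin q → ℝ,
      ∑ j, (w j : ℝ) * x j * fderiv ℝ F x (Pi.single j 1) = v x - (c:ℝ) * F x := by
    intro x
    set σ : ℝ → (Fin q → ℝ) := fun t l => t ^ w l * x l with hσdef
    have hσcont : Continuous σ :=
      continuous_pi fun l => (continuous_pow (w l)).mul continuous_const
    have hdvcont : Continuous fun y => fderiv ℝ v y :=
      (hv.fderiv_right infty_add_one_le).continuous
    set ψ : ℝ → ℝ := fun t => (c:ℝ) * t ^ (c-1) * v (σ t)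
      + t ^ c * fderiv ℝ v (σ t) (fun j => (w j : ℝ) * t ^ (w j - 1) * x j) with hψdef
    have hφ : ∀ t : ℝ, HasDerivAt (fun s : ℝ => s ^ c * v (σ s)) (ψ t) t := by
      intro t
      have h1 : HasDerivAt (fun s : ℝ => s ^ c) ((c:ℝ) * t ^ (c-1)) t := hasDerivAt_pow c t
      have hτd : HasDerivAt σ (fun j => (w j : ℝ) * t ^ (w j - 1) * x j) t := by
        rw [hasDerivAt_pi]
        intro j
        exact (hasDerivAt_pow (w j) t).mul_const (x j)
      have h2 : HasDerivAt (fun s => v (σ s))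
          (fderiv ℝ v (σ t) (fun j => (w j : ℝ) * t ^ (w j - 1) * x j)) t :=
        ((hv.differentiable one_le_infty (σ t)).hasFDerivAt).comp_hasDerivAt _ hτd
      exact h1.mul h2
    have hc1 : Continuous fun t : ℝ => (c:ℝ) * t ^ (c-1) * v (σ t) :=
      (continuous_const.mul (continuous_pow _)).mul (hv.continuous.comp hσcont)
    have hc2 : Continuous fun t : ℝ =>
        t ^ c * fderiv ℝ v (σ t) (fun j => (w j : ℝ) * t ^ (w j - 1) * x j) := by
      apply (continuous_pow c).mul
      apply Continuous.clm_apply (hdvcont.comp hσcont)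
      exact continuous_pi fun j =>
        (continuous_const.mul (continuous_pow (w j - 1))).mul continuous_const
    have hψcont : Continuous ψ := hc1.add hc2
    have hint : ∫ t in (0:ℝ)..1, ψ t = 1 ^ c * v (σ 1) - 0 ^ c * v (σ 0) :=
      intervalIntegral.integral_eq_sub_of_hasDerivAt (fun t _ => hφ t)
        (hψcont.intervalIntegrable 0 1)
    have hσ1 : σ 1 = x := by funext l; simp [hσdef]
    have hc0 : c ≠ 0 := by omega
    rw [hσ1, one_pow, one_mul, zero_pow hc0, zero_mul, sub_zero] at hint
    -- second evaluation of the same integral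
    have hsplit : ∫ t in (0:ℝ)..1, ψ t
        = (c:ℝ) * F x + ∑ j, (w j : ℝ) * x j * fderiv ℝ F x (Pi.single j 1) := by
      have hpt : ∀ t : ℝ, ψ t = (c:ℝ) * G x t
          + ∑ j, ((w j : ℝ) * x j)
              * (t ^ (e + w j) * fderiv ℝ v (σ t) (Pi.single j 1)) := by
        intro t
        rw [hψdef]
        simp only []
        have hexp : t ^ c * fderiv ℝ v (σ t) (fun j => (w j : ℝ) * t ^ (w j - 1) * x j)
            = ∑ j, ((w j : ℝ) * x j) * (t ^ (e + w j) * fderiv ℝ v (σ t) (Pi.single j 1)) := by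
          rw [clm_pi_apply (fderiv ℝ v (σ t)) (fun j => (w j : ℝ) * t ^ (w j - 1) * x j),
            Finset.mul_sum]
          apply Finset.sum_congr rfl
          intro j _
          rcases Nat.eq_zero_or_pos (w j) with hwj | hwj
          · simp [hwj]
          · have hexp2 : c + (w j - 1) = e + w j := by omega
            calc t ^ c * ((w j : ℝ) * t ^ (w j - 1) * x j * fderiv ℝ v (σ t) (Pi.single j 1))
                = ((w j : ℝ) * x j) * ((t ^ c * t ^ (w j - 1)) * fderiv ℝ v (σ t) (Pi.single j 1)) := by
                  ring
              _ = ((w j : ℝ) * x j) * (t ^ (e + w j) * fderiv ℝ v (σ t) (Pi.single j 1)) := by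
                  rw [← pow_add, hexp2]
        rw [hexp]
        have : (c:ℝ) * G x t = (c:ℝ) * t ^ (c-1) * v (σ t) := by
          rw [hG]
          simp only []
          have : e = c - 1 := he
          rw [← this]
          ring
        rw [this]
      rw [intervalIntegral.integral_congr (fun t _ => hpt t)]
      have hGcont : Continuous fun t => G x t := hGs.continuous.comp (Continuous.prodMk_right x)
      have hterm : ∀ j : Fin q, Continuous fun t : ℝ =>
          ((w j : ℝ) * x j) * (t ^ (e + w j) * fderiv ℝ v (σ t) (Pi.single j 1)) := by
        intro j
        apply continuous_const.mul
        exact (continuous_pow _).mul ((hdvcont.comp hσcont).clm_apply continuous_const)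
      rw [intervalIntegral.integral_add (f := fun t => (c:ℝ) * G x t) ((continuous_const.mul hGcont).intervalIntegrable 0 1)
        ((continuous_finset_sum _ (fun j _ => hterm j)).intervalIntegrable 0 1)]
      rw [intervalIntegral.integral_const_mul]
      congr 1
      rw [intervalIntegral.integral_finset_sum (fun j _ => (hterm j).intervalIntegrable 0 1)]
      apply Finset.sum_congr rfl
      intro j _
      rw [intervalIntegral.integral_const_mul, hdF x j]
    rw [hint] at hsplit
    linarith [hsplit]
  -- the vector field
  refine ⟨fun x j => (w j : ℝ) * x j * F x, ?_, ?_⟩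
  · apply contDiff_pi.2
    intro j
    exact (contDiff_const.mul
      ((ContinuousLinearMap.proj j : (Fin q → ℝ) →L[ℝ] ℝ).contDiff)).mul hF
  · intro x
    have hhd : DifferentiableAt ℝ h x := (hh.differentiable one_le_infty).differentiableAt
    have hFd : DifferentiableAt ℝ F x := (hF.differentiable one_le_infty).differentiableAt
    have hproj : ∀ m : Fin q, DifferentiableAt ℝ (fun y : Fin q → ℝ => y m) x :=
      fun m => (ContinuousLinearMap.proj m : (Fin q → ℝ) →L[ℝ] ℝ).differentiableAt
    have hsummand : ∀ m : Fin q,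
        fderiv ℝ (fun y => h y * ((w m : ℝ) * y m * F y)) x (Pi.single m 1)
        = h x * ((w m : ℝ) * x m * fderiv ℝ F x (Pi.single m 1))
          + (w m : ℝ) * (h x * F x)
          + ((w m : ℝ) * x m * fderiv ℝ h x (Pi.single m 1)) * F x := by
      intro m
      have hVm : DifferentiableAt ℝ (fun y : Fin q → ℝ => (w m : ℝ) * y m * F y) x :=
        ((hproj m).const_mul _).mul hFd
      rw [fderiv_fun_mul hhd hVm]
      rw [fderiv_fun_mul ((hproj m).const_mul _) hFd]
      have hfm : fderiv ℝ (fun y : Fin q → ℝ => (w m : ℝ) * y m) x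
          = (w m : ℝ) • (ContinuousLinearMap.proj m : (Fin q → ℝ) →L[ℝ] ℝ) := by
        rw [fderiv_const_mul (hproj m)]
        congr 1
        exact (ContinuousLinearMap.proj m : (Fin q → ℝ) →L[ℝ] ℝ).fderiv
      rw [hfm]
      simp only [ContinuousLinearMap.add_apply, ContinuousLinearMap.smul_apply,
        ContinuousLinearMap.coe_smul', Pi.smul_apply, ContinuousLinearMap.proj_apply,
        Pi.single_eq_same, smul_eq_mul]
      ring
    rw [Finset.sum_congr rfl (fun m _ => hsummand m)]
    rw [Finset.sum_add_distrib, Finset.sum_add_distrib]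
    have e1 : ∑ m, h x * ((w m : ℝ) * x m * fderiv ℝ F x (Pi.single m 1))
        = h x * (v x - (c:ℝ) * F x) := by
      rw [← Finset.mul_sum, hFTC x]
    have e2 : ∑ m, (w m : ℝ) * (h x * F x) = (∑ m, (w m : ℝ)) * (h x * F x) :=
      (Finset.sum_mul _ _ _).symm
    have e3 : ∑ m, ((w m : ℝ) * x m * fderiv ℝ h x (Pi.single m 1)) * F x
        = ((δ : ℝ) * h x) * F x := by
      rw [← Finset.sum_mul, euler_identity h hh w δ hqh x]
    rw [e1, e2, e3]
    have hcast : (∑ m, (w m : ℝ)) = ((∑ m, w m : ℕ) : ℝ) := by push_cast; ring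
    have hccast : (c : ℝ) = (δ : ℝ) + ((∑ m, w m : ℕ) : ℝ) := by rw [hc]; push_cast; ring
    rw [hcast, hccast]
    ring

end QHDiv

section Piola

variable {q : ℕ}

/-- The Jacobian matrix of a map, with respect to the standard basis. -/
def Jmat (Φ : (Fin q → ℝ) → (Fin q → ℝ)) (x : Fin q → ℝ) : Matrix (Fin q) (Fin q) ℝ :=
  Matrix.of fun l j => fderiv ℝ Φ x (Pi.single j 1) l

theorem Jmat_entry_contDiff {Φ : (Fin q → ℝ) → (Fin q → ℝ)}
    (hΦ : ContDiff ℝ ((⊤:ℕ∞) : WithTop ℕ∞) Φ) (l j : Fin q) :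
    ContDiff ℝ ((⊤:ℕ∞) : WithTop ℕ∞) (fun x => Jmat Φ x l j) := by
  have h1 : ContDiff ℝ ((⊤:ℕ∞) : WithTop ℕ∞) (fun x => fderiv ℝ Φ x (Pi.single j 1)) :=
    (hΦ.fderiv_right infty_add_one_le).clm_apply contDiff_const
  exact (contDiff_pi.1 h1) l

theorem Jmat_row_contDiff {Φ : (Fin q → ℝ) → (Fin q → ℝ)}
    (hΦ : ContDiff ℝ ((⊤:ℕ∞) : WithTop ℕ∞) Φ) (r : Fin q) :
    ContDiff ℝ ((⊤:ℕ∞) : WithTop ℕ∞) (fun x => (Jmat Φ x r : Fin q → ℝ)) :=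
  contDiff_pi.2 fun l => Jmat_entry_contDiff hΦ r l

/-- Chain rule for partial derivatives through a smooth map. -/
theorem pd_comp {Φ : (Fin q → ℝ) → (Fin q → ℝ)}
    (hΦ : ContDiff ℝ ((⊤:ℕ∞) : WithTop ℕ∞) Φ) {u : (Fin q → ℝ) → ℝ}
    (hu : ContDiff ℝ ((⊤:ℕ∞) : WithTop ℕ∞) u) (x : Fin q → ℝ) (j : Fin q) :
    fderiv ℝ (fun y => u (Φ y)) x (Pi.single j 1)
      = ∑ l, Jmat Φ x l j * fderiv ℝ u (Φ x) (Pi.single l 1) := by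
  have h1 : HasFDerivAt (fun y => u (Φ y)) ((fderiv ℝ u (Φ x)).comp (fderiv ℝ Φ x)) x :=
    ((hu.differentiable one_le_infty _).hasFDerivAt).comp x
      ((hΦ.differentiable one_le_infty x).hasFDerivAt)
  rw [h1.fderiv, ContinuousLinearMap.comp_apply,
    clm_pi_apply (fderiv ℝ u (Φ x)) (fderiv ℝ Φ x (Pi.single j 1))]
  rfl

theorem Jmat_mul {Φ Ψ : (Fin q → ℝ) → (Fin q → ℝ)}
    (hΦ : ContDiff ℝ ((⊤:ℕ∞) : WithTop ℕ∞) Φ) (hΨ : ContDiff ℝ ((⊤:ℕ∞) : WithTop ℕ∞) Ψ)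
    (hleft : Function.LeftInverse Ψ Φ) (x : Fin q → ℝ) :
    Jmat Ψ (Φ x) * Jmat Φ x = 1 := by
  have h1 : HasFDerivAt (fun y => Ψ (Φ y)) ((fderiv ℝ Ψ (Φ x)).comp (fderiv ℝ Φ x)) x :=
    ((hΨ.differentiable one_le_infty _).hasFDerivAt).comp x
      ((hΦ.differentiable one_le_infty x).hasFDerivAt)
  have hcomp : (fun y : Fin q → ℝ => Ψ (Φ y)) = fun y => y := funext hleft
  have h2 : HasFDerivAt (fun y : Fin q → ℝ => Ψ (Φ y))
      (ContinuousLinearMap.id ℝ (Fin q → ℝ)) x := by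
    rw [hcomp]; exact hasFDerivAt_id x
  have h3 := h1.unique h2
  ext l m
  have h4 : (fderiv ℝ Ψ (Φ x)) ((fderiv ℝ Φ x) (Pi.single m 1)) = Pi.single m 1 := by
    have := congrArg (fun L : (Fin q → ℝ) →L[ℝ] (Fin q → ℝ) => L (Pi.single m 1)) h3
    simpa using this
  have h5 := congrArg (fun z : Fin q → ℝ => z l) h4
  have h6 : (fderiv ℝ Ψ (Φ x)) ((fderiv ℝ Φ x) (Pi.single m 1)) l
      = ∑ j, Jmat Φ x j m * Jmat Ψ (Φ x) l j := by
    have h7 := clm_pi_apply ((ContinuousLinearMap.proj l).comp (fderiv ℝ Ψ (Φ x)))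
      ((fderiv ℝ Φ x) (Pi.single m 1))
    simp only [ContinuousLinearMap.comp_apply, ContinuousLinearMap.proj_apply] at h7
    exact h7
  rw [h6] at h5
  rw [Matrix.mul_apply, Matrix.one_apply]
  rw [show ∑ j, Jmat Ψ (Φ x) l j * Jmat Φ x j m = ∑ j, Jmat Φ x j m * Jmat Ψ (Φ x) l j from
    Finset.sum_congr rfl fun j _ => mul_comm _ _]
  rw [h5, Pi.single_apply]

theorem Jmat_det_ne_zero {Φ Ψ : (Fin q → ℝ) → (Fin q → ℝ)}
    (hΦ : ContDiff ℝ ((⊤:ℕ∞) : WithTop ℕ∞) Φ) (hΨ : ContDiff ℝ ((⊤:ℕ∞) : WithTop ℕ∞) Ψ)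
    (hleft : Function.LeftInverse Ψ Φ) (x : Fin q → ℝ) :
    (Jmat Φ x).det ≠ 0 := by
  have h1 := congrArg Matrix.det (Jmat_mul hΦ hΨ hleft x)
  rw [Matrix.det_mul, Matrix.det_one] at h1
  exact right_ne_zero_of_mul_eq_one h1

theorem sym_antisym_sum (S T : Fin q → Fin q → ℝ) (hS : ∀ j l, S j l = S l j)
    (hT : ∀ j l, T j l = - T l j) : ∑ j, ∑ l, S j l * T j l = 0 := by
  have h1 : ∑ j, ∑ l, S j l * T j l = ∑ l, ∑ j, S j l * T j l := Finset.sum_comm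
  have h2 : ∑ l, ∑ j, (S j l * T j l) = ∑ l, ∑ j, -(S l j * T l j) := by
    apply Finset.sum_congr rfl; intro l _
    apply Finset.sum_congr rfl; intro j _
    rw [hS j l, hT j l]; ring
  have h3 : ∑ l : Fin q, ∑ j : Fin q, -(S l j * T l j) = - ∑ l, ∑ j, S l j * T l j := by
    simp [Finset.sum_neg_distrib]
  have h4 : (∑ l : Fin q, ∑ j : Fin q, S l j * T l j) = ∑ j, ∑ l, S j l * T j l := rfl
  rw [h1, h2, h3, h4] at *
  linarith [h1]

end Piola

section PiolaMain

variable {q : ℕ}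

/-- The Piola identity: the columns of the adjugate of the Jacobian are divergence free. -/
theorem piola {Φ : (Fin q → ℝ) → (Fin q → ℝ)}
    (hΦ : ContDiff ℝ ((⊤:ℕ∞) : WithTop ℕ∞) Φ) (m : Fin q) (x : Fin q → ℝ) :
    ∑ j, fderiv ℝ (fun y => (Jmat Φ y).adjugate j m) x (Pi.single j 1) = 0 := by
  classical
  set R : (Fin q → ℝ) → Fin q → (Fin q → ℝ) := fun y r l => fderiv ℝ Φ y (Pi.single l 1) r with hR
  have hadj : ∀ (y : Fin q → ℝ) (j : Fin q),
      (Jmat Φ y).adjugate j m = detCMM q (Function.update (R y) m (Pi.single j 1)) := by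
    intro y j
    rw [Matrix.adjugate_apply]
    rfl
  have hΦr : ∀ r : Fin q, ContDiff ℝ ((⊤:ℕ∞) : WithTop ℕ∞) (fun y => Φ y r) :=
    fun r => (contDiff_pi.1 hΦ) r
  have hfdr : ∀ (r : Fin q) (y : Fin q → ℝ), fderiv ℝ (fun z => Φ z r) y
      = (ContinuousLinearMap.proj r).comp (fderiv ℝ Φ y) := by
    intro r y
    have h1 : HasFDerivAt (fun z => Φ z r)
        (((ContinuousLinearMap.proj r : (Fin q → ℝ) →L[ℝ] ℝ)).comp (fderiv ℝ Φ y)) y := by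
      exact (ContinuousLinearMap.proj r : (Fin q → ℝ) →L[ℝ] ℝ).hasFDerivAt.comp y
        ((hΦ.differentiable one_le_infty y).hasFDerivAt)
    exact h1.fderiv
  set H : Fin q → Fin q → Fin q → ℝ :=
    fun r j l => (fderiv ℝ (fderiv ℝ (fun z => Φ z r)) x) (Pi.single j 1) (Pi.single l 1) with hH
  have hHsym : ∀ (r j l : Fin q), H r j l = H r l j := by
    intro r j l
    exact second_derivative_symmetric (f := fun z => Φ z r) (f' := fderiv ℝ (fun z => Φ z r))
      (fun y => (((hΦr r).differentiable one_le_infty) y).hasFDerivAt)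
      (((((hΦr r).fderiv_right infty_add_one_le).differentiable one_le_infty) x).hasFDerivAt)
      (Pi.single j 1) (Pi.single l 1)
  have hrowdiff : ∀ r : Fin q, DifferentiableAt ℝ (fun y => R y r) x :=
    fun r => ((Jmat_row_contDiff hΦ r).differentiable one_le_infty x)
  have hentrydiff : ∀ r l : Fin q, DifferentiableAt ℝ (fun y => R y r l) x :=
    fun r l => ((Jmat_entry_contDiff hΦ r l).differentiable one_le_infty x)
  have hrowd_apply : ∀ (r j : Fin q),
      (fderiv ℝ (fun y => R y r) x) (Pi.single j 1) = fun l => H r j l := by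
    intro r j
    rw [fderiv_pi (fun l => hentrydiff r l)]
    funext l
    rw [ContinuousLinearMap.pi_apply]
    have hfun : (fun y => R y r l) = fun y => (fderiv ℝ (fun z => Φ z r) y) (Pi.single l 1) := by
      funext y; rw [hfdr]; rfl
    rw [hfun]
    have hdc : DifferentiableAt ℝ (fun y => fderiv ℝ (fun z => Φ z r) y) x :=
      (((hΦr r).fderiv_right infty_add_one_le).differentiable one_le_infty) x
    rw [fderiv_clm_apply hdc (differentiableAt_const _)]
    simp [hH]
  have hkey : ∀ j : Fin q, fderiv ℝ (fun y => (Jmat Φ y).adjugate j m) x (Pi.single j 1)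
      = ∑ r, (if r = m then 0 else ∑ l, H r j l
          * detCMM q (Function.update (Function.update (R x) m (Pi.single j 1)) r
              (Pi.single l 1))) := by
    intro j
    have hfun : (fun y => (Jmat Φ y).adjugate j m)
        = fun y => detCMM q (fun r => Function.update (R y) m (Pi.single j 1) r) := by
      funext y; rw [hadj y j]
    rw [hfun]
    set g' : Fin q → ((Fin q → ℝ) →L[ℝ] (Fin q → ℝ)) :=
      fun r => if r = m then 0 else fderiv ℝ (fun y => R y r) x with hg'
    have hgd : ∀ r, HasFDerivAt (fun y => Function.update (R y) m (Pi.single j 1) r) (g' r) x := by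
      intro r
      by_cases hrm : r = m
      · subst hrm
        have h2 : (fun y => Function.update (R y) r (Pi.single j 1) r)
            = fun _ => (Pi.single j 1 : Fin q → ℝ) := by
          funext y; rw [Function.update_self]
        rw [h2, hg']
        simp only [if_pos rfl]
        exact hasFDerivAt_const _ _
      · have h2 : (fun y => Function.update (R y) m (Pi.single j 1) r) = fun y => R y r := by
          funext y; rw [Function.update_of_ne hrm]
        rw [h2, hg']
        simp only [if_neg hrm]
        exact (hrowdiff r).hasFDerivAt
    have hD := HasFDerivAt.multilinear_comp (detCMM q) hgd
    rw [hD.fderiv, ContinuousLinearMap.sum_apply]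
    apply Finset.sum_congr rfl
    intro r _
    rw [ContinuousLinearMap.comp_apply]
    by_cases hrm : r = m
    · rw [if_pos hrm, hg']
      simp only [if_pos hrm]
      rw [ContinuousLinearMap.zero_apply]
      exact map_zero _
    · rw [if_neg hrm]
      have h8 : g' r (Pi.single j 1) = fun l => H r j l := by
        rw [hg']; simp only [if_neg hrm]; exact hrowd_apply r j
      rw [h8]
      have h9 := clm_pi_apply
        ((detCMM q).toContinuousLinearMap
          (fun r' => Function.update (R x) m (Pi.single j 1) r') r)
        (fun l => H r j l)
      rw [h9]
      apply Finset.sum_congr rfl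
      intro l _
      rfl
  rw [Finset.sum_congr rfl (fun j _ => hkey j), Finset.sum_comm]
  apply Finset.sum_eq_zero
  intro r _
  by_cases hrm : r = m
  · simp [hrm]
  · simp only [if_neg hrm]
    apply sym_antisym_sum (fun j l => H r j l)
      (fun j l => detCMM q (Function.update (Function.update (R x) m (Pi.single j 1)) r
        (Pi.single l 1))) (hHsym r)
    intro j l
    have hmr : m ≠ r := fun hc => hrm hc.symm
    have hswap : ∀ a b : Fin q → ℝ,
        (Function.update (Function.update (R x) m a) r b) ∘ (Equiv.swap m r)
          = Function.update (Function.update (R x) m b) r a := by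
      intro a b; funext i
      simp only [Function.comp_apply, Function.update_apply, Equiv.swap_apply_def]
      split_ifs <;> simp_all
    have h10 := hswap (Pi.single l 1) (Pi.single j 1)
    have h12 := Matrix.det_permute (Equiv.swap m r)
      (Matrix.of (Function.update (Function.update (R x) m (Pi.single l 1)) r (Pi.single j 1)))
    rw [Equiv.Perm.sign_swap hmr] at h12
    have h13 : detCMM q (Function.update (Function.update (R x) m (Pi.single j 1)) r
          (Pi.single l 1))
        = ((Matrix.of (Function.update (Function.update (R x) m (Pi.single l 1)) r
            (Pi.single j 1))).submatrix (Equiv.swap m r) id).det := by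
      rw [← h10]; rfl
    rw [h13, h12]
    simp [detCMM_apply]

end PiolaMain

section Assembly

variable {q : ℕ}

theorem assembly (J Ad DV PA : Fin q → Fin q → ℝ) (P Dh : Fin q → ℝ) (dx hx : ℝ)
    (hmul : ∀ l m', ∑ j, J l j * Ad j m' = if l = m' then dx else 0)
    (hpiola : ∀ m', ∑ j, PA j m' = 0) :
    ∑ j, (hx * (∑ m', (Ad j m' * (∑ l, J l j * DV m' l) + P m' * PA j m'))
        + (∑ m', Ad j m' * P m') * (∑ l, J l j * Dh l))
      = dx * ∑ m', (hx * DV m' m' + P m' * Dh m') := by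
  classical
  have hA : ∑ j, ∑ m', Ad j m' * (∑ l, J l j * DV m' l) = ∑ m', dx * DV m' m' := by
    have h1 : ∀ j m', Ad j m' * (∑ l, J l j * DV m' l)
        = ∑ l, (J l j * Ad j m') * DV m' l := by
      intro j m'
      rw [Finset.mul_sum]
      exact Finset.sum_congr rfl fun l _ => by ring
    calc ∑ j, ∑ m', Ad j m' * (∑ l, J l j * DV m' l)
        = ∑ j, ∑ m', ∑ l, (J l j * Ad j m') * DV m' l :=
          Finset.sum_congr rfl fun j _ => Finset.sum_congr rfl fun m' _ => h1 j m'
      _ = ∑ m', ∑ j, ∑ l, (J l j * Ad j m') * DV m' l := Finset.sum_comm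
      _ = ∑ m', ∑ l, ∑ j, (J l j * Ad j m') * DV m' l :=
          Finset.sum_congr rfl fun m' _ => Finset.sum_comm
      _ = ∑ m', ∑ l, (if l = m' then dx else 0) * DV m' l := by
          apply Finset.sum_congr rfl; intro m' _
          apply Finset.sum_congr rfl; intro l _
          rw [← Finset.sum_mul, hmul l m']
      _ = ∑ m', dx * DV m' m' := by
          apply Finset.sum_congr rfl; intro m' _
          rw [Finset.sum_congr rfl (fun l (_ : l ∈ Finset.univ) => ite_mul (l = m') dx 0 (DV m' l))]
          simp
  have hB : ∑ j, ∑ m', P m' * PA j m' = 0 := by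
    rw [Finset.sum_comm]
    apply Finset.sum_eq_zero
    intro m' _
    rw [← Finset.mul_sum, hpiola m', mul_zero]
  have hC : ∑ j, (∑ m', Ad j m' * P m') * (∑ l, J l j * Dh l)
      = ∑ m', dx * (P m' * Dh m') := by
    have h1 : ∀ j, (∑ m', Ad j m' * P m') * (∑ l, J l j * Dh l)
        = ∑ m', ∑ l, (J l j * Ad j m') * (P m' * Dh l) := by
      intro j
      rw [Finset.sum_mul]
      apply Finset.sum_congr rfl; intro m' _
      rw [Finset.mul_sum]
      exact Finset.sum_congr rfl fun l _ => by ring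
    calc ∑ j, (∑ m', Ad j m' * P m') * (∑ l, J l j * Dh l)
        = ∑ j, ∑ m', ∑ l, (J l j * Ad j m') * (P m' * Dh l) :=
          Finset.sum_congr rfl fun j _ => h1 j
      _ = ∑ m', ∑ j, ∑ l, (J l j * Ad j m') * (P m' * Dh l) := Finset.sum_comm
      _ = ∑ m', ∑ l, ∑ j, (J l j * Ad j m') * (P m' * Dh l) :=
          Finset.sum_congr rfl fun m' _ => Finset.sum_comm
      _ = ∑ m', ∑ l, (if l = m' then dx else 0) * (P m' * Dh l) := by
          apply Finset.sum_congr rfl; intro m' _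
          apply Finset.sum_congr rfl; intro l _
          rw [← Finset.sum_mul, hmul l m']
      _ = ∑ m', dx * (P m' * Dh m') := by
          apply Finset.sum_congr rfl; intro m' _
          rw [Finset.sum_congr rfl
            (fun l (_ : l ∈ Finset.univ) => ite_mul (l = m') dx 0 (P m' * Dh l))]
          simp
  calc ∑ j, (hx * (∑ m', (Ad j m' * (∑ l, J l j * DV m' l) + P m' * PA j m'))
        + (∑ m', Ad j m' * P m') * (∑ l, J l j * Dh l))
      = ∑ j, (hx * (∑ m', Ad j m' * (∑ l, J l j * DV m' l)) + hx * (∑ m', P m' * PA j m')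
          + (∑ m', Ad j m' * P m') * (∑ l, J l j * Dh l)) := by
        apply Finset.sum_congr rfl; intro j _
        rw [Finset.sum_add_distrib, mul_add]
    _ = (∑ j, hx * (∑ m', Ad j m' * (∑ l, J l j * DV m' l)))
        + (∑ j, hx * (∑ m', P m' * PA j m'))
        + ∑ j, (∑ m', Ad j m' * P m') * (∑ l, J l j * Dh l) := by
        rw [Finset.sum_add_distrib, Finset.sum_add_distrib]
    _ = hx * (∑ m', dx * DV m' m') + 0 + ∑ m', dx * (P m' * Dh m') := by
        have hA' : (∑ j, hx * (∑ m', Ad j m' * (∑ l, J l j * DV m' l)))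
            = hx * (∑ m', dx * DV m' m') := by rw [← Finset.mul_sum, hA]
        have hB' : (∑ j, hx * (∑ m', P m' * PA j m')) = 0 := by
          rw [← Finset.mul_sum, hB, mul_zero]
        rw [hA', hB', hC]
    _ = dx * ∑ m', (hx * DV m' m' + P m' * Dh m') := by
        rw [add_zero, Finset.mul_sum, Finset.mul_sum, ← Finset.sum_add_distrib]
        apply Finset.sum_congr rfl; intro m' _
        ring

theorem adjugate_entry_contDiff {Φ : (Fin q → ℝ) → (Fin q → ℝ)}
    (hΦ : ContDiff ℝ ((⊤:ℕ∞) : WithTop ℕ∞) Φ) (j m : Fin q) :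
    ContDiff ℝ ((⊤:ℕ∞) : WithTop ℕ∞) (fun x => (Jmat Φ x).adjugate j m) := by
  classical
  have hfun : (fun x => (Jmat Φ x).adjugate j m)
      = fun x => detCMM q (Function.update (fun r => (Jmat Φ x r : Fin q → ℝ)) m
          (Pi.single j 1)) := by
    funext x; rw [Matrix.adjugate_apply]; rfl
  rw [hfun]
  apply (detCMM q).contDiff.comp
  apply contDiff_pi.2
  intro r
  by_cases hrm : r = m
  · subst hrm
    have : (fun x => Function.update (fun r' => (Jmat Φ x r' : Fin q → ℝ)) r (Pi.single j 1) r)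
        = fun _ => (Pi.single j 1 : Fin q → ℝ) := by
      funext x; rw [Function.update_self]
    rw [this]
    exact contDiff_const
  · have : (fun x => Function.update (fun r' => (Jmat Φ x r' : Fin q → ℝ)) m (Pi.single j 1) r)
        = fun x => (Jmat Φ x r : Fin q → ℝ) := by
      funext x; rw [Function.update_of_ne hrm]
    rw [this]
    exact Jmat_row_contDiff hΦ r

theorem Jmat_det_contDiff {Φ : (Fin q → ℝ) → (Fin q → ℝ)}
    (hΦ : ContDiff ℝ ((⊤:ℕ∞) : WithTop ℕ∞) Φ) :
    ContDiff ℝ ((⊤:ℕ∞) : WithTop ℕ∞) (fun x => (Jmat Φ x).det) := by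
  have hfun : (fun x => (Jmat Φ x).det)
      = fun x => detCMM q (fun r => (Jmat Φ x r : Fin q → ℝ)) := rfl
  rw [hfun]
  exact (detCMM q).contDiff.comp (contDiff_pi.2 fun r => Jmat_row_contDiff hΦ r)

end Assembly

section DiffeoDiv

variable {q : ℕ}

theorem diffeo_divergence
    (h k f : (Fin q → ℝ) → ℝ) (Φ Ψ : (Fin q → ℝ) → (Fin q → ℝ))
    (w : Fin q → ℕ) (δ : ℕ)
    (hk : ContDiff ℝ ((⊤:ℕ∞) : WithTop ℕ∞) k) (hk0 : ∀ x, k x ≠ 0)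
    (hΦ : ContDiff ℝ ((⊤:ℕ∞) : WithTop ℕ∞) Φ) (hΨ : ContDiff ℝ ((⊤:ℕ∞) : WithTop ℕ∞) Ψ)
    (hleft : Function.LeftInverse Ψ Φ)
    (hh : ContDiff ℝ ((⊤:ℕ∞) : WithTop ℕ∞) h)
    (hw : 1 ≤ ∑ j, w j)
    (hqh : ∀ t ∈ Set.Ioc (0:ℝ) 1, ∀ x : Fin q → ℝ, h (fun j => t ^ w j * x j) = t ^ δ * h x)
    (hf : ContDiff ℝ ((⊤:ℕ∞) : WithTop ℕ∞) f) :
    ∃ Y : (Fin q → ℝ) → (Fin q → ℝ), ContDiff ℝ ((⊤:ℕ∞) : WithTop ℕ∞) Y ∧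
      ∀ x, ∑ j, fderiv ℝ (fun y => (k y * h (Φ y)) * Y y j) x (Pi.single j 1)
        = (k x * h (Φ x)) * f x := by
  classical
  set d : (Fin q → ℝ) → ℝ := fun y => (Jmat Φ y).det with hddef
  have hd : ContDiff ℝ ((⊤:ℕ∞) : WithTop ℕ∞) d := Jmat_det_contDiff hΦ
  have hd0 : ∀ y, d y ≠ 0 := fun y => Jmat_det_ne_zero hΦ hΨ hleft y
  set v : (Fin q → ℝ) → ℝ := fun z => k (Ψ z) * f (Ψ z) / d (Ψ z) with hvdef
  have hv : ContDiff ℝ ((⊤:ℕ∞) : WithTop ℕ∞) v :=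
    ((hk.comp hΨ).mul (hf.comp hΨ)).div (hd.comp hΨ) (fun z => hd0 (Ψ z))
  obtain ⟨V, hV, hdiv⟩ := qh_divergence h hh w δ (le_trans hw (Nat.le_add_left _ _)) hqh v hv
  set S : (Fin q → ℝ) → Fin q → ℝ :=
    fun y j => ∑ m, (Jmat Φ y).adjugate j m * V (Φ y) m with hSdef
  have hadjc : ∀ j m : Fin q, ContDiff ℝ ((⊤:ℕ∞) : WithTop ℕ∞)
      (fun y => (Jmat Φ y).adjugate j m) := fun j m => adjugate_entry_contDiff hΦ j m
  have hVΦ : ∀ m : Fin q, ContDiff ℝ ((⊤:ℕ∞) : WithTop ℕ∞) fun y => V (Φ y) m :=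
    fun m => contDiff_pi.1 (hV.comp hΦ) m
  have hSc : ∀ j, ContDiff ℝ ((⊤:ℕ∞) : WithTop ℕ∞) fun y => S y j :=
    fun j => ContDiff.sum fun m _ => (hadjc j m).mul (hVΦ m)
  set Y : (Fin q → ℝ) → (Fin q → ℝ) := fun x j => S x j / k x with hYdef
  refine ⟨Y, ?_, ?_⟩
  · exact contDiff_pi.2 fun j => (hSc j).div hk hk0
  · intro x
    have hfun : ∀ j : Fin q, (fun y => (k y * h (Φ y)) * Y y j) = fun y => h (Φ y) * S y j := by
      intro j; funext y
      rw [hYdef]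
      have := hk0 y
      field_simp
    rw [Finset.sum_congr rfl fun j (_ : j ∈ Finset.univ) => by rw [hfun j]]
    -- expand each divergence term
    have hhc : ContDiff ℝ ((⊤:ℕ∞) : WithTop ℕ∞) fun y => h (Φ y) := hh.comp hΦ
    have hstep : ∀ j : Fin q, fderiv ℝ (fun y => h (Φ y) * S y j) x (Pi.single j 1)
        = h (Φ x) * (∑ m, ((Jmat Φ x).adjugate j m
              * (∑ l, Jmat Φ x l j * fderiv ℝ (fun z => V z m) (Φ x) (Pi.single l 1))
            + V (Φ x) m * fderiv ℝ (fun y => (Jmat Φ y).adjugate j m) x (Pi.single j 1)))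
          + (∑ m, (Jmat Φ x).adjugate j m * V (Φ x) m)
            * (∑ l, Jmat Φ x l j * fderiv ℝ h (Φ x) (Pi.single l 1)) := by
      intro j
      rw [fderiv_fun_mul ((hhc.differentiable one_le_infty) x) ((hSc j).differentiable one_le_infty x)]
      rw [ContinuousLinearMap.add_apply, ContinuousLinearMap.smul_apply,
        ContinuousLinearMap.smul_apply, smul_eq_mul, smul_eq_mul]
      congr 1
      · congr 1
        rw [show (fun y => S y j) = fun y => ∑ m, (Jmat Φ y).adjugate j m * V (Φ y) m from rfl]
        rw [fderiv_fun_sum (A := fun m y => (Jmat Φ y).adjugate j m * V (Φ y) m)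
          (fun m _ => ((hadjc j m).differentiable one_le_infty x).mul
          ((hVΦ m).differentiable one_le_infty x))]
        rw [ContinuousLinearMap.sum_apply]
        apply Finset.sum_congr rfl
        intro m _
        rw [fderiv_fun_mul ((hadjc j m).differentiable one_le_infty x)
          ((hVΦ m).differentiable one_le_infty x)]
        rw [ContinuousLinearMap.add_apply, ContinuousLinearMap.smul_apply,
          ContinuousLinearMap.smul_apply, smul_eq_mul, smul_eq_mul]
        congr 1
        congr 1
        exact pd_comp hΦ (contDiff_pi.1 hV m) x j
      · congr 1
        exact pd_comp hΦ hh x j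
    rw [Finset.sum_congr rfl fun j (_ : j ∈ Finset.univ) => hstep j]
    -- collapse with the Piola identity and the adjugate identity
    have hmul : ∀ l m' : Fin q,
        ∑ j, Jmat Φ x l j * (Jmat Φ x).adjugate j m' = if l = m' then d x else 0 := by
      intro l m'
      have h1 := congrArg (fun M : Matrix (Fin q) (Fin q) ℝ => M l m')
        (Matrix.mul_adjugate (Jmat Φ x))
      simp only [Matrix.mul_apply, Matrix.smul_apply, Matrix.one_apply, smul_eq_mul] at h1
      rw [h1]
      by_cases hlm : l = m' <;> simp [hlm, hddef]
    have hpiola : ∀ m' : Fin q,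
        ∑ j, fderiv ℝ (fun y => (Jmat Φ y).adjugate j m') x (Pi.single j 1) = 0 :=
      fun m' => piola hΦ m' x
    have hassem : ∑ j, (h (Φ x) * (∑ m, ((Jmat Φ x).adjugate j m
              * (∑ l, Jmat Φ x l j * fderiv ℝ (fun z => V z m) (Φ x) (Pi.single l 1))
            + V (Φ x) m * fderiv ℝ (fun y => (Jmat Φ y).adjugate j m) x (Pi.single j 1)))
          + (∑ m, (Jmat Φ x).adjugate j m * V (Φ x) m)
            * (∑ l, Jmat Φ x l j * fderiv ℝ h (Φ x) (Pi.single l 1)))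
        = d x * ∑ m, (h (Φ x) * fderiv ℝ (fun z => V z m) (Φ x) (Pi.single m 1)
            + V (Φ x) m * fderiv ℝ h (Φ x) (Pi.single m 1)) :=
      assembly (fun l j => Jmat Φ x l j) (fun j m => (Jmat Φ x).adjugate j m)
        (fun m l => fderiv ℝ (fun z => V z m) (Φ x) (Pi.single l 1))
        (fun j m => fderiv ℝ (fun y => (Jmat Φ y).adjugate j m) x (Pi.single j 1))
        (fun m => V (Φ x) m) (fun l => fderiv ℝ h (Φ x) (Pi.single l 1)) (d x) (h (Φ x))
        hmul hpiola
    rw [hassem]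
    -- use the quasihomogeneous divergence identity at Φ x
    have hsum2 : ∑ m, (h (Φ x) * fderiv ℝ (fun z => V z m) (Φ x) (Pi.single m 1)
        + V (Φ x) m * fderiv ℝ h (Φ x) (Pi.single m 1)) = h (Φ x) * v (Φ x) := by
      rw [← hdiv (Φ x)]
      apply Finset.sum_congr rfl
      intro m _
      rw [fderiv_fun_mul ((hh.differentiable one_le_infty) (Φ x))
        ((contDiff_pi.1 hV m).differentiable one_le_infty (Φ x))]
      rw [ContinuousLinearMap.add_apply, ContinuousLinearMap.smul_apply,
        ContinuousLinearMap.smul_apply, smul_eq_mul, smul_eq_mul]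
    rw [hsum2]
    have hvx : v (Φ x) = k x * f x / d x := by
      rw [hvdef]
      simp only []
      rw [hleft x]
    rw [hvx]
    have := hd0 x
    field_simp

end DiffeoDiv


open Finset in
/-- Proposition 4.4 (Poincare) in divergence form: if each `gᵢ` is a unit multiple of a
weakly quasihomogeneous function composed with a diffeomorphism, then every combination
`∑ gᵢ·fᵢ` with smooth `fᵢ` is a sum of divergences `∑ div(gᵢ·Y⁽ⁱ⁾)` for smooth vector
fields `Y⁽ⁱ⁾`. -/
theorem sum_wqh_divergence
    (q s : ℕ) (hq : 1 ≤ q)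
    (g k h : Fin s → ((Fin q → ℝ) → ℝ))
    (Φ Ψ : Fin s → ((Fin q → ℝ) → (Fin q → ℝ)))
    (w : Fin s → Fin q → ℕ) (δ : Fin s → ℕ)
    (hk : ∀ i, ContDiff ℝ (⊤ : ℕ∞) (k i)) (hk0 : ∀ i x, k i x ≠ 0)
    (hΦ : ∀ i, ContDiff ℝ (⊤ : ℕ∞) (Φ i)) (hΨ : ∀ i, ContDiff ℝ (⊤ : ℕ∞) (Ψ i))
    (hleft : ∀ i, Function.LeftInverse (Ψ i) (Φ i))
    (hright : ∀ i, Function.RightInverse (Ψ i) (Φ i))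
    (hh : ∀ i, ContDiff ℝ (⊤ : ℕ∞) (h i))
    (hw : ∀ i, 1 ≤ ∑ j, w i j)
    (hqh : ∀ i, ∀ t ∈ Set.Ioc (0:ℝ) 1, ∀ x : Fin q → ℝ,
      h i (fun j => t ^ (w i j) * x j) = t ^ (δ i) * h i x)
    (hg : ∀ i x, g i x = k i x * h i (Φ i x))
    (f : Fin s → ((Fin q → ℝ) → ℝ)) (hf : ∀ i, ContDiff ℝ (⊤ : ℕ∞) (f i)) :
    ∃ Y : Fin s → (Fin q → ℝ) → (Fin q → ℝ),
      (∀ i, ContDiff ℝ (⊤ : ℕ∞) (Y i)) ∧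
      ∀ x : Fin q → ℝ,
        ∑ i, g i x * f i x =
          ∑ i, ∑ j, fderiv ℝ (fun y => g i y * Y i y j) x (Pi.single j 1) := by
  have key : ∀ i : Fin s, ∃ Y : (Fin q → ℝ) → (Fin q → ℝ),
      ContDiff ℝ ((⊤:ℕ∞) : WithTop ℕ∞) Y ∧
      ∀ x, ∑ j, fderiv ℝ (fun y => (k i y * h i (Φ i y)) * Y y j) x (Pi.single j 1)
        = (k i x * h i (Φ i x)) * f i x :=
    fun i => diffeo_divergence (h i) (k i) (f i) (Φ i) (Ψ i) (w i) (δ i)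
      (hk i) (hk0 i) (hΦ i) (hΨ i) (hleft i) (hh i) (hw i) (hqh i) (hf i)
  choose Y hYs hYdiv using key
  refine ⟨Y, hYs, ?_⟩
  intro x
  have hfun : ∀ (i : Fin s) (j : Fin q), (fun y => g i y * Y i y j)
      = fun y => (k i y * h i (Φ i y)) * Y i y j := by
    intro i j; funext y; rw [hg i y]
  calc ∑ i, g i x * f i x = ∑ i, (k i x * h i (Φ i x)) * f i x :=
        Finset.sum_congr rfl fun i _ => by rw [hg i x]
    _ = ∑ i, ∑ j, fderiv ℝ (fun y => (k i y * h i (Φ i y)) * Y i y j) x (Pi.single j 1) :=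
        Finset.sum_congr rfl fun i _ => (hYdiv i x).symm
    _ = ∑ i, ∑ j, fderiv ℝ (fun y => g i y * Y i y j) x (Pi.single j 1) := by
        apply Finset.sum_congr rfl; intro i _
        apply Finset.sum_congr rfl; intro j _
        rw [hfun i j]
end
end

section
/- Let q ≥ 1 and let h₀, h₁ : ℝ^q → ℝ be C^∞ functions with h₀(x) > 0 and h₁(x) > 0 for all x ∈ ℝ^q. Suppose there exists a C^∞ compactly supported vector field X : ℝ^q → ℝ^q such that h₀(x) − h₁(x) = (div X)(x) for all x, where div X = Σ_{i=1}^q ∂X_i/∂x_i. Then there exists a C^∞ map Φ : ℝ × ℝ^q → ℝ^q such that: Φ(0,·) is the identity of ℝ^q; for every t ∈ [0,1] the map Φ_t := Φ(t,·) is a diffeomorphism of ℝ^q; and h₁(Φ(1,x))·det(DΦ₁(x)) = h₀(x) for all x ∈ ℝ^q, where DΦ₁(x) denotes the derivative of Φ₁ at x. (That is, Φ₁ pulls back the volume form h₁·dx₁∧…∧dx_q to h₀·dx₁∧…∧dx_q.) -/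
open intervalIntegral MeasureTheory
set_option maxHeartbeats 1000000
set_option synthInstance.maxHeartbeats 400000



variable {E : Type} [NormedAddCommGroup E] [NormedSpace ℝ E] [FiniteDimensional ℝ E]

section PI

variable {F : Type} [NormedAddCommGroup F] [NormedSpace ℝ F] [CompleteSpace F]

/-- partial derivative in the second (parameter) variable -/
noncomputable def pderiv2 (Ψ : ℝ × E → F) (z : ℝ × E) : E →L[ℝ] F :=
  (fderiv ℝ Ψ z).comp (ContinuousLinearMap.inr ℝ ℝ E)

omit [FiniteDimensional ℝ E] [CompleteSpace F] in
lemma contDiff_pderiv2 {Ψ : ℝ × E → F} (hΨ : ContDiff ℝ (⊤ : ℕ∞) Ψ) :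
    ContDiff ℝ (⊤ : ℕ∞) (pderiv2 Ψ) := by
  have h1 : ContDiff ℝ (⊤ : ℕ∞) (fderiv ℝ Ψ) := (contDiff_infty_iff_fderiv.mp hΨ).2
  exact h1.clm_comp contDiff_const

lemma hasFDerivAt_parametric_integral {Ψ : ℝ × E → F} (hΨ : ContDiff ℝ (⊤ : ℕ∞) Ψ)
    (x₀ : E) :
    HasFDerivAt (fun x => ∫ s in (0:ℝ)..1, Ψ (s, x))
      (∫ s in (0:ℝ)..1, pderiv2 Ψ (s, x₀)) x₀ := by
  have hc : Continuous Ψ := hΨ.continuous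
  have hd : Continuous (fderiv ℝ Ψ) := ((contDiff_infty_iff_fderiv.mp hΨ).2).continuous
  obtain ⟨C, hC⟩ : ∃ C, ∀ z ∈ (Set.Icc (0:ℝ) 1 ×ˢ Metric.closedBall x₀ 1),
      ‖fderiv ℝ Ψ z‖ ≤ C :=
    (isCompact_Icc.prod (isCompact_closedBall x₀ 1)).exists_bound_of_continuousOn
      hd.continuousOn
  have hinr : ‖(ContinuousLinearMap.inr ℝ ℝ E)‖ ≤ 1 := by
    refine ContinuousLinearMap.opNorm_le_bound _ zero_le_one ?_
    intro x; simp [Prod.norm_def]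
  apply intervalIntegral.hasFDerivAt_integral_of_dominated_of_fderiv_le
    (F' := fun x s => pderiv2 Ψ (s, x)) (bound := fun _ => max C 0 * 1) (Metric.ball_mem_nhds x₀ one_pos)
  · filter_upwards with x
    exact (hc.comp (continuous_id.prodMk continuous_const)).aestronglyMeasurable
  · exact (hc.comp (continuous_id.prodMk continuous_const)).intervalIntegrable 0 1
  · exact ((contDiff_pderiv2 hΨ).continuous.comp
      (continuous_id.prodMk continuous_const)).aestronglyMeasurable
  · filter_upwards with s hs x hx
    rw [Set.uIoc_of_le (by norm_num : (0:ℝ) ≤ 1)] at hs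
    have hz : ((s:ℝ), x) ∈ (Set.Icc (0:ℝ) 1 ×ˢ Metric.closedBall x₀ 1) :=
      ⟨⟨le_of_lt hs.1, hs.2⟩, Metric.ball_subset_closedBall hx⟩
    calc ‖pderiv2 Ψ (s, x)‖ ≤ ‖fderiv ℝ Ψ (s, x)‖ * ‖(ContinuousLinearMap.inr ℝ ℝ E)‖ :=
          ContinuousLinearMap.opNorm_comp_le _ _
      _ ≤ max C 0 * 1 :=
          mul_le_mul (le_max_of_le_left (hC _ hz)) hinr (norm_nonneg _) (le_max_right _ _)
  · exact intervalIntegrable_const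
  · filter_upwards with s hs x hx
    have h1 : HasFDerivAt Ψ (fderiv ℝ Ψ (s, x)) (s, x) :=
      (hΨ.differentiable (by simp) (s, x)).hasFDerivAt
    have h2 : HasFDerivAt (fun y : E => ((s:ℝ), y))
        (ContinuousLinearMap.inr ℝ ℝ E) x := hasFDerivAt_prodMk_right s x
    exact h1.comp x h2

lemma contDiff_parametric_integral_aux (n : ℕ) :
    ∀ {F : Type} [NormedAddCommGroup F] [NormedSpace ℝ F] [CompleteSpace F]
      (Ψ : ℝ × E → F), ContDiff ℝ (⊤ : ℕ∞) Ψ →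
      ContDiff ℝ (n : ℕ∞) (fun x => ∫ s in (0:ℝ)..1, Ψ (s, x)) := by
  induction n with
  | zero =>
    intro F _ _ _ Ψ hΨ
    have : Continuous (fun x => ∫ s in (0:ℝ)..1, Ψ (s, x)) := by
      rw [continuous_iff_continuousAt]
      exact fun x => (hasFDerivAt_parametric_integral hΨ x).continuousAt
    simpa using (contDiff_zero (𝕜 := ℝ)).mpr this
  | succ n ih =>
    intro F _ _ _ Ψ hΨ
    have hcast : (((n+1 : ℕ) : ℕ∞) : WithTop ℕ∞) = ((n : ℕ∞) : WithTop ℕ∞) + 1 := by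
      norm_cast
    rw [show ((((n:ℕ)+1 : ℕ) : ℕ∞) : WithTop ℕ∞) = ((n : ℕ∞) : WithTop ℕ∞) + 1 by norm_cast]
    rw [contDiff_succ_iff_fderiv]
    refine ⟨fun x => (hasFDerivAt_parametric_integral hΨ x).differentiableAt, ?_, ?_⟩
    · intro h; exact absurd h (by simp)
    · have heq : (fderiv ℝ (fun x => ∫ s in (0:ℝ)..1, Ψ (s, x)))
          = fun x => ∫ s in (0:ℝ)..1, pderiv2 Ψ (s, x) := by
        funext x
        exact (hasFDerivAt_parametric_integral hΨ x).fderiv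
      rw [heq]
      exact ih _ (contDiff_pderiv2 hΨ)

lemma contDiff_parametric_integral_s7 {Ψ : ℝ × E → F} (hΨ : ContDiff ℝ (⊤ : ℕ∞) Ψ) :
    ContDiff ℝ (⊤ : ℕ∞) (fun x => ∫ s in (0:ℝ)..1, Ψ (s, x)) := by
  rw [contDiff_infty]
  exact fun n => contDiff_parametric_integral_aux n Ψ hΨ

end PI

section Primitive

variable {g : ℝ × E → ℝ}

/-- the primitive of `g` in the first variable, as a function of `(y, p)` -/
noncomputable def prim (g : ℝ × E → ℝ) (z : ℝ × E) : ℝ :=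
  ∫ r in (0:ℝ)..z.1, g (r, z.2)

lemma prim_eq (z : ℝ × E) :
    prim g z = z.1 • ∫ s in (0:ℝ)..1, g (z.1 * s, z.2) := by
  simpa [prim] using
    (intervalIntegral.smul_integral_comp_mul_left (a := 0) (b := 1)
      (f := fun r => g (r, z.2)) z.1).symm

lemma contDiff_prim (hg : ContDiff ℝ (⊤ : ℕ∞) g) : ContDiff ℝ (⊤ : ℕ∞) (prim g) := by
  have h1 : ContDiff ℝ (⊤ : ℕ∞) (fun z : ℝ × E => ∫ s in (0:ℝ)..1, g (z.1 * s, z.2)) := by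
    have : ContDiff ℝ (⊤ : ℕ∞) (fun w : ℝ × (ℝ × E) => g (w.2.1 * w.1, w.2.2)) := by
      apply hg.comp
      exact ((contDiff_snd.fst).mul contDiff_fst).prodMk (contDiff_snd.snd)
    exact contDiff_parametric_integral_s7 this
  have he : prim g = fun z : ℝ × E => z.1 • ∫ s in (0:ℝ)..1, g (z.1 * s, z.2) :=
    funext prim_eq
  rw [he]
  exact contDiff_fst.smul h1

lemma hasDerivAt_prim (hg : ContDiff ℝ (⊤ : ℕ∞) g) (y : ℝ) (p : E) :
    HasDerivAt (fun y => prim g (y, p)) (g (y, p)) y := by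
  have hc : Continuous (fun r => g (r, p)) :=
    hg.continuous.comp (continuous_id.prodMk continuous_const)
  exact intervalIntegral.integral_hasDerivAt_right
    (hc.intervalIntegrable _ _) (hc.stronglyMeasurableAtFilter _ _) hc.continuousAt

end Primitive

variable {E : Type} [NormedAddCommGroup E] [NormedSpace ℝ E] [FiniteDimensional ℝ E]

section K

variable {A B a b : ℝ × E → ℝ} {R : ℝ}

/-- The key transport lemma: given two smooth functions `A`, `B` of `(y, p)`, strictly
increasing in `y` with positive derivatives `a`, `b`, that agree for `R ≤ |y|`, there is a
smooth function `ψ` with `B (ψ (x,p), p) = A (x,p)`, unique solution, equal to `id` outside. -/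
theorem lemK (hA : ContDiff ℝ (⊤ : ℕ∞) A) (hB : ContDiff ℝ (⊤ : ℕ∞) B)
    (ha : ∀ y p, HasDerivAt (fun y => A (y, p)) (a (y, p)) y)
    (hb : ∀ y p, HasDerivAt (fun y => B (y, p)) (b (y, p)) y)
    (hapos : ∀ z, 0 < a z) (hbpos : ∀ z, 0 < b z)
    (heq : ∀ y p, R ≤ |y| → A (y, p) = B (y, p)) :
    ∃ ψ : ℝ × E → ℝ,
      ContDiff ℝ (⊤ : ℕ∞) ψ ∧
      (∀ z : ℝ × E, B (ψ z, z.2) = A z) ∧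
      (∀ z : ℝ × E, ∀ y, B (y, z.2) = A z → y = ψ z) ∧
      (∀ z : ℝ × E, R ≤ |z.1| → ψ z = z.1) ∧
      (∀ z : ℝ × E, HasDerivAt (fun x => ψ (x, z.2)) (a z / b (ψ z, z.2)) z.1) := by
  have Bmono : ∀ p, StrictMono (fun y => B (y, p)) := fun p =>
    strictMono_of_deriv_pos (fun y => by
      rw [(hb y p).deriv]; exact hbpos _)
  have Amono : ∀ p, StrictMono (fun y => A (y, p)) := fun p =>
    strictMono_of_deriv_pos (fun y => by
      rw [(ha y p).deriv]; exact hapos _)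
  have hex : ∀ z : ℝ × E, ∃ y, B (y, z.2) = A z := by
    rintro ⟨x, p⟩
    by_cases hx : R ≤ |x|
    · exact ⟨x, (heq x p hx).symm⟩
    · push_neg at hx
      have hR0 : 0 < R := lt_of_le_of_lt (abs_nonneg x) hx
      have hxR : -R ≤ x ∧ x ≤ R := abs_le.mp hx.le
      have hmem : A (x, p) ∈ Set.Icc (B (-R, p)) (B (R, p)) := by
        constructor
        · rw [← heq (-R) p (by rw [abs_neg, abs_of_pos hR0])]
          exact (Amono p).monotone hxR.1
        · rw [← heq R p (by rw [abs_of_pos hR0])]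
          exact (Amono p).monotone hxR.2
      have hsub := intermediate_value_Icc (f := fun y => B (y, p))
        (by linarith : (-R : ℝ) ≤ R)
        (hB.continuous.comp (continuous_id.prodMk continuous_const)).continuousOn
      obtain ⟨y, _, hy⟩ := hsub hmem
      exact ⟨y, hy⟩
  choose ψ hψ using hex
  have uniq : ∀ z : ℝ × E, ∀ y, B (y, z.2) = A z → y = ψ z := fun z y h =>
    (Bmono z.2).injective (h.trans (hψ z).symm)
  have hout : ∀ z : ℝ × E, R ≤ |z.1| → ψ z = z.1 := fun z hz =>
    (uniq z z.1 (heq z.1 z.2 hz).symm).symm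
  -- partial derivative of B in the first variable, as value of the full derivative
  have hBf : ∀ z : ℝ × E, HasFDerivAt B (fderiv ℝ B z) z := fun z =>
    (hB.differentiable (by simp) z).hasFDerivAt
  have hpart : ∀ z : ℝ × E, fderiv ℝ B z (1, 0) = b z := by
    rintro ⟨y, p⟩
    have h1 : HasDerivAt (fun y : ℝ => (y, p) : ℝ → ℝ × E) (1, 0) y :=
      (hasDerivAt_id y).prodMk (hasDerivAt_const y p)
    have h2 : HasDerivAt (fun y : ℝ => B (y, p)) (fderiv ℝ B (y, p) (1, 0)) y :=
      (hBf (y, p)).comp_hasDerivAt y h1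
    exact h2.unique (hb y p)
  -- smoothness of ψ
  have hsmooth : ContDiff ℝ (⊤ : ℕ∞) ψ := by
    rw [contDiff_iff_contDiffAt]
    intro z₀
    obtain ⟨x₀, p₀⟩ := z₀
    set y₀ : ℝ := ψ (x₀, p₀) with hy₀
    set w₀ : ℝ × E := (y₀, p₀) with hw₀
    set DB : ℝ × E →L[ℝ] ℝ := fderiv ℝ B w₀ with hDB
    have hb₀ : b w₀ ≠ 0 := ne_of_gt (hbpos w₀)
    -- the continuous linear equivalence
    set L : ℝ × E →L[ℝ] ℝ × E := DB.prod (ContinuousLinearMap.snd ℝ ℝ E) with hL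
    set M : ℝ × E →L[ℝ] ℝ × E :=
      ((b w₀)⁻¹ • (ContinuousLinearMap.fst ℝ ℝ E -
        (DB.comp (ContinuousLinearMap.inr ℝ ℝ E)).comp
          (ContinuousLinearMap.snd ℝ ℝ E))).prod (ContinuousLinearMap.snd ℝ ℝ E) with hM
    have hDBsplit : ∀ (y : ℝ) (e : E), DB (y, e) = y * b w₀ + DB (0, e) := by
      intro y e
      have h0 : (y, e) = y • ((1 : ℝ), (0 : E)) + ((0 : ℝ), e) := by
        simp [Prod.ext_iff]
      have h2 : DB (y • ((1 : ℝ), (0 : E))) = y * b w₀ := by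
        rw [DB.map_smul, smul_eq_mul]
        have := hpart w₀
        rw [show (fderiv ℝ B w₀) ((1:ℝ), (0:E)) = b w₀ from this]
      rw [h0, map_add, h2]
    have hMapp : ∀ (v : ℝ) (w : E), M (v, w) = ((b w₀)⁻¹ * (v - DB (0, w)), w) := by
      intro v w
      simp only [hM, ContinuousLinearMap.prod_apply, ContinuousLinearMap.smul_apply,
        ContinuousLinearMap.sub_apply, ContinuousLinearMap.coe_fst',
        ContinuousLinearMap.coe_comp', Function.comp_apply,
        ContinuousLinearMap.coe_snd', ContinuousLinearMap.inr_apply, smul_eq_mul]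
    have hLapp : ∀ (y : ℝ) (e : E), L (y, e) = (y * b w₀ + DB (0, e), e) := by
      intro y e
      simp only [hL, ContinuousLinearMap.prod_apply, ContinuousLinearMap.coe_snd']
      rw [hDBsplit]
    have hML : Function.LeftInverse M L := by
      rintro ⟨y, e⟩
      rw [hLapp, hMapp]
      refine Prod.ext ?_ rfl
      field_simp
      ring
    have hLM : Function.RightInverse M L := by
      rintro ⟨v, w⟩
      rw [hMapp, hLapp]
      refine Prod.ext ?_ rfl
      field_simp
      ring
    set Λ : (ℝ × E) ≃L[ℝ] (ℝ × E) := ContinuousLinearEquiv.equivOfInverse L M hML hLM with hΛ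
    set Θ : ℝ × E → ℝ × E := fun z => (B z, z.2) with hΘ
    have hΘc : ContDiffAt ℝ (⊤ : ℕ∞) Θ w₀ := (hB.prodMk contDiff_snd).contDiffAt
    have hΘf : HasFDerivAt Θ (Λ : ℝ × E →L[ℝ] ℝ × E) w₀ := by
      have h1 : HasFDerivAt B DB w₀ := hBf w₀
      have h2 : HasFDerivAt (fun z : ℝ × E => z.2) (ContinuousLinearMap.snd ℝ ℝ E) w₀ :=
        (ContinuousLinearMap.snd ℝ ℝ E).hasFDerivAt
      have := h1.prodMk h2
      exact this
    have hone : ((⊤ : ℕ∞) : WithTop ℕ∞) ≠ 0 := by simp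
    set linv := hΘc.localInverse hΘf hone with hlinv
    have hlinv_smooth : ContDiffAt ℝ (⊤ : ℕ∞) linv (Θ w₀) := hΘc.to_localInverse hΘf hone
    have hrinv : ∀ᶠ w in nhds (Θ w₀), Θ (linv w) = w :=
      (hΘc.hasStrictFDerivAt' hΘf hone).eventually_right_inverse
    -- the function (x,p) ↦ (A (x,p), p) is continuous and maps z₀ to Θ w₀
    have hAc : Continuous (fun z : ℝ × E => (A z, z.2)) :=
      (hA.continuous.prodMk continuous_snd)
    have hval : (A (x₀, p₀), p₀) = Θ w₀ := by
      simp only [hΘ]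
      exact Prod.ext (hψ (x₀, p₀)).symm rfl
    have hev : ∀ᶠ z : ℝ × E in nhds (x₀, p₀), ψ z = (linv (A z, z.2)).1 := by
      have htend : Filter.Tendsto (fun z : ℝ × E => (A z, z.2)) (nhds (x₀, p₀))
          (nhds (Θ w₀)) := by
        rw [← hval]
        exact (hAc.tendsto _)
      filter_upwards [htend.eventually hrinv] with z hz
      -- hz : Θ (linv (A z, z.2)) = (A z, z.2)
      have h2 : (linv (A z, z.2)).2 = z.2 := by
        have := congrArg Prod.snd hz
        simpa [hΘ] using this
      have h1 : B (linv (A z, z.2)) = A z := by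
        have := congrArg Prod.fst hz
        simpa [hΘ] using this
      have h1' : B ((linv (A z, z.2)).1, z.2) = A z := by
        rw [show ((linv (A z, z.2)).1, z.2) = linv (A z, z.2) from Prod.ext rfl h2.symm]
        exact h1
      exact (uniq z _ h1').symm
    have hform : ContDiffAt ℝ (⊤ : ℕ∞) (fun z : ℝ × E => (linv (A z, z.2)).1) (x₀, p₀) := by
      have hAz : ContDiffAt ℝ (⊤ : ℕ∞) (fun z : ℝ × E => (A z, z.2)) (x₀, p₀) :=
        (hA.prodMk contDiff_snd).contDiffAt
      have hlinv2 : ContDiffAt ℝ (⊤ : ℕ∞) linv (A (x₀, p₀), p₀) := by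
        rw [hval]; exact hlinv_smooth
      have hcomp : ContDiffAt ℝ (⊤ : ℕ∞) (fun z : ℝ × E => linv (A z, z.2)) (x₀, p₀) :=
        ContDiffAt.comp (x₀, p₀) hlinv2 hAz
      exact ContDiff.comp_contDiffAt (x₀, p₀) contDiff_fst hcomp
    exact hform.congr_of_eventuallyEq hev
  -- derivative identity
  have hder : ∀ z : ℝ × E, HasDerivAt (fun x => ψ (x, z.2)) (a z / b (ψ z, z.2)) z.1 := by
    rintro ⟨x₀, p₀⟩
    -- ψ is differentiable in x; differentiate the identity B (ψ (x,p), p) = A (x,p)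
    have hψd : HasDerivAt (fun x => ψ (x, p₀))
        (deriv (fun x => ψ (x, p₀)) x₀) x₀ := by
      have : Differentiable ℝ (fun x => ψ (x, p₀)) :=
        (hsmooth.comp (contDiff_id.prodMk contDiff_const)).differentiable
          (by simp)
      exact (this x₀).hasDerivAt
    set d := deriv (fun x => ψ (x, p₀)) x₀ with hd
    have hcomp : HasDerivAt (fun x => B (ψ (x, p₀), p₀))
        (b (ψ (x₀, p₀), p₀) * d) x₀ := by
      have h1 : HasDerivAt (fun y => B (y, p₀)) (b (ψ (x₀, p₀), p₀)) (ψ (x₀, p₀)) :=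
        hb _ _
      exact h1.comp x₀ hψd
    have heqfun : (fun x => B (ψ (x, p₀), p₀)) = fun x => A (x, p₀) := by
      funext x
      exact hψ (x, p₀)
    rw [heqfun] at hcomp
    have : b (ψ (x₀, p₀), p₀) * d = a (x₀, p₀) := hcomp.unique (ha x₀ p₀)
    have hd' : d = a (x₀, p₀) / b (ψ (x₀, p₀), p₀) := by
      field_simp [ne_of_gt (hbpos (ψ (x₀, p₀), p₀))]
      linarith [this]
    rw [← hd']
    exact hψd
  exact ⟨ψ, hsmooth, hψ, uniq, hout, hder⟩

end K

variable {q : ℕ}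

lemma update_eq_affine (x : Fin q → ℝ) (i : Fin q) (v : ℝ) :
    Function.update x i v = x + (v - x i) • (Pi.single i 1 : Fin q → ℝ) := by
  funext j
  by_cases h : j = i
  · subst h; simp
  · simp [Function.update_apply, h, Pi.single_apply, Ne.symm h]

lemma contDiff_update' (i : Fin q) {W : Type} [NormedAddCommGroup W] [NormedSpace ℝ W]
    {f : W → Fin q → ℝ} {v : W → ℝ} (hf : ContDiff ℝ (⊤ : ℕ∞) f)
    (hv : ContDiff ℝ (⊤ : ℕ∞) v) :
    ContDiff ℝ (⊤ : ℕ∞) (fun w => Function.update (f w) i (v w)) := by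
  rw [contDiff_pi]
  intro j
  by_cases h : j = i
  · subst h
    simpa [Function.update_apply] using hv
  · have : (fun w => Function.update (f w) i (v w) j) = fun w => f w j := by
      funext w; simp [Function.update_apply, h]
    rw [this]
    exact (contDiff_apply ℝ ℝ j).comp hf

lemma det_id_add_smulRight (i : Fin q) (w : (Fin q → ℝ) →L[ℝ] ℝ) :
    LinearMap.det ((ContinuousLinearMap.id ℝ (Fin q → ℝ)
      + w.smulRight (Pi.single i (1:ℝ))).toLinearMap) = 1 + w (Pi.single i 1) := by
  set L := (ContinuousLinearMap.id ℝ (Fin q → ℝ) + w.smulRight (Pi.single i (1:ℝ))).toLinearMap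
  rw [← LinearMap.det_toMatrix (Pi.basisFun ℝ (Fin q)) L]
  have hmat : LinearMap.toMatrix (Pi.basisFun ℝ (Fin q)) (Pi.basisFun ℝ (Fin q)) L
      = 1 + Matrix.replicateCol (Fin 1) (Pi.single i (1:ℝ)) *
          Matrix.replicateRow (Fin 1) (fun k => w (Pi.single k 1)) := by
    ext j k
    rw [LinearMap.toMatrix_apply]
    simp only [Pi.basisFun_apply, Pi.basisFun_repr, L, ContinuousLinearMap.coe_coe,
      ContinuousLinearMap.add_apply, ContinuousLinearMap.coe_id', id_eq,
      ContinuousLinearMap.smulRight_apply, Pi.add_apply, Pi.smul_apply, smul_eq_mul,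
      Matrix.add_apply, Matrix.one_apply, Matrix.mul_apply, Matrix.replicateCol_apply,
      Matrix.replicateRow_apply, Finset.sum_const, Finset.card_univ, Fintype.card_fin, one_smul]
    rw [Pi.single_apply, Pi.single_apply]
    by_cases hjk : j = k <;> by_cases hji : j = i <;> simp [hjk, hji] <;> ring
  erw [hmat, Matrix.det_one_add_replicateCol_mul_replicateRow]
  have : dotProduct (fun k => w (Pi.single k 1)) (Pi.single i (1:ℝ))
      = w (Pi.single i 1) := by
    rw [dotProduct]
    rw [Finset.sum_eq_single i]
    · simp
    · intro k _ hk
      simp [Pi.single_apply, Ne.symm hk, hk]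
    · simp
  rw [this]

section Elementary

variable {q : ℕ}

lemma elementary (i : Fin q) (g g' u : ((Fin q → ℝ) × ℝ) → ℝ) (R : ℝ)
    (hg : ContDiff ℝ (⊤ : ℕ∞) g) (hg' : ContDiff ℝ (⊤ : ℕ∞) g')
    (hu : ContDiff ℝ (⊤ : ℕ∞) u)
    (hgpos : ∀ z, 0 < g z) (hg'pos : ∀ z, 0 < g' z)
    (hder : ∀ (x : Fin q → ℝ) (t r : ℝ),
      HasDerivAt (fun s => u (Function.update x i s, t))
        (g (Function.update x i r, t) - g' (Function.update x i r, t)) r)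
    (husupp : ∀ x t, R ≤ |x i| → u (x, t) = 0) :
    ∃ e e' : ((Fin q → ℝ) × ℝ) → (Fin q → ℝ),
      ContDiff ℝ (⊤ : ℕ∞) e ∧ ContDiff ℝ (⊤ : ℕ∞) e' ∧
      (∀ x t, e' (e (x, t), t) = x) ∧ (∀ x t, e (e' (x, t), t) = x) ∧
      (∀ x t, (∀ x', u (x', t) = 0) → e (x, t) = x) ∧
      (∀ x t, g' (e (x, t), t) *
        LinearMap.det ((fderiv ℝ (fun y => e (y, t)) x).toLinearMap) = g (x, t)) := by
  classical
  -- inner composed functions of (y, (x,t))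
  have hupdc : ContDiff ℝ (⊤ : ℕ∞)
      (fun w : ℝ × ((Fin q → ℝ) × ℝ) => (Function.update w.2.1 i w.1, w.2.2)) :=
    (contDiff_update' i (contDiff_snd.fst) contDiff_fst).prodMk contDiff_snd.snd
  set gin : ℝ × ((Fin q → ℝ) × ℝ) → ℝ := fun w => g (Function.update w.2.1 i w.1, w.2.2) with hgin_def
  set g'in : ℝ × ((Fin q → ℝ) × ℝ) → ℝ := fun w => g' (Function.update w.2.1 i w.1, w.2.2) with hg'in_def
  set uin : ℝ × ((Fin q → ℝ) × ℝ) → ℝ := fun w => u (Function.update w.2.1 i w.1, w.2.2) with huin_def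
  have hginc : ContDiff ℝ (⊤ : ℕ∞) gin := by rw [hgin_def]; exact hg.comp hupdc
  have hg'inc : ContDiff ℝ (⊤ : ℕ∞) g'in := by rw [hg'in_def]; exact hg'.comp hupdc
  have huinc : ContDiff ℝ (⊤ : ℕ∞) uin := by rw [huin_def]; exact hu.comp hupdc
  set A : ℝ × ((Fin q → ℝ) × ℝ) → ℝ := prim gin with hA_def
  set B : ℝ × ((Fin q → ℝ) × ℝ) → ℝ := fun w => A w - uin w with hB_def
  have hA : ContDiff ℝ (⊤ : ℕ∞) A := contDiff_prim hginc
  have hB : ContDiff ℝ (⊤ : ℕ∞) B := hA.sub huinc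
  have ha : ∀ y p, HasDerivAt (fun y => A (y, p)) (gin (y, p)) y := fun y p =>
    hasDerivAt_prim hginc y p
  have hbder : ∀ (y : ℝ) (p : (Fin q → ℝ) × ℝ), HasDerivAt (fun y => B (y, p)) (g'in (y, p)) y := by
    intro y p
    have h1 : HasDerivAt (fun y => uin (y, p)) (gin (y, p) - g'in (y, p)) y := by
      simp only [huin_def, hgin_def, hg'in_def]
      exact hder p.1 p.2 y
    have h2 := (ha y p).sub h1
    have : gin (y, p) - (gin (y, p) - g'in (y, p)) = g'in (y, p) := by ring
    rw [this] at h2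
    exact h2
  have hginpos : ∀ w, 0 < gin w := by intro w; rw [hgin_def]; exact hgpos _
  have hg'inpos : ∀ w, 0 < g'in w := by intro w; rw [hg'in_def]; exact hg'pos _
  have heqAB : ∀ y p, R ≤ |y| → A (y, p) = B (y, p) := by
    intro y p hy
    have : uin (y, p) = 0 := by
      rw [huin_def]
      apply husupp
      simpa using hy
    simp [hB_def, this]
  have heqBA : ∀ y p, R ≤ |y| → B (y, p) = A (y, p) := fun y p hy => (heqAB y p hy).symm
  obtain ⟨ψ, hψs, hψ, ψuniq, -, hψder⟩ := lemK hA hB ha hbder hginpos hg'inpos heqAB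
  obtain ⟨χ, hχs, hχ, χuniq, -, -⟩ := lemK hB hA hbder ha hg'inpos hginpos heqBA
  set par : (Fin q → ℝ) × ℝ → (Fin q → ℝ) × ℝ := fun z => (Function.update z.1 i 0, z.2) with hpar_def
  set e : (Fin q → ℝ) × ℝ → (Fin q → ℝ) := fun z => Function.update z.1 i (ψ (z.1 i, par z)) with he_def
  set e' : (Fin q → ℝ) × ℝ → (Fin q → ℝ) := fun z => Function.update z.1 i (χ (z.1 i, par z)) with he'_def
  have hparc : ContDiff ℝ (⊤ : ℕ∞) par :=
    (contDiff_update' i contDiff_fst contDiff_const).prodMk contDiff_snd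
  have hargc : ContDiff ℝ (⊤ : ℕ∞) (fun z : (Fin q → ℝ) × ℝ => ((z.1 i : ℝ), par z)) :=
    ((contDiff_apply ℝ ℝ i).comp contDiff_fst).prodMk hparc
  have hec : ContDiff ℝ (⊤ : ℕ∞) e :=
    contDiff_update' i contDiff_fst (hψs.comp hargc)
  have he'c : ContDiff ℝ (⊤ : ℕ∞) e' :=
    contDiff_update' i contDiff_fst (hχs.comp hargc)
  -- basic update facts
  have hpar_e : ∀ x t, par (e (x, t), t) = par (x, t) := by
    intro x t
    simp only [hpar_def, he_def]
    rw [Function.update_idem]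
  have key : ∀ (x : (Fin q → ℝ)) (t : ℝ),
      B (ψ (x i, par (x, t)), par (x, t)) = A (x i, par (x, t)) := fun x t =>
    hψ ((x i : ℝ), par (x, t))
  -- left inverse
  have hlinv : ∀ x t, e' (e (x, t), t) = x := by
    intro x t
    simp only [he'_def, he_def]
    rw [Function.update_idem, Function.update_self, hpar_e (x) t]
    have : χ (ψ (x i, par (x, t)), par (x, t)) = x i := by
      symm
      apply χuniq (ψ ((x i : ℝ), par (x, t)), par (x, t)) (x i)
      exact (key x t).symm
    rw [this, Function.update_eq_self]
  have hpar_e' : ∀ x t, par (e' (x, t), t) = par (x, t) := by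
    intro x t
    simp only [hpar_def, he'_def]
    rw [Function.update_idem]
  have hrinv : ∀ x t, e (e' (x, t), t) = x := by
    intro x t
    simp only [he_def, he'_def]
    rw [Function.update_idem, Function.update_self]
    have hp2 : par (e' (x, t), t) = par (x, t) := hpar_e' x t
    simp only [he'_def] at hp2
    rw [hp2]
    have : ψ (χ ((x i : ℝ), par (x, t)), par (x, t)) = x i := by
      symm
      apply ψuniq (χ ((x i : ℝ), par (x, t)), par (x, t)) (x i)
      exact (hχ ((x i : ℝ), par (x, t))).symm
    rw [this, Function.update_eq_self]
  have hid : ∀ x t, (∀ x', u (x', t) = 0) → e (x, t) = x := by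
    intro x t hu0
    simp only [he_def]
    have : ψ ((x i : ℝ), par (x, t)) = x i := by
      symm
      apply ψuniq ((x i : ℝ), par (x, t)) (x i)
      have : uin ((x i : ℝ), par (x, t)) = 0 := by
        rw [huin_def]; exact hu0 _
      simp [hB_def, this]
    rw [this, Function.update_eq_self]
  have hdet : ∀ x t, g' (e (x, t), t) *
      LinearMap.det ((fderiv ℝ (fun y => e (y, t)) x).toLinearMap) = g (x, t) := by
    intro x t
    set p : (Fin q → ℝ) × ℝ := par (x, t) with hp_def
    set φ : (Fin q → ℝ) → ℝ := fun y => ψ ((y i : ℝ), par (y, t)) with hφ_def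
    have hφc : ContDiff ℝ (⊤ : ℕ∞) φ := by
      rw [hφ_def, hpar_def]
      exact hψs.comp (((contDiff_apply ℝ ℝ i)).prodMk
        ((contDiff_update' i contDiff_id contDiff_const).prodMk contDiff_const))
    have hφd : HasFDerivAt φ (fderiv ℝ φ x) x :=
      (hφc.differentiable (by simp) x).hasFDerivAt
    set w : (Fin q → ℝ) →L[ℝ] ℝ :=
      fderiv ℝ φ x - ContinuousLinearMap.proj i with hw_def
    set L : (Fin q → ℝ) →L[ℝ] (Fin q → ℝ) :=
      ContinuousLinearMap.id ℝ (Fin q → ℝ) + w.smulRight (Pi.single i (1:ℝ)) with hL_def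
    have heqe : (fun y => e (y, t))
        = fun y => y + (φ y - y i) • (Pi.single i 1 : Fin q → ℝ) := by
      funext y
      simp only [he_def, hφ_def]
      exact update_eq_affine _ _ _
    have hproj : HasFDerivAt (fun y : Fin q → ℝ => y i)
        (ContinuousLinearMap.proj i (R := ℝ) (φ := fun _ : Fin q => ℝ)) x := by
      have h := (ContinuousLinearMap.proj (R := ℝ) (φ := fun _ : Fin q => ℝ) i).hasFDerivAt
        (x := x)
      exact h.congr_of_eventuallyEq (by filter_upwards with y; simp)
    have hLd : HasFDerivAt (fun y => e (y, t)) L x := by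
      rw [heqe, hL_def, hw_def]
      exact (hasFDerivAt_id x).add ((hφd.sub hproj).smul_const _)
    have hfd : fderiv ℝ (fun y => e (y, t)) x = L := hLd.fderiv
    -- the partial derivative of φ in direction i
    have hval : fderiv ℝ φ x (Pi.single i 1)
        = gin ((x i : ℝ), p) / g'in (ψ ((x i : ℝ), p), p) := by
      -- chain rule through G y = (y i, par (y, t))
      set U : (Fin q → ℝ) →L[ℝ] (Fin q → ℝ) :=
        ContinuousLinearMap.id ℝ (Fin q → ℝ) +
          ((0 : (Fin q → ℝ) →L[ℝ] ℝ) - ContinuousLinearMap.proj i).smulRight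
            (Pi.single i (1:ℝ)) with hU_def
      have hupdaff : (fun y : Fin q → ℝ => Function.update y i (0:ℝ))
          = fun y => y + ((0:ℝ) - y i) • (Pi.single i 1 : Fin q → ℝ) := by
        funext y
        exact update_eq_affine _ _ _
      have hUd : HasFDerivAt (fun y : Fin q → ℝ => Function.update y i (0:ℝ)) U x := by
        rw [hupdaff, hU_def]
        exact (hasFDerivAt_id x).add
          ((((hasFDerivAt_const (0:ℝ) x).sub hproj)).smul_const _)
      set DG : (Fin q → ℝ) →L[ℝ] ℝ × ((Fin q → ℝ) × ℝ) :=
        (ContinuousLinearMap.proj i).prod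
          (U.prod (0 : (Fin q → ℝ) →L[ℝ] ℝ)) with hDG_def
      have hGd : HasFDerivAt (fun y : Fin q → ℝ => ((y i : ℝ), par (y, t))) DG x := by
        rw [hDG_def]
        apply HasFDerivAt.prodMk hproj
        simp only [hpar_def]
        exact hUd.prodMk (hasFDerivAt_const t x)
      set Dψ := fderiv ℝ ψ ((x i : ℝ), p) with hDψ_def
      have hψd : HasFDerivAt ψ Dψ ((x i : ℝ), p) :=
        (hψs.differentiable (by simp) _).hasFDerivAt
      have hcomp : HasFDerivAt φ (Dψ.comp DG) x := by
        rw [hφ_def]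
        have : ((x i : ℝ), p) = ((fun y : Fin q → ℝ => ((y i : ℝ), par (y, t))) x) := by
          rw [hp_def]
        rw [this] at hψd
        exact hψd.comp x hGd
      have hfφ : fderiv ℝ φ x = Dψ.comp DG := hcomp.fderiv
      have hDGval : DG (Pi.single i 1) = ((1:ℝ), ((0 : Fin q → ℝ), (0:ℝ))) := by
        rw [hDG_def]
        refine Prod.ext ?_ (Prod.ext ?_ ?_)
        · simp
        · simp only [ContinuousLinearMap.prod_apply, hU_def,
            ContinuousLinearMap.add_apply, ContinuousLinearMap.coe_id', id_eq,
            ContinuousLinearMap.smulRight_apply, ContinuousLinearMap.sub_apply,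
            ContinuousLinearMap.zero_apply, ContinuousLinearMap.proj_apply]
          rw [Pi.single_eq_same]
          funext j
          simp
        · simp
      have hpartial : HasDerivAt (fun r => ψ (r, p)) (Dψ ((1:ℝ), ((0 : Fin q → ℝ), (0:ℝ))))
          (x i) := by
        have h2 : HasDerivAt (fun r : ℝ => (r, p)) ((1:ℝ), ((0 : Fin q → ℝ), (0:ℝ)))
            (x i) := by
          have := (hasDerivAt_id (x i)).prodMk (hasDerivAt_const (x i) p)
          exact this
        exact hψd.comp_hasDerivAt _ h2
      have huniq := hpartial.unique (hψder ((x i : ℝ), p))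
      rw [hfφ, ContinuousLinearMap.comp_apply, hDGval, huniq]
    -- put everything together
    have hdetL : LinearMap.det (L.toLinearMap)
        = gin ((x i : ℝ), p) / g'in (ψ ((x i : ℝ), p), p) := by
      rw [hL_def, det_id_add_smulRight i w, hw_def]
      simp only [ContinuousLinearMap.sub_apply, ContinuousLinearMap.proj_apply]
      rw [hval, Pi.single_eq_same]
      ring
    have hge : g' (e (x, t), t) = g'in (ψ ((x i : ℝ), p), p) := by
      simp only [he_def, hg'in_def, hp_def, hpar_def]
      rw [Function.update_idem]
    rw [hfd, hdetL, hge]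
    rw [div_eq_mul_inv, ← mul_assoc, mul_comm (g'in _) (gin _), mul_assoc,
      mul_inv_cancel₀ (ne_of_gt (hg'inpos _)), mul_one]
    rw [hgin_def]
    simp only [hp_def, hpar_def]
    rw [Function.update_idem, Function.update_eq_self]
  exact ⟨e, e', hec, he'c, hlinv, hrinv, hid, hdet⟩

end Elementary

section NatAux

lemma nat_succ_div_mod {q m : ℕ} (hq : 0 < q) :
    (m % q + 1 = q → (m+1)/q = m/q + 1 ∧ (m+1)%q = 0) ∧
    (m % q + 1 ≠ q → (m+1)/q = m/q ∧ (m+1)%q = m%q + 1) := by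
  have hdm := Nat.div_add_mod m q
  have hlt : m % q < q := Nat.mod_lt m hq
  constructor
  · intro hc
    have haux : q * (m/q + 1) = q * (m/q) + q := by ring
    have h1 : m + 1 = q * (m/q + 1) := by omega
    constructor
    · rw [h1, Nat.mul_div_cancel_left _ hq]
    · rw [h1, Nat.mul_mod_right]
  · intro hc
    have hlt' : m % q + 1 < q := by omega
    have h1 : m + 1 = (m % q + 1) + q * (m/q) := by omega
    constructor
    · rw [h1, Nat.add_mul_div_left _ _ hq, Nat.div_eq_of_lt hlt', zero_add]
    · rw [h1, Nat.add_mul_mod_self_left, Nat.mod_eq_of_lt hlt']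

end NatAux

open Finset in
/-- Global ℝ^q version of Theorem 2.6 (H-Moser), by Moser's homotopy method: if the positive
densities `h₀, h₁` differ by the divergence of a compactly supported smooth vector field `X`,
then there is a smooth isotopy of diffeomorphisms `Φ_t` with `Φ₀ = id` such that `Φ₁` pulls
back the volume form `h₁·dx` to `h₀·dx`, i.e. `h₁(Φ₁ x)·det(DΦ₁(x)) = h₀(x)`. -/
theorem moser_isotopy
    (q : ℕ) (hq : 1 ≤ q)
    (h₀ h₁ : (Fin q → ℝ) → ℝ)
    (h₀smooth : ContDiff ℝ (⊤ : ℕ∞) h₀) (h₁smooth : ContDiff ℝ (⊤ : ℕ∞) h₁)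
    (h₀pos : ∀ x, 0 < h₀ x) (h₁pos : ∀ x, 0 < h₁ x)
    (X : (Fin q → ℝ) → (Fin q → ℝ))
    (hX : ContDiff ℝ (⊤ : ℕ∞) X) (hXc : HasCompactSupport X)
    (hdiv : ∀ x : Fin q → ℝ,
      h₀ x - h₁ x = ∑ i, fderiv ℝ (fun y => X y i) x (Pi.single i 1)) :
    ∃ Φ : ℝ → (Fin q → ℝ) → (Fin q → ℝ),
      ContDiff ℝ (⊤ : ℕ∞) (fun p : ℝ × (Fin q → ℝ) => Φ p.1 p.2) ∧
      Φ 0 = id ∧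
      (∀ t ∈ Set.Icc (0:ℝ) 1, Function.Bijective (Φ t) ∧
        ContDiff ℝ (⊤ : ℕ∞) (Function.invFun (Φ t))) ∧
      ∀ x : Fin q → ℝ,
        h₁ (Φ 1 x) * LinearMap.det ((fderiv ℝ (Φ 1) x).toLinearMap) = h₀ x := by
  classical
  have hq0 : 0 < q := hq
  -- the divergence summands
  set D : Fin q → (Fin q → ℝ) → ℝ :=
    fun j x => fderiv ℝ (fun y => X y j) x (Pi.single j 1) with hD_def
  have hXj : ∀ j, ContDiff ℝ (⊤ : ℕ∞) (fun y => X y j) := fun j =>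
    (contDiff_apply ℝ ℝ j).comp hX
  have hDc : ∀ j, ContDiff ℝ (⊤ : ℕ∞) (D j) := fun j =>
    ((contDiff_infty_iff_fderiv.mp (hXj j)).2).clm_apply contDiff_const
  -- the radius
  obtain ⟨R, hR0, hRsub⟩ : ∃ R, 0 < R ∧ tsupport X ⊆ Metric.ball 0 R :=
    (hXc.isBounded).subset_ball_lt 0 0
  have hXout : ∀ x, x ∉ Metric.ball (0 : Fin q → ℝ) R → X x = 0 := fun x hx =>
    image_eq_zero_of_notMem_tsupport (fun h => hx (hRsub h))
  have hDts : ∀ j x, x ∉ tsupport X → D j x = 0 := by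
    intro j x hx
    have hxmem : x ∈ (tsupport X)ᶜ := hx
    have hev : (fun y => X y j) =ᶠ[nhds x] (fun _ => (0:ℝ)) := by
      filter_upwards [(isClosed_tsupport X).isOpen_compl.mem_nhds hxmem] with y hy
      rw [image_eq_zero_of_notMem_tsupport hy]
      rfl
    rw [hD_def]
    simp only
    rw [hev.fderiv_eq]
    simp
  have hnormball : ∀ x : Fin q → ℝ, R ≤ ‖x‖ → x ∉ Metric.ball (0 : Fin q → ℝ) R := by
    intro x hx hmem
    rw [mem_ball_zero_iff] at hmem
    linarith
  -- bounds for D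
  have hDbd : ∀ j, ∃ C, 0 ≤ C ∧ ∀ x, |D j x| ≤ C := by
    intro j
    have hsupp : HasCompactSupport (D j) :=
      HasCompactSupport.intro (hXc.isCompact) (fun x hx => hDts j x hx)
    obtain ⟨C, hC⟩ := hsupp.exists_bound_of_continuous (hDc j).continuous
    exact ⟨max C 0, le_max_right _ _, fun x => le_trans (by simpa using hC x) (le_max_left _ _)⟩
  choose C hC0 hCb using hDbd
  set Cst : ℝ := ∑ j, C j with hCst_def
  have hCst0 : 0 ≤ Cst := Finset.sum_nonneg (fun j _ => hC0 j)
  -- the minimum of the densities on the closed ball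
  obtain ⟨x₀, hx₀K, hx₀min⟩ := (isCompact_closedBall (0 : Fin q → ℝ) R).exists_isMinOn
    ⟨0, by simp [hR0.le]⟩ ((h₀smooth.continuous.min h₁smooth.continuous)).continuousOn
  set δ : ℝ := min (h₀ x₀) (h₁ x₀) with hδ_def
  have hδ0 : 0 < δ := lt_min (h₀pos _) (h₁pos _)
  have hδle : ∀ x ∈ Metric.closedBall (0 : Fin q → ℝ) R, δ ≤ min (h₀ x) (h₁ x) :=
    fun x hx => hx₀min hx
  -- the number of steps per block
  set N : ℕ := ⌈Cst / δ⌉₊ + 1 with hN_def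
  have hN0 : 0 < N := Nat.succ_pos _
  have hNR : (0:ℝ) < (N:ℝ) := by exact_mod_cast hN0
  have hCN : Cst < (N:ℝ) * δ := by
    have h1 : Cst / δ < (N:ℝ) := by
      have := Nat.lt_succ_floor (Cst / δ)
      calc Cst / δ < (⌊Cst / δ⌋₊ : ℝ) + 1 := by
            exact_mod_cast this
        _ ≤ (N:ℝ) := by
            rw [hN_def]
            push_cast
            have : (⌊Cst / δ⌋₊ : ℝ) ≤ (⌈Cst / δ⌉₊ : ℝ) := by
              exact_mod_cast Nat.floor_le_ceil _
            linarith
    calc Cst = (Cst / δ) * δ := by field_simp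
      _ < (N:ℝ) * δ := by exact mul_lt_mul_of_pos_right h1 hδ0
  -- the densities
  set T : ℕ → (Fin q → ℝ) → ℝ :=
    fun r x => ∑ j ∈ Finset.univ.filter (fun j : Fin q => (j:ℕ) < r), D j x with hT_def
  set gd : ℕ → ((Fin q → ℝ) × ℝ) → ℝ := fun m z =>
    h₀ z.1 + Real.smoothTransition z.2 * (((m / q : ℕ) : ℝ) / (N:ℝ)) * (h₁ z.1 - h₀ z.1)
      - Real.smoothTransition z.2 / (N:ℝ) * T (m % q) z.1 with hgd_def
  have hTc : ∀ r, ContDiff ℝ (⊤ : ℕ∞) (T r) := by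
    intro r
    rw [hT_def]
    exact ContDiff.sum (fun j _ => hDc j)
  have hgdc : ∀ m, ContDiff ℝ (⊤ : ℕ∞) (gd m) := by
    intro m
    rw [hgd_def]
    refine ContDiff.sub (ContDiff.add (h₀smooth.comp contDiff_fst) ?_) ?_
    · exact ((Real.smoothTransition.contDiff.comp contDiff_snd).mul contDiff_const).mul
        ((h₁smooth.comp contDiff_fst).sub (h₀smooth.comp contDiff_fst))
    · exact ((Real.smoothTransition.contDiff.comp contDiff_snd).div_const _).mul
        ((hTc _).comp contDiff_fst)
  have hTbd : ∀ r x, |T r x| ≤ Cst := by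
    intro r x
    rw [hT_def, hCst_def]
    calc |∑ j ∈ Finset.univ.filter (fun j : Fin q => (j:ℕ) < r), D j x|
        ≤ ∑ j ∈ Finset.univ.filter (fun j : Fin q => (j:ℕ) < r), |D j x| :=
          Finset.abs_sum_le_sum_abs _ _
      _ ≤ ∑ j ∈ Finset.univ.filter (fun j : Fin q => (j:ℕ) < r), C j :=
          Finset.sum_le_sum (fun j _ => hCb j x)
      _ ≤ ∑ j, C j := Finset.sum_le_sum_of_subset_of_nonneg (Finset.filter_subset _ _)
          (fun j _ _ => hC0 j)
  have hTout : ∀ r x, x ∉ Metric.ball (0 : Fin q → ℝ) R → T r x = 0 := by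
    intro r x hx
    rw [hT_def]
    exact Finset.sum_eq_zero (fun j _ => hDts j x (fun h => hx (hRsub h)))
  -- positivity
  have hgdpos : ∀ m, m ≤ N * q → ∀ z, 0 < gd m z := by
    intro m hm z
    obtain ⟨x, t⟩ := z
    have hσ0 : 0 ≤ Real.smoothTransition t := Real.smoothTransition.nonneg t
    have hσ1 : Real.smoothTransition t ≤ 1 := Real.smoothTransition.le_one t
    have hk : ((m / q : ℕ) : ℝ) ≤ (N:ℝ) := by
      have : m / q ≤ N := by
        calc m / q ≤ (N * q) / q := Nat.div_le_div_right hm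
          _ = N := Nat.mul_div_cancel N hq0
      exact_mod_cast this
    have hk0 : (0:ℝ) ≤ ((m / q : ℕ) : ℝ) := by positivity
    have hθ0 : 0 ≤ Real.smoothTransition t * (((m / q : ℕ) : ℝ) / (N:ℝ)) := by positivity
    have hθ1 : Real.smoothTransition t * (((m / q : ℕ) : ℝ) / (N:ℝ)) ≤ 1 := by
      apply mul_le_one₀ hσ1 (by positivity)
      rw [div_le_one hNR]
      exact hk
    have hmin : 0 < min (h₀ x) (h₁ x) := lt_min (h₀pos x) (h₁pos x)
    have hconv : min (h₀ x) (h₁ x)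
        ≤ h₀ x + Real.smoothTransition t * (((m / q : ℕ) : ℝ) / (N:ℝ)) * (h₁ x - h₀ x) := by
      rcases le_total (h₀ x) (h₁ x) with h | h
      · have hm1 := min_eq_left h
        nlinarith
      · have hm1 := min_eq_right h
        nlinarith
    rw [hgd_def]
    simp only
    by_cases hxR : x ∈ Metric.ball (0 : Fin q → ℝ) R
    · -- inside the ball, use δ
      have hδx : δ ≤ min (h₀ x) (h₁ x) := hδle x (Metric.ball_subset_closedBall hxR)
      have hTb : |T (m % q) x| ≤ Cst := hTbd _ _
      have habs : |Real.smoothTransition t / (N:ℝ) * T (m % q) x| ≤ Cst / N := by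
        rw [abs_mul]
        have h1 : |Real.smoothTransition t / (N:ℝ)| ≤ 1 / N := by
          rw [abs_of_nonneg (by positivity)]
          gcongr
        calc |Real.smoothTransition t / (N:ℝ)| * |T (m % q) x|
            ≤ (1 / N) * Cst := by
              apply mul_le_mul h1 hTb (abs_nonneg _) (by positivity)
          _ = Cst / N := by ring
      have hCN' : Cst / N < δ := by
        rw [div_lt_iff₀ hNR, mul_comm]
        exact hCN
      have h2 := abs_le.mp habs
      linarith [h2.1, h2.2, hδx, hconv, hCN']
    · -- outside, T vanishes
      rw [hTout _ x hxR, mul_zero, sub_zero]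
      linarith [hconv, hmin]
  -- the step identity
  have hfins : ∀ (r : ℕ) (hr : r < q) (x : Fin q → ℝ),
      T (r + 1) x = T r x + D ⟨r, hr⟩ x := by
    intro r hr x
    rw [hT_def]
    simp only
    have hset : Finset.univ.filter (fun j : Fin q => (j:ℕ) < r + 1)
        = insert (⟨r, hr⟩ : Fin q) (Finset.univ.filter (fun j : Fin q => (j:ℕ) < r)) := by
      ext j
      simp only [Finset.mem_filter, Finset.mem_univ, true_and, Finset.mem_insert, Fin.ext_iff]
      omega
    rw [hset, Finset.sum_insert (by simp)]
    ring
  have hTfull : ∀ x, T q x = h₀ x - h₁ x := by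
    intro x
    rw [hT_def]
    simp only
    rw [Finset.filter_true_of_mem (fun j _ => j.isLt)]
    exact (hdiv x).symm
  have hT0 : ∀ x, T 0 x = 0 := by
    intro x
    rw [hT_def]
    simp
  have hdiff : ∀ m (z : (Fin q → ℝ) × ℝ),
      gd m z - gd (m+1) z
        = Real.smoothTransition z.2 / (N:ℝ) * D ⟨m % q, Nat.mod_lt m hq0⟩ z.1 := by
    intro m z
    obtain ⟨x, t⟩ := z
    have hr : m % q < q := Nat.mod_lt m hq0
    by_cases hc : m % q + 1 = q
    · obtain ⟨hdiv1, hmod1⟩ := (nat_succ_div_mod hq0).1 hc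
      rw [hgd_def]
      simp only
      rw [hdiv1, hmod1, hT0]
      have hTm := hfins (m % q) hr x
      rw [hc] at hTm
      rw [hTfull] at hTm
      have hcast : ((m / q + 1 : ℕ) : ℝ) = ((m / q : ℕ) : ℝ) + 1 := by push_cast; ring
      linear_combination (Real.smoothTransition t / (N:ℝ)) * hTm
        - (Real.smoothTransition t * (h₁ x - h₀ x) / (N:ℝ)) * hcast
    · obtain ⟨hdiv1, hmod1⟩ := (nat_succ_div_mod hq0).2 hc
      rw [hgd_def]
      simp only
      rw [hdiv1, hmod1, hfins _ hr]
      ring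
  -- clamped densities and the step functions
  set gdc : ℕ → ((Fin q → ℝ) × ℝ) → ℝ := fun m => gd (min m (N * q)) with hgdc_def
  have hgdcc : ∀ m, ContDiff ℝ (⊤ : ℕ∞) (gdc m) := fun m => hgdc _
  have hgdcpos : ∀ m z, 0 < gdc m z := fun m z => hgdpos _ (min_le_right _ _) z
  set idx : ℕ → Fin q := fun m => ⟨m % q, Nat.mod_lt m hq0⟩ with hidx_def
  set u' : ℕ → ((Fin q → ℝ) × ℝ) → ℝ := fun m z =>
    if m < N * q then Real.smoothTransition z.2 / (N:ℝ) * X z.1 (idx m) else 0 with hu'_def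
  have hu'c : ∀ m, ContDiff ℝ (⊤ : ℕ∞) (u' m) := by
    intro m
    rw [hu'_def]
    by_cases h : m < N * q
    · simp only [if_pos h]
      exact ((Real.smoothTransition.contDiff.comp contDiff_snd).div_const _).mul
        ((contDiff_apply ℝ ℝ (idx m)).comp (hX.comp contDiff_fst))
    · simp only [if_neg h]
      exact contDiff_const
  have hline : ∀ (x : Fin q → ℝ) (i : Fin q) (r : ℝ),
      HasDerivAt (fun s : ℝ => Function.update x i s) (Pi.single i (1:ℝ)) r := by
    intro x i r
    have heq : (fun s : ℝ => Function.update x i s)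
        = fun s => x + (s - x i) • (Pi.single i 1 : Fin q → ℝ) := by
      funext s
      exact update_eq_affine _ _ _
    rw [heq]
    have h1 : HasDerivAt (fun s : ℝ => s - x i) 1 r := (hasDerivAt_id r).sub_const (x i)
    have h2 := (h1.smul_const (Pi.single i (1:ℝ) : Fin q → ℝ))
    have h3 := (hasDerivAt_const r x).add h2
    exact h3.congr_deriv (by simp)
  have hXdir : ∀ (i : Fin q) (x : Fin q → ℝ) (r : ℝ),
      HasDerivAt (fun s => X (Function.update x i s) i) (D i (Function.update x i r)) r := by
    intro i x r
    have h1 : HasFDerivAt (fun y => X y i) (fderiv ℝ (fun y => X y i) (Function.update x i r))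
        (Function.update x i r) :=
      ((hXj i).differentiable (by simp) _).hasFDerivAt
    have h2 := h1.comp_hasDerivAt r (hline x i r)
    rw [hD_def]
    exact h2
  have hstep : ∀ m (x : Fin q → ℝ) (t r : ℝ),
      HasDerivAt (fun s => u' m (Function.update x (idx m) s, t))
        (gdc m (Function.update x (idx m) r, t)
          - gdc (m+1) (Function.update x (idx m) r, t)) r := by
    intro m x t r
    by_cases h : m < N * q
    · have hmin1 : min m (N * q) = m := min_eq_left h.le
      have hmin2 : min (m+1) (N * q) = m + 1 := min_eq_left h
      have key : gdc m (Function.update x (idx m) r, t)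
          - gdc (m+1) (Function.update x (idx m) r, t)
          = Real.smoothTransition t / (N:ℝ) * D (idx m) (Function.update x (idx m) r) := by
        rw [hgdc_def]
        simp only [hmin1, hmin2]
        exact hdiff m (Function.update x (idx m) r, t)
      rw [key]
      have h2 := (hXdir (idx m) x r).const_mul (Real.smoothTransition t / (N:ℝ))
      have heq : (fun s => u' m (Function.update x (idx m) s, t))
          = fun s => Real.smoothTransition t / (N:ℝ) * X (Function.update x (idx m) s) (idx m) := by
        funext s
        rw [hu'_def]
        simp only [if_pos h]
      rw [heq]
      exact h2
    · have hmin1 : min m (N * q) = N * q := min_eq_right (le_of_not_gt h)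
      have hmin2 : min (m+1) (N * q) = N * q := min_eq_right (by omega)
      have key : gdc m (Function.update x (idx m) r, t)
          - gdc (m+1) (Function.update x (idx m) r, t) = 0 := by
        rw [hgdc_def]
        simp only [hmin1, hmin2]
        ring
      rw [key]
      have heq : (fun s => u' m (Function.update x (idx m) s, t)) = fun _ => (0:ℝ) := by
        funext s
        rw [hu'_def]
        simp only [if_neg h]
      rw [heq]
      exact hasDerivAt_const r 0
  have hsupp' : ∀ m (x : Fin q → ℝ) (t : ℝ), R ≤ |x (idx m)| → u' m (x, t) = 0 := by
    intro m x t hx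
    rw [hu'_def]
    by_cases h : m < N * q
    · simp only [if_pos h]
      have hn : R ≤ ‖x‖ := by
        calc R ≤ |x (idx m)| := hx
          _ = ‖x (idx m)‖ := (Real.norm_eq_abs _).symm
          _ ≤ ‖x‖ := norm_le_pi_norm x (idx m)
      rw [hXout x (hnormball x hn)]
      simp
    · simp only [if_neg h]
  -- the elementary diffeomorphisms
  have hE : ∀ m : ℕ, ∃ e e' : ((Fin q → ℝ) × ℝ) → (Fin q → ℝ),
      ContDiff ℝ (⊤ : ℕ∞) e ∧ ContDiff ℝ (⊤ : ℕ∞) e' ∧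
      (∀ x t, e' (e (x, t), t) = x) ∧ (∀ x t, e (e' (x, t), t) = x) ∧
      (∀ x t, (∀ x', u' m (x', t) = 0) → e (x, t) = x) ∧
      (∀ x t, gdc (m+1) (e (x, t), t) *
        LinearMap.det ((fderiv ℝ (fun y => e (y, t)) x).toLinearMap) = gdc m (x, t)) :=
    fun m => elementary (idx m) (gdc m) (gdc (m+1)) (u' m) R (hgdcc m) (hgdcc (m+1))
      (hu'c m) (hgdcpos m) (hgdcpos (m+1)) (hstep m) (hsupp' m)
  choose em em' hec he'c hli hri hid hdet using hE
  -- the composed maps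
  obtain ⟨Φc, hΦc0, hΦcS⟩ : ∃ f : ℕ → ((Fin q → ℝ) × ℝ) → (Fin q → ℝ),
      (∀ z, f 0 z = z.1) ∧ (∀ m z, f (m+1) z = em m (f m z, z.2)) :=
    ⟨fun m => Nat.rec (fun z => z.1) (fun m ih z => em m (ih z, z.2)) m,
      fun z => rfl, fun m z => rfl⟩
  obtain ⟨Φc', hΦc'0, hΦc'S⟩ : ∃ f : ℕ → ((Fin q → ℝ) × ℝ) → (Fin q → ℝ),
      (∀ z, f 0 z = z.1) ∧ (∀ m z, f (m+1) z = f m (em' m (z.1, z.2), z.2)) :=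
    ⟨fun m => Nat.rec (fun z => z.1) (fun m ih z => ih (em' m (z.1, z.2), z.2)) m,
      fun z => rfl, fun m z => rfl⟩
  have hΦsm : ∀ m, ContDiff ℝ (⊤ : ℕ∞) (Φc m) := by
    intro m
    induction m with
    | zero =>
      have : Φc 0 = fun z => z.1 := funext hΦc0
      rw [this]; exact contDiff_fst
    | succ m ih =>
      have : Φc (m+1) = fun z => em m (Φc m z, z.2) := funext (hΦcS m)
      rw [this]
      exact (hec m).comp (ih.prodMk contDiff_snd)
  have hΦ'sm : ∀ m, ContDiff ℝ (⊤ : ℕ∞) (Φc' m) := by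
    intro m
    induction m with
    | zero =>
      have : Φc' 0 = fun z => z.1 := funext hΦc'0
      rw [this]; exact contDiff_fst
    | succ m ih =>
      have : Φc' (m+1) = fun z => Φc' m (em' m (z.1, z.2), z.2) := funext (hΦc'S m)
      rw [this]
      exact ih.comp (((he'c m).comp (contDiff_fst.prodMk contDiff_snd)).prodMk contDiff_snd)
  have hleft : ∀ m (x : Fin q → ℝ) (t : ℝ), Φc' m (Φc m (x, t), t) = x := by
    intro m
    induction m with
    | zero => intro x t; rw [hΦc'0, hΦc0]
    | succ m ih =>
      intro x t
      rw [hΦcS, hΦc'S]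
      simp only
      rw [hli m (Φc m (x, t)) t]
      exact ih x t
  have hright : ∀ m (x : Fin q → ℝ) (t : ℝ), Φc m (Φc' m (x, t), t) = x := by
    intro m
    induction m with
    | zero => intro x t; rw [hΦc0, hΦc'0]
    | succ m ih =>
      intro x t
      rw [hΦcS, hΦc'S]
      simp only
      rw [ih (em' m (x, t)) t]
      exact hri m x t
  have hzero : ∀ m (x : Fin q → ℝ), Φc m (x, 0) = x := by
    intro m
    induction m with
    | zero => intro x; rw [hΦc0]
    | succ m ih =>
      intro x
      rw [hΦcS]
      simp only
      rw [ih x]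
      apply hid m x 0
      intro x'
      rw [hu'_def]
      have : Real.smoothTransition (0:ℝ) = 0 :=
        Real.smoothTransition.zero_of_nonpos le_rfl
      by_cases h : m < N * q <;> simp [h, this]
  have hdiffble : ∀ m (t : ℝ), Differentiable ℝ (fun y => Φc m (y, t)) := by
    intro m t
    exact ((hΦsm m).comp (contDiff_id.prodMk contDiff_const)).differentiable
      (by simp)
  have hpull : ∀ m (x : Fin q → ℝ) (t : ℝ),
      gdc m (Φc m (x, t), t) *
        LinearMap.det ((fderiv ℝ (fun y => Φc m (y, t)) x).toLinearMap)
        = gdc 0 (x, t) := by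
    intro m
    induction m with
    | zero =>
      intro x t
      have heq : (fun y => Φc 0 (y, t)) = fun y => y := by
        funext y; rw [hΦc0]
      rw [hΦc0, heq]
      rw [fderiv_id']
      simp
    | succ m ih =>
      intro x t
      have heq : (fun y => Φc (m+1) (y, t))
          = (fun w => em m (w, t)) ∘ (fun y => Φc m (y, t)) := by
        funext y; rw [hΦcS]; rfl
      have hEd : Differentiable ℝ (fun w => em m (w, t)) :=
        ((hec m).comp (contDiff_id.prodMk contDiff_const)).differentiable
          (by simp)
      have hfdcomp : fderiv ℝ (fun y => Φc (m+1) (y, t)) x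
          = (fderiv ℝ (fun w => em m (w, t)) (Φc m (x, t))).comp
              (fderiv ℝ (fun y => Φc m (y, t)) x) := by
        rw [heq]
        exact fderiv_comp x (hEd _) ((hdiffble m t) x)
      rw [hΦcS]
      simp only
      rw [hfdcomp]
      rw [ContinuousLinearMap.toLinearMap_comp, LinearMap.det_comp]
      rw [← mul_assoc]
      rw [hdet m (Φc m (x, t)) t]
      exact ih x t
  -- endpoint values of the densities
  have hgdc0 : ∀ z : (Fin q → ℝ) × ℝ, gdc 0 z = h₀ z.1 := by
    intro z
    have h00 : gdc 0 z = gd 0 z := by rw [hgdc_def]; simp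
    rw [h00, hgd_def]
    simp only [Nat.zero_div, Nat.zero_mod, Nat.cast_zero]
    rw [hT0]
    ring
  have hgdcN : ∀ y : Fin q → ℝ, gdc (N * q) (y, 1) = h₁ y := by
    intro y
    have hNN : gdc (N * q) (y, 1) = gd (N * q) (y, 1) := by rw [hgdc_def]; simp
    rw [hNN, hgd_def]
    simp only
    rw [Nat.mul_div_cancel N hq0, Nat.mul_mod_left, hT0]
    rw [Real.smoothTransition.one_of_one_le le_rfl]
    field_simp
    ring
  -- assemble
  refine ⟨fun t x => Φc (N * q) (x, t), ?_, ?_, ?_, ?_⟩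
  · exact (hΦsm (N * q)).comp (contDiff_snd.prodMk contDiff_fst)
  · funext x
    exact hzero (N * q) x
  · intro t _
    constructor
    · rw [Function.bijective_iff_has_inverse]
      exact ⟨fun y => Φc' (N * q) (y, t), fun x => hleft _ x t, fun y => hright _ y t⟩
    · have hinj : Function.Injective (fun x => Φc (N * q) (x, t)) := by
        intro a b hab
        have := congrArg (fun w => Φc' (N * q) (w, t)) hab
        simpa [hleft _ _ t] using this
      have hinv : Function.invFun (fun x => Φc (N * q) (x, t))
          = fun y => Φc' (N * q) (y, t) := by
        funext y
        apply hinj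
        have h1 : (fun x => Φc (N * q) (x, t))
            (Function.invFun (fun x => Φc (N * q) (x, t)) y) = y :=
          Function.invFun_eq (f := fun x => Φc (N * q) (x, t))
            ⟨Φc' (N * q) (y, t), hright _ y t⟩
        simp only at h1 ⊢
        rw [h1, hright _ y t]
      rw [hinv]
      exact (hΦ'sm (N * q)).comp (contDiff_id.prodMk contDiff_const)
  · intro x
    have := hpull (N * q) x 1
    rw [hgdcN, hgdc0] at this
    exact this
end

section
/- Let K be a field of characteristic zero and let f = (f₁,…,f_p) be a p-tuple of polynomials in K[x₁,…,x_n] which is quasihomogeneous for weights w ∈ ℤ^n and weighted degrees δ ∈ ℤ^p, i.e. Σ_{i=1}^n w_i·x_i·∂f_j/∂x_i = δ_j·f_j for all j, where δ_j ≥ 0 for all j and Σ_{j=1}^p δ_j > 0. Let T ⊆ K[x₁,…,x_n]^p be the set of all p-tuples of the form ( Σ_{i=1}^n a_i·∂f_j/∂x_i + b_j(f₁,…,f_p) )_{j=1,…,p}, where a₁,…,a_n ∈ K[x₁,…,x_n] have zero constant term and b = (b₁,…,b_p) ∈ K[y₁,…,y_p]^p has all components with zero constant term and satisfies Σ_{j=1}^p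 ∂b_j/∂y_j = 0 (a divergence-free polynomial vector field vanishing at 0). Then for every p-tuple c = (c₁,…,c_p) ∈ K[y₁,…,y_p]^p of polynomials with zero constant term, the tuple ( c_j(f₁,…,f_p) )_{j=1,…,p} belongs to T. -/
open MvPolynomial Finset in
private lemma X_mul_pderiv_monomial' {K : Type*} [Field K] [CharZero K] {p : ℕ}
    (j : Fin p) (m : Fin p →₀ ℕ) (c : K) :
    X j * pderiv j (monomial m c) = (m j : MvPolynomial (Fin p) K) * monomial m c := by
  rw [pderiv_monomial]
  by_cases h : m j = 0
  · simp [h]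
  · have hm : Finsupp.single j 1 + (m - Finsupp.single j 1) = m := by
      ext k
      by_cases hk : k = j
      · subst hk; simp; omega
      · simp [Finsupp.single_apply, Ne.symm hk]
    rw [X, monomial_mul, one_mul, hm, ← C_eq_coe_nat, C_mul_monomial]
    ring_nf

open MvPolynomial Finset in
private lemma euler_op_surjective' {K : Type*} [Field K] [CharZero K] {p : ℕ}
    (δ : Fin p → ℤ) (hδ : ∀ j, 0 ≤ δ j) (hS : 0 < ∑ j, δ j)
    (r : MvPolynomial (Fin p) K) :
    ∃ q : MvPolynomial (Fin p) K,
      ((∑ j, δ j : ℤ) : MvPolynomial (Fin p) K) * q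
        + ∑ j, (δ j : MvPolynomial (Fin p) K) * (X j * pderiv j q) = r := by
  set D : (Fin p →₀ ℕ) → ℤ := fun m => (∑ j, δ j) + ∑ j, δ j * m j with hDdef
  have hDpos : ∀ m, 0 < D m := by
    intro m
    have : 0 ≤ ∑ j, δ j * m j :=
      Finset.sum_nonneg fun j _ => mul_nonneg (hδ j) (by positivity)
    simp only [hDdef]; omega
  have hD : ∀ m, ((D m : K)) ≠ 0 := fun m => by
    exact_mod_cast (hDpos m).ne'
  refine ⟨∑ m ∈ r.support, monomial m ((D m : K)⁻¹ * coeff m r), ?_⟩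
  rw [Finset.mul_sum]
  have h2 : ∀ j : Fin p,
      (δ j : MvPolynomial (Fin p) K) *
        (X j * pderiv j (∑ m ∈ r.support, monomial m ((D m : K)⁻¹ * coeff m r)))
      = ∑ m ∈ r.support,
          (δ j : MvPolynomial (Fin p) K) *
            ((m j : MvPolynomial (Fin p) K) * monomial m ((D m : K)⁻¹ * coeff m r)) := by
    intro j
    rw [map_sum, Finset.mul_sum, Finset.mul_sum]
    exact Finset.sum_congr rfl fun m _ => by rw [X_mul_pderiv_monomial']
  simp only [h2]
  rw [Finset.sum_comm, ← Finset.sum_add_distrib]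
  have h3 : ∀ m ∈ r.support,
      ((∑ j, δ j : ℤ) : MvPolynomial (Fin p) K) * monomial m ((D m : K)⁻¹ * coeff m r)
        + ∑ j, (δ j : MvPolynomial (Fin p) K) *
            ((m j : MvPolynomial (Fin p) K) * monomial m ((D m : K)⁻¹ * coeff m r))
      = monomial m (coeff m r) := by
    intro m _
    have : ((∑ j, δ j : ℤ) : MvPolynomial (Fin p) K) * monomial m ((D m : K)⁻¹ * coeff m r)
        + ∑ j, (δ j : MvPolynomial (Fin p) K) *
            ((m j : MvPolynomial (Fin p) K) * monomial m ((D m : K)⁻¹ * coeff m r))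
        = ((D m : ℤ) : MvPolynomial (Fin p) K) * monomial m ((D m : K)⁻¹ * coeff m r) := by
      rw [hDdef]
      push_cast
      rw [add_mul]
      congr 1
      rw [Finset.sum_mul]
      exact Finset.sum_congr rfl fun j _ => by ring
    rw [this]
    have hc : ((D m : ℤ) : MvPolynomial (Fin p) K) = C ((D m : K)) := by
      simp
    rw [hc, C_mul_monomial, ← mul_assoc, mul_inv_cancel₀ (hD m), one_mul]
  rw [Finset.sum_congr rfl h3, support_sum_monomial_coeff]

open MvPolynomial Finset in
/-- Proposition 3.4 (inf-wqh), case `G = 𝒜_{Ω_p}`, polynomial setting: if `f` is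
quasihomogeneous with all weighted degrees `δ_j ≥ 0` and `∑ δ_j > 0`, then every element
`wf(c) = (c_j(f))_j` of `L𝓛·f` (with `c` vanishing at `0`) lies in `L𝒜_{Ω_p}·f`, i.e. is of
the form `tf(a) + wf(b)` with `a` vanishing at `0` and `b` divergence-free vanishing at `0`. -/
theorem wqh_AOmegap_tangent_space
    (K : Type*) [Field K] [CharZero K] (n p : ℕ)
    (f : Fin p → MvPolynomial (Fin n) K)
    (w : Fin n → ℤ) (δ : Fin p → ℤ)
    (hqh : ∀ j, ∑ i, w i • (X i * pderiv i (f j)) = δ j • f j)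
    (hδ : ∀ j, 0 ≤ δ j) (hδpos : 0 < ∑ j, δ j) :
    ∀ c : Fin p → MvPolynomial (Fin p) K, (∀ j, constantCoeff (c j) = 0) →
      ∃ (a : Fin n → MvPolynomial (Fin n) K) (b : Fin p → MvPolynomial (Fin p) K),
        (∀ i, constantCoeff (a i) = 0) ∧
        (∀ j, constantCoeff (b j) = 0) ∧
        (∑ j, pderiv j (b j) = 0) ∧
        ∀ j, aeval f (c j) =
          (∑ i, a i * pderiv i (f j)) + aeval f (b j) := by
  intro c hc
  simp only [zsmul_eq_mul] at hqh
  obtain ⟨q, hq⟩ := euler_op_surjective' δ hδ hδpos (∑ j, pderiv j (c j))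
  refine ⟨fun i => (w i : MvPolynomial (Fin n) K) * (X i * aeval f q),
          fun j => c j - (δ j : MvPolynomial (Fin p) K) * (X j * q), ?_, ?_, ?_, ?_⟩
  · intro i; simp
  · intro j; simp [hc j]
  · -- divergence
    have hXq : ∀ j : Fin p, pderiv j (X j * q) = q + X j * pderiv j q := by
      intro j; rw [pderiv_mul, pderiv_X_self, one_mul]
    have hC : ∀ j : Fin p, (δ j : MvPolynomial (Fin p) K) = C ((δ j : K)) := by
      intro j; simp
    have key : ∀ j : Fin p, pderiv j (c j - (δ j : MvPolynomial (Fin p) K) * (X j * q))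
        = pderiv j (c j) - ((δ j : MvPolynomial (Fin p) K) * q
            + (δ j : MvPolynomial (Fin p) K) * (X j * pderiv j q)) := by
      intro j
      rw [hC j]; rw [map_sub, pderiv_C_mul, hXq j, mul_add]
    rw [Finset.sum_congr rfl fun j _ => key j, Finset.sum_sub_distrib,
        Finset.sum_add_distrib, sub_eq_zero]
    rw [← hq]
    congr 1
    rw [← Finset.sum_mul]
    push_cast
    rfl
  · intro j
    have h1 : ∑ i, (w i : MvPolynomial (Fin n) K) * (X i * aeval f q) * pderiv i (f j)
        = aeval f q * ((δ j : MvPolynomial (Fin n) K) * f j) := by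
      rw [← hqh j, Finset.mul_sum]
      exact Finset.sum_congr rfl fun i _ => by ring
    have h2 : aeval f (c j - (δ j : MvPolynomial (Fin p) K) * (X j * q))
        = aeval f (c j) - (δ j : MvPolynomial (Fin n) K) * (f j * aeval f q) := by
      rw [map_sub, map_mul, map_mul, aeval_X, map_intCast]
    rw [h1, h2]
    ring
end

section
/- Let K be a field of characteristic zero and let f = (f₁,…,f_p) be a p-tuple of polynomials in K[x₁,…,x_n] which is quasihomogeneous for weights w ∈ ℤ^n and weighted degrees δ ∈ ℤ^p with Σ_{j=1}^p δ_j ≠ 0, i.e. Σ_{i=1}^n w_i·x_i·∂f_j/∂x_i = δ_j·f_j for all j. Let T ⊆ K[x₁,…,x_n]^p be the set of all p-tuples of the form ( Σ_{i=1}^n a_i·∂f_j/∂x_i + Σ_{l=1}^p B_{jl}·f_l )_{j=1,…,p}, where a₁,…,a_n ∈ K[x₁,…,x_n] have zero constant term and B is a p×p matrix over K[x₁,…,x_n] with trace zero (Σ_{j=1}^p B_{jj} = 0). Then B'·f := ( Σ_{l=1}^p B'_{jl}·f_l )_{j=1,…,p} belongs to T for every p×p matrix B' over K[x₁,…,x_n].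 -/
open MvPolynomial Finset in
/-- Proposition 3.4 (inf-wqh), case `G = 𝒦_{Ω_p}`, polynomial setting: if `f` is
quasihomogeneous with `∑ δ_j ≠ 0`, then every element `B'·f` of `L𝒞·f` lies in
`L𝒦_{Ω_p}·f`, i.e. is of the form `tf(a) + B·f` with `a` vanishing at `0` and `B` a
trace-zero matrix over `K[x]`. -/
theorem wqh_KOmegap_tangent_space
    (K : Type*) [Field K] [CharZero K] (n p : ℕ)
    (f : Fin p → MvPolynomial (Fin n) K)
    (w : Fin n → ℤ) (δ : Fin p → ℤ)
    (hqh : ∀ j, ∑ i, w i • (X i * pderiv i (f j)) = δ j • f j)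
    (hδ : ∑ j, δ j ≠ 0) :
    ∀ B' : Fin p → Fin p → MvPolynomial (Fin n) K,
      ∃ (a : Fin n → MvPolynomial (Fin n) K)
        (B : Fin p → Fin p → MvPolynomial (Fin n) K),
        (∀ i, constantCoeff (a i) = 0) ∧
        (∑ j, B j j = 0) ∧
        ∀ j, ∑ l, B' j l * f l =
          (∑ i, a i * pderiv i (f j)) + ∑ l, B j l * f l := by
  intro B'
  set cK : K := ((∑ j, δ j : ℤ) : K) with hcK
  have hc : cK ≠ 0 := by
    simpa [hcK] using (Int.cast_ne_zero (α := K)).mpr hδ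
  set t : MvPolynomial (Fin n) K := ∑ j, B' j j with ht
  have hqh' : ∀ j, ∑ i, C ((w i : K)) * (X i * pderiv i (f j))
      = C ((δ j : K)) * f j := by
    intro j
    have h := hqh j
    simpa [zsmul_eq_mul, map_intCast] using h
  refine ⟨fun i => C cK⁻¹ * C ((w i : K)) * X i * t,
    fun j l => B' j l - if j = l then C (cK⁻¹ * ((δ j : K))) * t else 0, ?_, ?_, ?_⟩
  · intro i; simp
  · have hsum : ∑ j, C (cK⁻¹ * ((δ j : K))) * t = t := by
      rw [← Finset.sum_mul, ← map_sum]
      have h1 : ∑ j, cK⁻¹ * ((δ j : K)) = 1 := by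
        rw [← Finset.mul_sum]
        have h2 : (∑ j, ((δ j : K))) = cK := by rw [hcK]; push_cast; ring
        rw [h2, inv_mul_cancel₀ hc]
      rw [h1, map_one, one_mul]
    have h3 : ∑ j, (B' j j - if j = j then C (cK⁻¹ * ((δ j : K))) * t else 0)
        = t - ∑ j, C (cK⁻¹ * ((δ j : K))) * t := by
      simp [Finset.sum_sub_distrib, ht]
    rw [h3, hsum, sub_self]
  · intro j
    have hA : ∑ i, (C cK⁻¹ * C ((w i : K)) * X i * t) * pderiv i (f j)
        = C cK⁻¹ * t * (C ((δ j : K)) * f j) := by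
      rw [← hqh' j, Finset.mul_sum]
      exact Finset.sum_congr rfl fun i _ => by ring
    have hB : ∑ l, (B' j l - if j = l then C (cK⁻¹ * ((δ j : K))) * t else 0) * f l
        = (∑ l, B' j l * f l) - C (cK⁻¹ * ((δ j : K))) * t * f j := by
      simp [sub_mul, Finset.sum_sub_distrib, ite_mul, zero_mul]
    rw [hA, hB, map_mul]
    ring
end
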